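/- arXiv:2004.03825 — 10 statements merged into one kernel-verified Lean document; each statement's English description precedes it below -/
import Mathlib

section
/- Suppose g(ζ,ζ̄) = (ζ - ζ̄)h(ζ,ζ̄) can be written as g(ζ,ζ̄) = p(ζ)q(ζ̄) + p(ζ̄)r(ζ) with p, q, r real polynomials and p not identically zero. Then r = -q, and consequently h(ζ,ζ̄) = (p(ζ)q(ζ̄) - p(ζ̄)q(ζ))/(ζ - ζ̄), i.e. h is the Bézoutian of p and q. -/
open Polynomial BigOperators

/-- If `(ζ-ζ̄)h(ζ,ζ̄) = p(ζ)q(ζ̄) + p(ζ̄)r(ζ)` with `p, q, r` real polynomials and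
`p ≠ 0`, then `r = -q` and `h` is the Bézoutian of `p` and `q`:
`(ζ-ζ̄)h(ζ,ζ̄) = p(ζ)q(ζ̄) - p(ζ̄)q(ζ)`. -/
theorem bezoutian_from_decomposition (p q r : Polynomial ℝ) (hp : p ≠ 0)
    (h : ℝ → ℝ → ℝ)
    (hg : ∀ x y : ℝ, (x - y) * h x y = p.eval x * q.eval y + p.eval y * r.eval x) :
    r = -q ∧
      ∀ x y : ℝ, (x - y) * h x y = p.eval x * q.eval y - p.eval y * q.eval x := by
  have key : p * (q + r) = 0 := by
    apply Polynomial.funext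
    intro x
    have := hg x x
    simp only [sub_self, zero_mul] at this
    simp only [eval_mul, eval_add, eval_zero]
    nlinarith [this]
  have hr : r = -q := by
    rcases mul_eq_zero.mp key with h1 | h1
    · exact absurd h1 hp
    · exact eq_neg_of_add_eq_zero_right h1
  exact ⟨hr, fun x y => by rw [hg x y, hr]; simp; ring⟩
end

section
/- Let p(ζ) = ∏_{j=1}^m (ζ - λⱼ) be a monic strictly hyperbolic polynomial (all λⱼ real and distinct) and let q be a real polynomial of degree m-1 with positive leading coefficient whose roots μ₁,...,μ_{m-1} strictly interlace the roots of p: λ₁ < μ₁ < λ₂ < ⋯ < μ_{m-1} < λ_m. Then there exists c > 0 such that the Bézoutian form satisfies ĥ_{p,q}(z,z̄) ≥ c Σ_{k=1}^m |p̂ₖ(z)|² for all z ∈ ℂ^m, where pₖ(ζ) = ∏_{j≠k}(ζ - λⱼ). -/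
open Polynomial BigOperators Finset

lemma bz_pos_aux (m : ℕ) (lam : Fin (m+1) → ℝ) (hlam : StrictMono lam) (mu : Fin m → ℝ)
    (hint : ∀ k : Fin m, lam k.castSucc < mu k ∧ mu k < lam k.succ) (k : Fin (m+1)) :
    0 < (∏ j : Fin m, (lam k - mu j)) * ∏ j ∈ Finset.univ.erase k, (lam k - lam j) := by
  set e : Fin m → Fin (m+1) := fun j => if (j:ℕ) < (k:ℕ) then j.castSucc else j.succ with he
  have hval : ∀ j, ((e j : Fin (m+1)) : ℕ) = if (j:ℕ) < (k:ℕ) then (j:ℕ) else (j:ℕ)+1 := by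
    intro j; simp only [he]; split <;> simp
  have hprod : ∏ j ∈ Finset.univ.erase k, (lam k - lam j)
      = ∏ j : Fin m, (lam k - lam (e j)) := by
    refine (Finset.prod_bij (fun j _ => e j) ?_ ?_ ?_ ?_).symm
    · intro j _
      simp only [Finset.mem_erase, Finset.mem_univ, and_true]
      intro hek
      have := hval j; rw [hek] at this
      split at this <;> omega
    · intro j1 _ j2 _ hx
      have hx' : e j1 = e j2 := hx
      have hv := congrArg Fin.val hx'
      rw [hval, hval] at hv
      apply Fin.ext
      split at hv <;> split at hv <;> omega
    · intro b hb
      simp only [Finset.mem_erase, Finset.mem_univ, and_true] at hb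
      have hbk : (b : ℕ) ≠ (k : ℕ) := fun hh => hb (Fin.ext hh)
      by_cases hlt : (b:ℕ) < (k:ℕ)
      · refine ⟨⟨b, by omega⟩, Finset.mem_univ _, ?_⟩
        refine Fin.ext ?_; rw [hval]; simp only [Fin.val_mk]; split <;> omega
      · refine ⟨⟨(b:ℕ)-1, by omega⟩, Finset.mem_univ _, ?_⟩
        refine Fin.ext ?_; rw [hval]; simp only [Fin.val_mk]; split <;> omega
    · intros; rfl
  rw [hprod, ← Finset.prod_mul_distrib]
  apply Finset.prod_pos
  intro j _
  have hj1 := (hint j).1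
  have hj2 := (hint j).2
  by_cases hlt : (j:ℕ) < (k:ℕ)
  · have hej : e j = j.castSucc := if_pos hlt
    have h1 : lam j.succ ≤ lam k := by
      apply hlam.monotone; rw [Fin.le_def]; simpa using hlt
    have h2 : lam j.castSucc < lam k := by
      apply hlam; rw [Fin.lt_def]; simpa using hlt
    rw [hej]; nlinarith
  · have hej : e j = j.succ := if_neg hlt
    have h1 : lam k ≤ lam j.castSucc := by
      apply hlam.monotone; rw [Fin.le_def]; simp; omega
    have h2 : lam k < lam j.succ := by
      apply hlam; rw [Fin.lt_def]; simp; omega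
    rw [hej]; nlinarith

lemma bz_lagrange (m : ℕ) (lam : Fin (m+1) → ℝ) (hlam : StrictMono lam)
    (q : ℝ[X]) (hqdeg : q.natDegree ≤ m) :
    q = ∑ k : Fin (m+1), C (q.eval (lam k) / ∏ j ∈ Finset.univ.erase k, (lam k - lam j))
          * ∏ j ∈ Finset.univ.erase k, (X - C (lam j)) := by
  set pk : Fin (m+1) → ℝ[X] := fun k => ∏ j ∈ Finset.univ.erase k, (X - C (lam j)) with hpk
  set d : Fin (m+1) → ℝ := fun k => ∏ j ∈ Finset.univ.erase k, (lam k - lam j) with hd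
  have hdne : ∀ k, d k ≠ 0 := by
    intro k
    apply Finset.prod_ne_zero_iff.mpr
    intro j hj
    rw [Finset.mem_erase] at hj
    exact sub_ne_zero.mpr (fun hkj => hj.1 (hlam.injective hkj.symm))
  have hpkeval : ∀ k x, (pk k).eval x = ∏ j ∈ Finset.univ.erase k, (x - lam j) := by
    intro k x; simp [hpk, eval_prod]
  have hpkzero : ∀ k j, j ≠ k → (pk k).eval (lam j) = 0 := by
    intro k j hjk
    rw [hpkeval]
    apply Finset.prod_eq_zero (i := j) (by simp [hjk]) (by ring)
  have hpkd : ∀ k, (pk k).eval (lam k) = d k := fun k => hpkeval k (lam k)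
  have hpkdeg : ∀ k, (pk k).natDegree = m := by
    intro k
    rw [hpk]
    rw [Polynomial.natDegree_prod _ _ (fun j _ => X_sub_C_ne_zero (lam j))]
    simp [Finset.card_erase_of_mem]
  set r : ℝ[X] := q - ∑ k, C (q.eval (lam k) / d k) * pk k with hr
  have hrdeg : r.natDegree ≤ m := by
    refine le_trans (natDegree_sub_le _ _) (max_le hqdeg ?_)
    refine Polynomial.natDegree_sum_le_of_forall_le _ _ (fun k _ => ?_)
    refine le_trans (natDegree_mul_le) ?_
    simp [hpkdeg k]
  have hreval : ∀ i, r.eval (lam i) = 0 := by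
    intro i
    rw [hr]
    simp only [eval_sub, eval_finset_sum, eval_mul, eval_C]
    rw [Finset.sum_eq_single i]
    · rw [hpkd, div_mul_cancel₀ _ (hdne i)]; ring
    · intro b _ hbi; rw [hpkzero b i (Ne.symm hbi)]; ring
    · simp
  have : r = 0 := by
    apply Polynomial.eq_zero_of_natDegree_lt_card_of_eval_eq_zero r hlam.injective hreval
    simp only [Fintype.card_fin]
    omega
  have := sub_eq_zero.mp this
  exact this

lemma bz_coeff_single (n : ℕ) (c : Fin n → ℝ) (i : Fin n) :
    (∑ i' : Fin n, C (c i') * X ^ ((i' : ℕ))).coeff (i : ℕ) = c i := by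
  rw [Polynomial.finset_sum_coeff]
  rw [Finset.sum_eq_single i]
  · simp
  · intro b _ hbi
    simp only [coeff_C_mul, coeff_X_pow]
    rw [if_neg (fun hh => hbi (Fin.ext (by omega)))]
    ring
  · simp

lemma bz_coeff (m : ℕ) (h : Fin (m+1) → Fin (m+1) → ℝ) (a : Fin (m+1) → ℝ)
    (P : Fin (m+1) → ℝ[X])
    (hST : ∀ x y : ℝ, x ≠ y →
      ∑ i : Fin (m+1), ∑ j : Fin (m+1), h i j * x ^ (i:ℕ) * y ^ (j:ℕ)
        = ∑ k : Fin (m+1), a k * (P k).eval x * (P k).eval y)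
    (i j : Fin (m+1)) :
    h i j = ∑ k : Fin (m+1), a k * (P k).coeff i * (P k).coeff j := by
  -- Step A: for all x, ∑ i, h i j * x^i = ∑ k, a k * (P k).eval x * (P k).coeff j
  have stepA : ∀ x : ℝ, ∀ j : Fin (m+1),
      ∑ i : Fin (m+1), h i j * x ^ (i:ℕ)
        = ∑ k : Fin (m+1), a k * (P k).eval x * (P k).coeff j := by
    intro x j
    have hAB : (∑ j' : Fin (m+1), C (∑ i : Fin (m+1), h i j' * x ^ (i:ℕ)) * X ^ ((j':ℕ)))
        = ∑ k : Fin (m+1), C (a k * (P k).eval x) * P k := by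
      apply Polynomial.eq_of_infinite_eval_eq
      apply Set.Infinite.mono (s := {x}ᶜ)
      · intro y hy
        have hxy : x ≠ y := fun hh => hy (by simp [hh])
        simp only [Set.mem_setOf_eq, eval_finset_sum, eval_mul, eval_C, eval_pow, eval_X]
        calc ∑ j' : Fin (m+1), (∑ i : Fin (m+1), h i j' * x ^ (i:ℕ)) * y ^ ((j':ℕ))
            = ∑ j' : Fin (m+1), ∑ i : Fin (m+1), h i j' * x ^ (i:ℕ) * y ^ ((j':ℕ)) := by
              refine Finset.sum_congr rfl (fun j' _ => ?_); rw [Finset.sum_mul]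
          _ = ∑ i : Fin (m+1), ∑ j' : Fin (m+1), h i j' * x ^ (i:ℕ) * y ^ ((j':ℕ)) :=
              Finset.sum_comm
          _ = ∑ k : Fin (m+1), a k * (P k).eval x * (P k).eval y := hST x y hxy
      · exact Set.Finite.infinite_compl (Set.finite_singleton x)
    have := congrArg (fun r : ℝ[X] => r.coeff (j:ℕ)) hAB
    rw [bz_coeff_single] at this
    rw [this, Polynomial.finset_sum_coeff]
    exact Finset.sum_congr rfl (fun k _ => by rw [coeff_C_mul])
  -- Step B
  have hAB : (∑ i' : Fin (m+1), C (h i' j) * X ^ ((i':ℕ)))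
      = ∑ k : Fin (m+1), C (a k * (P k).coeff j) * P k := by
    apply Polynomial.funext
    intro x
    simp only [eval_finset_sum, eval_mul, eval_C, eval_pow, eval_X]
    calc ∑ i' : Fin (m+1), h i' j * x ^ ((i':ℕ))
        = ∑ k : Fin (m+1), a k * (P k).eval x * (P k).coeff j := stepA x j
      _ = ∑ k : Fin (m+1), a k * (P k).coeff j * (P k).eval x := by
          refine Finset.sum_congr rfl (fun k _ => by ring)
  have := congrArg (fun r : ℝ[X] => r.coeff (i:ℕ)) hAB
  rw [bz_coeff_single] at this
  rw [this, Polynomial.finset_sum_coeff]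
  exact Finset.sum_congr rfl (fun k _ => by rw [coeff_C_mul]; ring)

/-- Bézoutian of a strictly hyperbolic `p` (degree `m+1`) and a separating `q`
dominates the sum `Σ |p̂ₖ(z)|²`. -/
theorem bezout_form_lower_bound_strict (m : ℕ) (lam : Fin (m + 1) → ℝ)
    (hlam : StrictMono lam) (mu : Fin m → ℝ) (c : ℝ) (hc : 0 < c)
    (hint : ∀ k : Fin m, lam k.castSucc < mu k ∧ mu k < lam k.succ)
    (p q : Polynomial ℝ)
    (hp : p = ∏ j, (X - C (lam j)))
    (hq : q = C c * ∏ j, (X - C (mu j)))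
    (h : Fin (m + 1) → Fin (m + 1) → ℝ)
    (hh : ∀ x y : ℝ,
      (x - y) * ∑ i : Fin (m + 1), ∑ j : Fin (m + 1), h i j * x ^ (i : ℕ) * y ^ (j : ℕ)
        = p.eval x * q.eval y - p.eval y * q.eval x) :
    ∃ c' > 0, ∀ z : Fin (m + 1) → ℂ,
      c' * ∑ k : Fin (m + 1),
          ‖∑ i : Fin (m + 1),
              (((∏ j ∈ Finset.univ.erase k, (X - C (lam j))).coeff i : ℝ) : ℂ) * z i‖ ^ 2
        ≤ (∑ i : Fin (m + 1), ∑ j : Fin (m + 1),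
            (h i j : ℂ) * z i * (starRingEnd ℂ) (z j)).re := by
  classical
  set pk : Fin (m+1) → ℝ[X] := fun k => ∏ j ∈ Finset.univ.erase k, (X - C (lam j)) with hpk
  set a : Fin (m+1) → ℝ :=
    fun k => q.eval (lam k) / ∏ j ∈ Finset.univ.erase k, (lam k - lam j) with ha
  -- positivity of a
  have hapos : ∀ k, 0 < a k := by
    intro k
    have hpos := bz_pos_aux m lam hlam mu hint k
    have hqe : q.eval (lam k) = c * ∏ j : Fin m, (lam k - mu j) := by
      rw [hq]; simp [eval_prod]
    have hmul : 0 < q.eval (lam k) * ∏ j ∈ Finset.univ.erase k, (lam k - lam j) := by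
      rw [hqe, mul_assoc]
      exact mul_pos hc hpos
    rcases mul_pos_iff.mp hmul with ⟨h1, h2⟩ | ⟨h1, h2⟩
    · exact div_pos h1 h2
    · exact div_pos_of_neg_of_neg h1 h2
  -- Lagrange
  have hqdeg : q.natDegree ≤ m := by
    rw [hq]
    refine le_trans natDegree_mul_le ?_
    rw [natDegree_C, Polynomial.natDegree_prod _ _ (fun j _ => X_sub_C_ne_zero (mu j))]
    simp
  have hql : q = ∑ k, C (a k) * pk k := bz_lagrange m lam hlam q hqdeg
  -- evaluation identities
  have hpeval : ∀ (k : Fin (m+1)) (x : ℝ), p.eval x = (x - lam k) * (pk k).eval x := by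
    intro k x
    rw [hp, ← Finset.mul_prod_erase _ _ (Finset.mem_univ k), eval_mul]
    simp [hpk]
  have hqeval : ∀ y, q.eval y = ∑ k, a k * (pk k).eval y := by
    intro y
    conv_lhs => rw [hql]
    simp [eval_finset_sum]
  have hST : ∀ x y : ℝ, x ≠ y →
      ∑ i : Fin (m+1), ∑ j : Fin (m+1), h i j * x ^ (i:ℕ) * y ^ (j:ℕ)
        = ∑ k : Fin (m+1), a k * (pk k).eval x * (pk k).eval y := by
    intro x y hxy
    have hrhs : p.eval x * q.eval y - p.eval y * q.eval x
        = (x - y) * ∑ k, a k * (pk k).eval x * (pk k).eval y := by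
      rw [hqeval y, hqeval x, Finset.mul_sum, Finset.mul_sum, ← Finset.sum_sub_distrib,
        Finset.mul_sum]
      refine Finset.sum_congr rfl (fun k _ => ?_)
      rw [hpeval k x, hpeval k y]; ring
    have H := (hh x y).trans hrhs
    exact mul_left_cancel₀ (sub_ne_zero.mpr hxy) H
  have hcoeff := bz_coeff m h a pk hST
  -- choose c'
  have hne : (Finset.univ : Finset (Fin (m+1))).Nonempty := Finset.univ_nonempty
  refine ⟨Finset.univ.inf' hne a, ?_, ?_⟩
  · rw [gt_iff_lt, Finset.lt_inf'_iff]
    exact fun k _ => hapos k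
  intro z
  set w : Fin (m+1) → ℂ := fun k => ∑ i : Fin (m+1), (((pk k).coeff (i:ℕ) : ℝ) : ℂ) * z i with hw
  have hgoal : ∀ k : Fin (m+1),
      (∑ i : Fin (m+1), (((∏ j ∈ Finset.univ.erase k, (X - C (lam j))).coeff i : ℝ) : ℂ) * z i)
        = w k := fun k => rfl
  have hconjw : ∀ k, (starRingEnd ℂ) (w k)
      = ∑ j : Fin (m+1), (((pk k).coeff (j:ℕ) : ℝ) : ℂ) * (starRingEnd ℂ) (z j) := by
    intro k
    rw [hw, map_sum]
    refine Finset.sum_congr rfl (fun j _ => ?_)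
    rw [map_mul, Complex.conj_ofReal]
  have key : (∑ i : Fin (m+1), ∑ j : Fin (m+1), (h i j : ℂ) * z i * (starRingEnd ℂ) (z j))
      = ∑ k, ((a k : ℝ) : ℂ) * (w k * (starRingEnd ℂ) (w k)) := by
    calc (∑ i : Fin (m+1), ∑ j : Fin (m+1), (h i j : ℂ) * z i * (starRingEnd ℂ) (z j))
        = ∑ i : Fin (m+1), ∑ j : Fin (m+1), ∑ k : Fin (m+1),
            ((a k : ℝ):ℂ) * (((pk k).coeff i : ℝ):ℂ) * (((pk k).coeff j : ℝ):ℂ)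
              * z i * (starRingEnd ℂ) (z j) := by
          refine Finset.sum_congr rfl fun i _ => Finset.sum_congr rfl fun j _ => ?_
          rw [hcoeff i j]
          push_cast
          rw [Finset.sum_mul, Finset.sum_mul]
      _ = ∑ k : Fin (m+1), ∑ i : Fin (m+1), ∑ j : Fin (m+1),
            ((a k : ℝ):ℂ) * (((pk k).coeff i : ℝ):ℂ) * (((pk k).coeff j : ℝ):ℂ)
              * z i * (starRingEnd ℂ) (z j) := by
          rw [show (∑ i : Fin (m+1), ∑ j : Fin (m+1), ∑ k : Fin (m+1),
            ((a k : ℝ):ℂ) * (((pk k).coeff (i:ℕ) : ℝ):ℂ) * (((pk k).coeff (j:ℕ) : ℝ):ℂ)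
              * z i * (starRingEnd ℂ) (z j))
            = ∑ i : Fin (m+1), ∑ k : Fin (m+1), ∑ j : Fin (m+1),
            ((a k : ℝ):ℂ) * (((pk k).coeff (i:ℕ) : ℝ):ℂ) * (((pk k).coeff (j:ℕ) : ℝ):ℂ)
              * z i * (starRingEnd ℂ) (z j)
            from Finset.sum_congr rfl fun i _ => Finset.sum_comm]
          exact Finset.sum_comm
      _ = ∑ k, ((a k : ℝ) : ℂ) * (w k * (starRingEnd ℂ) (w k)) := by
          refine Finset.sum_congr rfl fun k _ => ?_
          rw [hconjw, hw]
          simp only [Finset.mul_sum, Finset.sum_mul]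
          rw [Finset.sum_comm]
          refine Finset.sum_congr rfl fun i _ => Finset.sum_congr rfl fun j _ => ?_
          ring
  rw [key]
  have hre : (∑ k, ((a k : ℝ) : ℂ) * (w k * (starRingEnd ℂ) (w k))).re
      = ∑ k, a k * ‖w k‖ ^ 2 := by
    rw [Complex.re_sum]
    refine Finset.sum_congr rfl fun k _ => ?_
    rw [Complex.mul_conj, ← Complex.ofReal_mul, Complex.ofReal_re, Complex.normSq_eq_norm_sq]
  rw [hre, Finset.mul_sum]
  simp only [hgoal]
  refine Finset.sum_le_sum fun k _ => ?_
  exact mul_le_mul_of_nonneg_right (Finset.inf'_le _ (Finset.mem_univ k)) (sq_nonneg _)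
end

section
/- Let p be a monic strictly hyperbolic polynomial of degree m and let q be a real polynomial of degree at most m-1. If there exists c > 0 with ĥ_{p,q}(z,z̄) ≥ c Σ_{k=1}^m |p̂ₖ(z)|² for all z ∈ ℂ^m, then q is hyperbolic of degree m-1 with positive leading coefficient, and its roots strictly interlace those of p. -/
open Polynomial BigOperators

/-- Converse for strictly hyperbolic `p` (degree `m+1`): if the Bézoutian form of `p`
and `q` (with `deg q ≤ m`) dominates `c Σ |p̂ₖ(z)|²`, then `q` is hyperbolic of degree
`m` with positive leading coefficient and its roots strictly interlace those of `p`. -/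
theorem bezout_form_lower_bound_implies_interlacing (m : ℕ) (lam : Fin (m + 1) → ℝ)
    (hlam : StrictMono lam)
    (p q : Polynomial ℝ)
    (hp : p = ∏ j, (X - C (lam j)))
    (hqdeg : q.natDegree ≤ m)
    (h : Fin (m + 1) → Fin (m + 1) → ℝ)
    (hh : ∀ x y : ℝ,
      (x - y) * ∑ i : Fin (m + 1), ∑ j : Fin (m + 1), h i j * x ^ (i : ℕ) * y ^ (j : ℕ)
        = p.eval x * q.eval y - p.eval y * q.eval x)
    (c : ℝ) (hc : 0 < c)
    (hineq : ∀ z : Fin (m + 1) → ℂ,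
      c * ∑ k : Fin (m + 1),
          ‖∑ i : Fin (m + 1),
              (((∏ j ∈ Finset.univ.erase k, (X - C (lam j))).coeff i : ℝ) : ℂ) * z i‖ ^ 2
        ≤ (∑ i : Fin (m + 1), ∑ j : Fin (m + 1),
            (h i j : ℂ) * z i * (starRingEnd ℂ) (z j)).re) :
    ∃ c' : ℝ, 0 < c' ∧ ∃ mu : Fin m → ℝ,
      q = C c' * ∏ j, (X - C (mu j)) ∧
      ∀ k : Fin m, lam k.castSucc < mu k ∧ mu k < lam k.succ := by
  classical
  -- basic facts about the cofactor polynomials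
  have hsplit : ∀ k : Fin (m + 1),
      p = (X - C (lam k)) * ∏ j ∈ Finset.univ.erase k, (X - C (lam j)) := by
    intro k
    rw [hp, ← Finset.mul_prod_erase _ _ (Finset.mem_univ k)]
  have hpeval : ∀ k : Fin (m + 1), p.eval (lam k) = 0 := by
    intro k; rw [hsplit k]; simp
  have hAval : ∀ k : Fin (m + 1),
      (∏ j ∈ Finset.univ.erase k, (X - C (lam j))).eval (lam k)
        = ∏ j ∈ Finset.univ.erase k, (lam k - lam j) := by
    intro k; simp [eval_prod]
  have hAne : ∀ k : Fin (m + 1),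
      (∏ j ∈ Finset.univ.erase k, (X - C (lam j))).eval (lam k) ≠ 0 := by
    intro k
    rw [hAval]
    refine Finset.prod_ne_zero_iff.mpr ?_
    intro j hj
    have hjk : j ≠ k := Finset.ne_of_mem_erase hj
    exact sub_ne_zero_of_ne fun e => hjk (hlam.injective e.symm)
  have hdeg : ∀ k : Fin (m + 1),
      (∏ j ∈ Finset.univ.erase k, (X - C (lam j))).natDegree ≤ m := by
    intro k
    calc (∏ j ∈ Finset.univ.erase k, (X - C (lam j))).natDegree
        ≤ ∑ j ∈ Finset.univ.erase k, (X - C (lam j)).natDegree := natDegree_prod_le _ _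
      _ = ∑ j ∈ Finset.univ.erase k, 1 := by simp [natDegree_X_sub_C]
      _ ≤ m := by simp [Finset.card_erase_of_mem]
  -- Step 1: the diagonal value of the Bezout form
  have hS : ∀ k : Fin (m + 1),
      (∑ i : Fin (m + 1), ∑ j : Fin (m + 1), h i j * (lam k) ^ (i : ℕ) * (lam k) ^ (j : ℕ))
        = (∏ j ∈ Finset.univ.erase k, (X - C (lam j))).eval (lam k) * q.eval (lam k) := by
    intro k
    set a := lam k with ha
    set Sp : Polynomial ℝ :=
      ∑ i : Fin (m + 1), C (∑ j : Fin (m + 1), h i j * a ^ (j : ℕ)) * X ^ (i : ℕ) with hSp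
    have hSpev : ∀ x : ℝ, Sp.eval x
        = ∑ i : Fin (m + 1), ∑ j : Fin (m + 1), h i j * x ^ (i : ℕ) * a ^ (j : ℕ) := by
      intro x
      rw [hSp, eval_finset_sum]
      refine Finset.sum_congr rfl fun i _ => ?_
      rw [eval_mul, eval_C, eval_pow, eval_X, Finset.sum_mul]
      exact Finset.sum_congr rfl fun j _ => by ring
    have hpoly : (X - C a) * Sp
        = (X - C a) * ((∏ j ∈ Finset.univ.erase k, (X - C (lam j))) * C (q.eval a)) := by
      apply Polynomial.funext
      intro x
      have hx := hh x a
      rw [hpeval k] at hx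
      have hpx : p.eval x
          = (x - a) * (∏ j ∈ Finset.univ.erase k, (X - C (lam j))).eval x := by
        rw [hsplit k]; simp [ha]
      rw [eval_mul, eval_mul, hSpev x]
      simp only [eval_sub, eval_X, eval_C, eval_mul]
      rw [hx, hpx]
      ring
    have hxne : (X - C a : Polynomial ℝ) ≠ 0 := X_sub_C_ne_zero a
    have hSpeq : Sp = (∏ j ∈ Finset.univ.erase k, (X - C (lam j))) * C (q.eval a) :=
      mul_left_cancel₀ hxne hpoly
    have hfin := hSpev a
    rw [hSpeq, eval_mul, eval_C] at hfin
    exact hfin.symm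
  -- Step 2: the key positivity at each root of p
  have hinner : ∀ k j : Fin (m + 1),
      (∑ i : Fin (m + 1),
          (((∏ l ∈ Finset.univ.erase j, (X - C (lam l))).coeff i : ℝ) : ℂ)
            * ((lam k : ℂ)) ^ (i : ℕ))
        = (((∏ l ∈ Finset.univ.erase j, (X - C (lam l))).eval (lam k) : ℝ) : ℂ) := by
    intro k j
    rw [Polynomial.eval_eq_sum_range' (Nat.lt_succ_of_le (hdeg j)) (lam k)]
    push_cast
    exact Fin.sum_univ_eq_sum_range
      (fun i => (((∏ l ∈ Finset.univ.erase j, (X - C (lam l))).coeff i : ℝ) : ℂ)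
        * ((lam k : ℂ)) ^ i) (m + 1)
  have key : ∀ k : Fin (m + 1),
      0 < (∏ j ∈ Finset.univ.erase k, (X - C (lam j))).eval (lam k) * q.eval (lam k) := by
    intro k
    have hz := hineq (fun i => ((lam k : ℂ)) ^ (i : ℕ))
    have hrhs : (∑ i : Fin (m + 1), ∑ j : Fin (m + 1),
        (h i j : ℂ) * ((lam k : ℂ)) ^ (i : ℕ) * (starRingEnd ℂ) (((lam k : ℂ)) ^ (j : ℕ))).re
        = ∑ i : Fin (m + 1), ∑ j : Fin (m + 1),
            h i j * (lam k) ^ (i : ℕ) * (lam k) ^ (j : ℕ) := by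
      rw [Complex.re_sum]
      refine Finset.sum_congr rfl fun i _ => ?_
      rw [Complex.re_sum]
      refine Finset.sum_congr rfl fun j _ => ?_
      have he : (h i j : ℂ) * ((lam k : ℂ)) ^ (i : ℕ) * (starRingEnd ℂ) (((lam k : ℂ)) ^ (j : ℕ))
          = ((h i j * (lam k) ^ (i : ℕ) * (lam k) ^ (j : ℕ) : ℝ) : ℂ) := by
        rw [← Complex.ofReal_pow, ← Complex.ofReal_pow, Complex.conj_ofReal]
        push_cast
        ring
      rw [he, Complex.ofReal_re]
    rw [hrhs, hS k] at hz
    have hnorm : ∀ j : Fin (m + 1),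
        ‖∑ i : Fin (m + 1),
            (((∏ l ∈ Finset.univ.erase j, (X - C (lam l))).coeff i : ℝ) : ℂ)
              * ((lam k : ℂ)) ^ (i : ℕ)‖ ^ 2
          = ((∏ l ∈ Finset.univ.erase j, (X - C (lam l))).eval (lam k)) ^ 2 := by
      intro j
      rw [hinner k j, Complex.norm_real, Real.norm_eq_abs, sq_abs]
    rw [Finset.sum_congr rfl (fun j _ => hnorm j)] at hz
    have hone : ((∏ l ∈ Finset.univ.erase k, (X - C (lam l))).eval (lam k)) ^ 2
        ≤ ∑ j : Fin (m + 1), ((∏ l ∈ Finset.univ.erase j, (X - C (lam l))).eval (lam k)) ^ 2 :=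
      Finset.single_le_sum
        (f := fun j => ((∏ l ∈ Finset.univ.erase j, (X - C (lam l))).eval (lam k)) ^ 2)
        (fun j _ => sq_nonneg _) (Finset.mem_univ k)
    have hA2 : 0 < ((∏ l ∈ Finset.univ.erase k, (X - C (lam l))).eval (lam k)) ^ 2 :=
      lt_of_le_of_ne (sq_nonneg _) (Ne.symm (pow_ne_zero _ (hAne k)))
    exact lt_of_lt_of_le (mul_pos hc hA2)
      (le_trans (mul_le_mul_of_nonneg_left hone hc.le) hz)
  -- Step 3: sign of the cofactor values
  have hsign : ∀ k : Fin (m + 1),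
      0 < (-1 : ℝ) ^ (m - (k : ℕ))
        * (∏ j ∈ Finset.univ.erase k, (X - C (lam j))).eval (lam k) := by
    intro k
    rw [hAval]
    have hset : Finset.univ.erase k = Finset.Iio k ∪ Finset.Ioi k := by
      ext j
      simp only [Finset.mem_erase, Finset.mem_univ, and_true, Finset.mem_union,
        Finset.mem_Iio, Finset.mem_Ioi]
      exact ⟨fun hne => hne.lt_or_gt, fun hl => hl.elim ne_of_lt ne_of_gt⟩
    have hdisj : Disjoint (Finset.Iio k) (Finset.Ioi k) := by
      refine Finset.disjoint_left.mpr fun j hj hj' => ?_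
      exact absurd (Finset.mem_Ioi.mp hj') (not_lt.mpr (le_of_lt (Finset.mem_Iio.mp hj)))
    rw [hset, Finset.prod_union hdisj]
    have hP1 : 0 < ∏ j ∈ Finset.Iio k, (lam k - lam j) :=
      Finset.prod_pos fun j hj => sub_pos.mpr (hlam (Finset.mem_Iio.mp hj))
    have hcard : (Finset.Ioi k).card = m - (k : ℕ) := by
      rw [Fin.card_Ioi]
      omega
    have hP2 : (-1 : ℝ) ^ (m - (k : ℕ)) * ∏ j ∈ Finset.Ioi k, (lam k - lam j)
        = ∏ j ∈ Finset.Ioi k, (lam j - lam k) := by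
      rw [← hcard]
      calc ((-1 : ℝ)) ^ (Finset.Ioi k).card * ∏ j ∈ Finset.Ioi k, (lam k - lam j)
          = ∏ j ∈ Finset.Ioi k, ((-1) * (lam k - lam j)) := by
            rw [Finset.prod_mul_distrib, Finset.prod_const]
        _ = ∏ j ∈ Finset.Ioi k, (lam j - lam k) :=
            Finset.prod_congr rfl fun j _ => by ring
    have hP2pos : 0 < ∏ j ∈ Finset.Ioi k, (lam j - lam k) :=
      Finset.prod_pos fun j hj => sub_pos.mpr (hlam (Finset.mem_Ioi.mp hj))
    calc (0 : ℝ) < (∏ j ∈ Finset.Iio k, (lam k - lam j))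
          * ((-1 : ℝ) ^ (m - (k : ℕ)) * ∏ j ∈ Finset.Ioi k, (lam k - lam j)) := by
            rw [hP2]; exact mul_pos hP1 hP2pos
      _ = (-1 : ℝ) ^ (m - (k : ℕ))
          * ((∏ j ∈ Finset.Iio k, (lam k - lam j)) * ∏ j ∈ Finset.Ioi k, (lam k - lam j)) := by
            ring
  -- Step 3b: sign of q at the roots of p
  have hsq : ∀ k : Fin (m + 1), 0 < (-1 : ℝ) ^ (m - (k : ℕ)) * q.eval (lam k) := by
    intro k
    have hA2 : 0 < ((∏ l ∈ Finset.univ.erase k, (X - C (lam l))).eval (lam k)) ^ 2 :=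
      lt_of_le_of_ne (sq_nonneg _) (Ne.symm (pow_ne_zero _ (hAne k)))
    nlinarith [mul_pos (hsign k) (key k), hA2]
  -- Step 4: q changes sign on consecutive roots of p
  have hopp : ∀ k : Fin m, q.eval (lam k.castSucc) * q.eval (lam k.succ) < 0 := by
    intro k
    have h1 := hsq k.castSucc
    have h2 := hsq k.succ
    have hk := k.isLt
    simp only [Fin.coe_castSucc] at h1
    simp only [Fin.val_succ] at h2
    obtain ⟨b, hb⟩ : ∃ b, m - (k : ℕ) = b + 1 := ⟨m - (k : ℕ) - 1, by omega⟩
    have hb2 : m - ((k : ℕ) + 1) = b := by omega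
    rw [hb] at h1
    rw [hb2] at h2
    have hmul := mul_pos h1 h2
    have hpow : (-1 : ℝ) ^ (b + 1) * (-1 : ℝ) ^ b = -1 := by
      rw [← pow_add]
      exact Odd.neg_one_pow ⟨b, by ring⟩
    nlinarith [hmul, hpow]
  -- Step 5: intermediate value theorem gives the interlacing roots
  have hroot : ∀ k : Fin m,
      ∃ x ∈ Set.Ioo (lam k.castSucc) (lam k.succ), q.eval x = 0 := by
    intro k
    have hab : lam k.castSucc < lam k.succ := hlam (Fin.castSucc_lt_succ : k.castSucc < k.succ)
    have hcont : ContinuousOn (fun x => q.eval x) (Set.Icc (lam k.castSucc) (lam k.succ)) :=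
      (Polynomial.continuous q).continuousOn
    rcases lt_trichotomy (q.eval (lam k.castSucc)) 0 with h1 | h1 | h1
    · have h2 : 0 < q.eval (lam k.succ) := by
        by_contra hcon
        push_neg at hcon
        nlinarith [hopp k, mul_nonneg (neg_nonneg.2 h1.le) (neg_nonneg.2 hcon)]
      obtain ⟨x, hx, hx0⟩ := intermediate_value_Ioo hab.le hcont ⟨h1, h2⟩
      exact ⟨x, hx, hx0⟩
    · exfalso
      have := hopp k
      rw [h1, zero_mul] at this
      exact lt_irrefl 0 this
    · have h2 : q.eval (lam k.succ) < 0 := by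
        by_contra hcon
        push_neg at hcon
        nlinarith [hopp k, mul_nonneg h1.le hcon]
      obtain ⟨x, hx, hx0⟩ := intermediate_value_Ioo' hab.le hcont ⟨h2, h1⟩
      exact ⟨x, hx, hx0⟩
  choose mu hmu1 hmu2 using hroot
  -- the chosen roots are strictly monotone
  have hmono : StrictMono mu := by
    intro k k' hkk'
    have h1 : mu k < lam k.succ := (hmu1 k).2
    have h2 : lam k'.castSucc < mu k' := (hmu1 k').1
    have hle : (k.succ : Fin (m + 1)) ≤ k'.castSucc := by
      rw [Fin.le_def]
      simp only [Fin.val_succ, Fin.coe_castSucc]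
      exact Fin.lt_def.mp hkk'
    have h3 : lam k.succ ≤ lam k'.castSucc := hlam.monotone hle
    linarith
  have hlast : ∀ k : Fin m, mu k < lam (Fin.last m) :=
    fun k => lt_of_lt_of_le (hmu1 k).2 (hlam.monotone (Fin.le_last _))
  have hqlast : 0 < q.eval (lam (Fin.last m)) := by
    have := hsq (Fin.last m)
    simpa using this
  rcases Nat.eq_zero_or_pos m with hm | hm
  · -- degenerate case m = 0
    subst hm
    have hqc : q = C (q.coeff 0) := Polynomial.eq_C_of_natDegree_le_zero hqdeg
    refine ⟨q.coeff 0, ?_, mu, ?_, fun k => k.elim0⟩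
    · rw [hqc] at hqlast
      simpa using hqlast
    · simpa using hqc
  · -- main case m ≥ 1
    set c' := q.coeff m with hc'def
    set r : Polynomial ℝ := ∏ j : Fin m, (X - C (mu j)) with hr
    have hrmonic : r.Monic := monic_prod_of_monic _ _ fun j _ => monic_X_sub_C _
    have hrdeg : r.natDegree = m := by
      rw [hr, natDegree_prod _ _ fun j _ => X_sub_C_ne_zero (mu j)]
      simp [natDegree_X_sub_C]
    have hd0 : q - C c' * r = 0 := by
      by_cases hd : q - C c' * r = 0
      · exact hd
      refine Polynomial.eq_zero_of_natDegree_lt_card_of_eval_eq_zero _ hmono.injective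
        (fun k => ?_) ?_
      · rw [eval_sub, eval_mul, eval_C, hmu2 k, hr, eval_prod]
        rw [Finset.prod_eq_zero (Finset.mem_univ k) (by simp)]
        ring
      · rw [Fintype.card_fin]
        rw [natDegree_lt_iff_degree_lt hd]
        rw [Polynomial.degree_lt_iff_coeff_zero]
        intro i hi
        rw [coeff_sub, coeff_C_mul]
        rcases eq_or_lt_of_le hi with he | hlt
        · rw [← he]
          have hrc : r.coeff m = 1 := by
            have := hrmonic.coeff_natDegree
            rwa [hrdeg] at this
          rw [hrc, hc'def, mul_one, sub_self]
        · rw [coeff_eq_zero_of_natDegree_lt (lt_of_le_of_lt hqdeg hlt),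
            coeff_eq_zero_of_natDegree_lt (by rw [hrdeg]; exact hlt)]
          ring
    have hqeq : q = C c' * r := sub_eq_zero.mp hd0
    have hP : 0 < ∏ j : Fin m, (lam (Fin.last m) - mu j) :=
      Finset.prod_pos fun j _ => sub_pos.mpr (hlast j)
    have hev : q.eval (lam (Fin.last m)) = c' * ∏ j : Fin m, (lam (Fin.last m) - mu j) := by
      rw [hqeq, eval_mul, eval_C, hr, eval_prod]
      simp
    rw [hev] at hqlast
    have hc'pos : 0 < c' := by
      rcases mul_pos_iff.mp hqlast with ⟨h1, _⟩ | ⟨_, h2⟩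
      · exact h1
      · linarith
    exact ⟨c', hc'pos, mu, hqeq, fun k => ⟨(hmu1 k).1, (hmu1 k).2⟩⟩
end

section
/- Let p be monic strictly hyperbolic of degree m, q a hyperbolic polynomial of degree m-1 with positive leading coefficient which separates (interlaces) p, and r any polynomial of degree at most m-1. Then there is a constant C > 0 such that C·ĥ_{p,q}(z,z̄) ≥ |r̂(z)|² for all z ∈ ℂ^m. -/
open Polynomial BigOperators

/-- If `p` (degree `m+1`) is strictly hyperbolic and `q` separates `p`, then for any
polynomial `r` of degree at most `m` there is `C > 0` with
`|r̂(z)|² ≤ C · ĥ_{p,q}(z,z̄)` for all `z ∈ ℂ^{m+1}`. -/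
theorem bezout_form_dominates_linear_forms (m : ℕ) (lam : Fin (m + 1) → ℝ)
    (hlam : StrictMono lam) (mu : Fin m → ℝ) (c : ℝ) (hc : 0 < c)
    (hint : ∀ k : Fin m, lam k.castSucc < mu k ∧ mu k < lam k.succ)
    (p q : Polynomial ℝ)
    (hp : p = ∏ j, (X - C (lam j)))
    (hq : q = C c * ∏ j, (X - C (mu j)))
    (r : Polynomial ℝ) (hr : r.natDegree ≤ m)
    (h : Fin (m + 1) → Fin (m + 1) → ℝ)
    (hh : ∀ x y : ℝ,
      (x - y) * ∑ i : Fin (m + 1), ∑ j : Fin (m + 1), h i j * x ^ (i : ℕ) * y ^ (j : ℕ)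
        = p.eval x * q.eval y - p.eval y * q.eval x) :
    ∃ C > 0, ∀ z : Fin (m + 1) → ℂ,
      ‖∑ i : Fin (m + 1), (r.coeff i : ℂ) * z i‖ ^ 2
        ≤ C * (∑ i : Fin (m + 1), ∑ j : Fin (m + 1),
            (h i j : ℂ) * z i * (starRingEnd ℂ) (z j)).re := by
  classical
  set ell : Fin (m + 1) → Polynomial ℝ :=
    fun k => ∏ j : Fin m, (X - C (lam (k.succAbove j))) with hell
  have hpk : ∀ k, p = (X - C (lam k)) * ell k := by
    intro k; rw [hp, Fin.prod_univ_succAbove _ k]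
  set D : Fin (m + 1) → ℝ := fun k => (ell k).eval (lam k) with hD
  have helldeg : ∀ k, (ell k).natDegree = m := by
    intro k
    rw [hell]
    rw [Polynomial.natDegree_prod_of_monic _ _ (fun i _ => monic_X_sub_C _)]
    simp [Polynomial.natDegree_X_sub_C]
  have hfactor : ∀ k (j : Fin m),
      0 < (lam k - mu j) * (lam k - lam (k.succAbove j)) := by
    intro k j
    rcases lt_or_ge (Fin.castSucc j) k with hlt | hle
    · rw [Fin.succAbove_of_castSucc_lt _ _ hlt]
      have h1 : mu j < lam k :=
        lt_of_lt_of_le (hint j).2 (hlam.monotone (Fin.castSucc_lt_iff_succ_le.mp hlt))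
      have h2 : lam (Fin.castSucc j) < lam k := hlam hlt
      exact mul_pos (by linarith) (by linarith)
    · rw [Fin.succAbove_of_le_castSucc _ _ hle]
      have h1 : lam k < mu j := lt_of_le_of_lt (hlam.monotone hle) (hint j).1
      have h2 : lam k < lam (Fin.succ j) :=
        hlam (lt_of_le_of_lt hle (Fin.castSucc_lt_succ : Fin.castSucc j < j.succ))
      exact mul_pos_of_neg_of_neg (by linarith) (by linarith)
  have hqD : ∀ k, 0 < q.eval (lam k) * D k := by
    intro k
    have : q.eval (lam k) * D k
        = c * ∏ j : Fin m, ((lam k - mu j) * (lam k - lam (k.succAbove j))) := by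
      rw [hq, hD, hell]
      simp [Polynomial.eval_prod, Finset.prod_mul_distrib, mul_assoc]
    rw [this]
    exact mul_pos hc (Finset.prod_pos fun j _ => hfactor k j)
  have hD0 : ∀ k, D k ≠ 0 := by
    intro k hk; simpa [hk] using (hqD k).ne'
  set w : Fin (m + 1) → ℝ := fun k => q.eval (lam k) / D k with hw
  have hwpos : ∀ k, 0 < w k := by
    intro k
    rcases mul_pos_iff.mp (hqD k) with ⟨h1, h2⟩ | ⟨h1, h2⟩
    · exact div_pos h1 h2
    · exact div_pos_of_neg_of_neg h1 h2
  -- interpolation lemma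
  have hinterp : ∀ s : Polynomial ℝ, s.natDegree ≤ m →
      s = ∑ k, C (s.eval (lam k) / D k) * ell k := by
    intro s hs
    have hroot : ∀ k j : Fin (m + 1), k ≠ j → (ell k).eval (lam j) = 0 := by
      intro k j hkj
      obtain ⟨i, hi⟩ := Fin.exists_succAbove_eq (Ne.symm hkj)
      rw [hell]
      simp only [Polynomial.eval_prod]
      exact Finset.prod_eq_zero (Finset.mem_univ i) (by simp [hi])
    set t : Polynomial ℝ := ∑ k, C (s.eval (lam k) / D k) * ell k with ht
    have hteval : ∀ j, t.eval (lam j) = s.eval (lam j) := by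
      intro j
      rw [ht, Polynomial.eval_finset_sum]
      rw [Finset.sum_eq_single j]
      · simp [div_mul_cancel₀ _ (hD0 j)]; exact div_mul_cancel₀ _ (hD0 j)
      · intro k _ hkj; simp [hroot k j hkj]
      · intro hj; exact absurd (Finset.mem_univ j) hj
    have hzero : s - t = 0 := by
      apply Polynomial.eq_zero_of_natDegree_lt_card_of_eval_eq_zero _ hlam.injective
      · intro j; simp [hteval j]
      · have h1 : t.natDegree ≤ m := by
          apply Polynomial.natDegree_sum_le_of_forall_le
          intro k _
          exact le_trans (Polynomial.natDegree_C_mul_le _ _) (le_of_eq (helldeg k))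
        calc (s - t).natDegree ≤ max s.natDegree t.natDegree := Polynomial.natDegree_sub_le _ _
          _ ≤ m := max_le hs h1
          _ < Fintype.card (Fin (m + 1)) := by simp
    exact sub_eq_zero.mp hzero
  have hqdeg : q.natDegree ≤ m := by
    rw [hq]
    refine le_trans (Polynomial.natDegree_C_mul_le _ _) (le_of_eq ?_)
    rw [Polynomial.natDegree_prod_of_monic _ _ (fun i _ => monic_X_sub_C _)]
    simp [Polynomial.natDegree_X_sub_C]
  have hq' : q = ∑ k, C (w k) * ell k := hinterp q hqdeg
  -- bivariate identity
  set HS : Polynomial (Polynomial ℝ) :=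
    ∑ i : Fin (m + 1), ∑ j : Fin (m + 1),
      C (C (h i j) * X ^ (i : ℕ)) * X ^ (j : ℕ) with hHS
  set BZ : Polynomial (Polynomial ℝ) :=
    ∑ k, C (C (w k) * ell k) * (ell k).map (C : ℝ →+* Polynomial ℝ) with hBZ
  have hXX : (C X - X : Polynomial (Polynomial ℝ)) ≠ 0 := by
    intro h0
    have := congrArg (fun s => Polynomial.coeff s 1) h0
    simp [Polynomial.coeff_C] at this
  have hBZside : (C X - X) * BZ = C p * q.map (C : ℝ →+* Polynomial ℝ)
      - C q * p.map (C : ℝ →+* Polynomial ℝ) := by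
    rw [hBZ, Finset.mul_sum]
    have hterm : ∀ k, (C X - X) * (C (C (w k) * ell k) * (ell k).map (C : ℝ →+* Polynomial ℝ))
        = C p * (C (C (w k)) * (ell k).map (C : ℝ →+* Polynomial ℝ))
          - C (C (w k) * ell k) * p.map (C : ℝ →+* Polynomial ℝ) := by
      intro k
      have hsplit : (C X - X : Polynomial (Polynomial ℝ))
          = C (X - C (lam k)) - (X - C (C (lam k))) := by
        push_cast [map_sub]
        ring
      rw [hsplit, sub_mul]
      refine congrArg₂ (· - ·) ?_ ?_
      · rw [hpk k]
        push_cast [map_mul]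
        ring
      · rw [hpk k, Polynomial.map_mul, Polynomial.map_sub, Polynomial.map_X, Polynomial.map_C]
        ring
    rw [Finset.sum_congr rfl (fun k _ => hterm k)]
    rw [Finset.sum_sub_distrib, ← Finset.mul_sum, ← Finset.sum_mul]
    refine congrArg₂ (· - ·) ?_ ?_
    · refine congrArg₂ (· * ·) rfl ?_
      rw [hq']
      rw [Polynomial.map_sum]
      refine Finset.sum_congr rfl fun k _ => ?_
      rw [Polynomial.map_mul, Polynomial.map_C]
    · refine congrArg₂ (· * ·) ?_ rfl
      rw [← map_sum, ← hq']
  have hHSside : (C X - X) * HS = C p * q.map (C : ℝ →+* Polynomial ℝ)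
      - C q * p.map (C : ℝ →+* Polynomial ℝ) := by
    have hGb : ∀ b : ℝ, ((C X - X) * HS - (C p * q.map (C : ℝ →+* Polynomial ℝ)
        - C q * p.map (C : ℝ →+* Polynomial ℝ))).eval (C b) = 0 := by
      intro b
      apply Polynomial.funext
      intro a
      have hmap : ∀ (s : Polynomial ℝ),
          ((s.map (C : ℝ →+* Polynomial ℝ)).eval (C b)).eval a = s.eval b := by
        intro s
        rw [Polynomial.eval_map, Polynomial.eval₂_at_apply, Polynomial.eval_C]
      simp only [hHS, Polynomial.eval_sub, Polynomial.eval_mul, Polynomial.eval_C,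
        Polynomial.eval_X, Polynomial.eval_finset_sum, Polynomial.eval_pow,
        Polynomial.eval_zero, hmap]
      linarith [hh a b]
    have : ((C X - X) * HS - (C p * q.map (C : ℝ →+* Polynomial ℝ)
        - C q * p.map (C : ℝ →+* Polynomial ℝ))) = 0 := by
      apply Polynomial.eq_zero_of_infinite_isRoot
      apply Set.Infinite.mono (s := Set.range (fun b : ℝ => (C b : Polynomial ℝ)))
      · rintro _ ⟨b, rfl⟩
        exact hGb b
      · exact Set.infinite_range_of_injective (fun x y => by simp [Polynomial.C_inj])
    exact sub_eq_zero.mp this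
  have key : HS = BZ := mul_left_cancel₀ hXX (hHSside.trans hBZside.symm)
  have hcoeff : ∀ i j : Fin (m + 1),
      h i j = ∑ k, w k * ((ell k).coeff i * (ell k).coeff j) := by
    intro i j
    have e1 := congrArg (fun s : Polynomial (Polynomial ℝ) =>
      (Polynomial.coeff s (j : ℕ)).coeff (i : ℕ)) key
    simp only [hHS, hBZ, Polynomial.finset_sum_coeff, Polynomial.coeff_C_mul,
      Polynomial.coeff_X_pow, Polynomial.coeff_map, mul_ite, mul_one, mul_zero,
      Fin.val_eq_val, Finset.sum_ite_eq, Finset.mem_univ, if_true,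
      Polynomial.coeff_mul_C] at e1
    rw [e1]
    refine Finset.sum_congr rfl fun k _ => ?_
    ring
  -- assembly
  refine ⟨(∑ k, (r.eval (lam k) / D k) ^ 2 / w k) + 1,
    add_pos_of_nonneg_of_pos
      (Finset.sum_nonneg fun k _ => div_nonneg (sq_nonneg _) (hwpos k).le) one_pos, ?_⟩
  intro z
  set Φ : Fin (m + 1) → ℂ := fun k => ∑ i : Fin (m + 1), ((ell k).coeff i : ℂ) * z i with hΦ
  set β : Fin (m + 1) → ℝ := fun k => r.eval (lam k) / D k with hβ
  have hr' : r = ∑ k, C (β k) * ell k := hinterp r hr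
  have hrcoeff : ∀ i : Fin (m + 1), r.coeff i = ∑ k, β k * (ell k).coeff i := by
    intro i
    conv_lhs => rw [hr']
    simp [Polynomial.finset_sum_coeff, Polynomial.coeff_C_mul]
  have hsum1 : ∑ i : Fin (m + 1), (r.coeff i : ℂ) * z i = ∑ k, (β k : ℂ) * Φ k := by
    simp only [hrcoeff, hΦ]
    push_cast
    simp only [Finset.sum_mul]
    rw [Finset.sum_comm]
    refine Finset.sum_congr rfl fun k _ => ?_
    rw [Finset.mul_sum]
    refine Finset.sum_congr rfl fun i _ => ?_
    ring
  have hconj : ∀ k, (starRingEnd ℂ) (Φ k)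
      = ∑ j : Fin (m + 1), ((ell k).coeff j : ℂ) * (starRingEnd ℂ) (z j) := by
    intro k
    rw [hΦ]
    simp only [map_sum, map_mul, Complex.conj_ofReal]
  have hsum2 : ∑ i : Fin (m + 1), ∑ j : Fin (m + 1),
      (h i j : ℂ) * z i * (starRingEnd ℂ) (z j)
      = ((∑ k, w k * Complex.normSq (Φ k) : ℝ) : ℂ) := by
    calc ∑ i : Fin (m + 1), ∑ j : Fin (m + 1), (h i j : ℂ) * z i * (starRingEnd ℂ) (z j)
        = ∑ i : Fin (m + 1), ∑ j : Fin (m + 1), ∑ k,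
            (w k : ℂ) * ((((ell k).coeff i : ℝ) : ℂ) * z i)
              * ((((ell k).coeff j : ℝ) : ℂ) * (starRingEnd ℂ) (z j)) := by
          refine Finset.sum_congr rfl fun i _ => Finset.sum_congr rfl fun j _ => ?_
          rw [hcoeff i j]
          push_cast
          rw [Finset.sum_mul, Finset.sum_mul]
          exact Finset.sum_congr rfl fun k _ => by ring
      _ = ∑ i : Fin (m + 1), ∑ k, ∑ j : Fin (m + 1),
            (w k : ℂ) * ((((ell k).coeff i : ℝ) : ℂ) * z i)
              * ((((ell k).coeff j : ℝ) : ℂ) * (starRingEnd ℂ) (z j)) :=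
          Finset.sum_congr rfl fun i _ => Finset.sum_comm
      _ = ∑ k, ∑ i : Fin (m + 1), ∑ j : Fin (m + 1),
            (w k : ℂ) * ((((ell k).coeff i : ℝ) : ℂ) * z i)
              * ((((ell k).coeff j : ℝ) : ℂ) * (starRingEnd ℂ) (z j)) :=
          Finset.sum_comm
      _ = ∑ k, (w k : ℂ) * (Φ k * (starRingEnd ℂ) (Φ k)) := by
          refine Finset.sum_congr rfl fun k _ => ?_
          rw [hconj k, hΦ]
          rw [Finset.sum_mul_sum]
          rw [Finset.mul_sum]
          refine Finset.sum_congr rfl fun i _ => ?_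
          rw [Finset.mul_sum]
          refine Finset.sum_congr rfl fun j _ => ?_
          ring
      _ = ((∑ k, w k * Complex.normSq (Φ k) : ℝ) : ℂ) := by
          push_cast
          refine Finset.sum_congr rfl fun k _ => ?_
          rw [Complex.mul_conj]
  rw [hsum1, hsum2, Complex.ofReal_re]
  set S : ℝ := ∑ k, w k * Complex.normSq (Φ k) with hS
  have hS0 : 0 ≤ S :=
    Finset.sum_nonneg fun k _ => mul_nonneg (hwpos k).le (Complex.normSq_nonneg _)
  have h1 : ‖∑ k, (β k : ℂ) * Φ k‖ ≤ ∑ k, |β k| * ‖Φ k‖ := by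
    refine (norm_sum_le _ _).trans (le_of_eq (Finset.sum_congr rfl fun k _ => ?_))
    rw [norm_mul, Complex.norm_real, Real.norm_eq_abs]
  have h2 : (∑ k, |β k| * ‖Φ k‖) ^ 2 ≤ (∑ k, β k ^ 2 / w k) * S := by
    have hcs := Finset.sum_mul_sq_le_sq_mul_sq Finset.univ
      (fun k => |β k| / Real.sqrt (w k)) (fun k => Real.sqrt (w k) * ‖Φ k‖)
    calc (∑ k, |β k| * ‖Φ k‖) ^ 2
        = (∑ k, (|β k| / Real.sqrt (w k)) * (Real.sqrt (w k) * ‖Φ k‖)) ^ 2 := by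
          congr 1
          refine Finset.sum_congr rfl fun k _ => ?_
          have hsw : Real.sqrt (w k) ≠ 0 := (Real.sqrt_pos.mpr (hwpos k)).ne'
          field_simp
      _ ≤ (∑ k, (|β k| / Real.sqrt (w k)) ^ 2) * ∑ k, (Real.sqrt (w k) * ‖Φ k‖) ^ 2 := hcs
      _ = (∑ k, β k ^ 2 / w k) * S := by
          congr 1
          · refine Finset.sum_congr rfl fun k _ => ?_
            rw [div_pow, sq_abs, Real.sq_sqrt (hwpos k).le]
          · rw [hS]
            refine Finset.sum_congr rfl fun k _ => ?_
            rw [mul_pow, Real.sq_sqrt (hwpos k).le, Complex.normSq_eq_norm_sq]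
  calc ‖∑ k, (β k : ℂ) * Φ k‖ ^ 2 ≤ (∑ k, |β k| * ‖Φ k‖) ^ 2 :=
        pow_le_pow_left₀ (norm_nonneg _) h1 2
    _ ≤ (∑ k, β k ^ 2 / w k) * S := h2
    _ ≤ ((∑ k, β k ^ 2 / w k) + 1) * S :=
        mul_le_mul_of_nonneg_right (le_add_of_nonneg_right zero_le_one) hS0
end

section
/- Let p be a monic hyperbolic polynomial of degree m. Then there exists c > 0 such that ĥ_{p,p'}(z,z̄) = Σ_{k=1}^m |p̂ₖ(z)|² ≥ c |p̂'(z)|² for all z ∈ ℂ^m. -/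
open Polynomial BigOperators

lemma coeff_extract' {m : ℕ} (a b : Fin m → ℝ)
    (h : ∀ x : ℝ, ∑ i : Fin m, a i * x ^ (i:ℕ) = ∑ i : Fin m, b i * x ^ (i:ℕ)) : a = b := by
  have key : (∑ i : Fin m, C (a i) * X ^ (i:ℕ)) = ∑ i : Fin m, C (b i) * X ^ (i:ℕ) := by
    apply Polynomial.funext
    intro x
    simpa [Polynomial.eval_finset_sum] using h x
  funext i
  have := congrArg (fun q => Polynomial.coeff q (i:ℕ)) key
  simp only [Polynomial.finset_sum_coeff, Polynomial.coeff_C_mul, Polynomial.coeff_X_pow] at this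
  have e : ∀ c : Fin m → ℝ, (∑ x : Fin m, c x * if (i:ℕ) = (x:ℕ) then (1:ℝ) else 0) = c i := by
    intro c
    rw [Finset.sum_eq_single i] <;> simp +contextual [Fin.ext_iff, eq_comm]
  rw [e a, e b] at this
  exact this

lemma deriv_prod' {m : ℕ} (lam : Fin m → ℝ) :
    derivative (∏ j, (X - C (lam j))) =
      ∑ k : Fin m, ∏ j ∈ Finset.univ.erase k, (X - C (lam j)) := by
  rw [Finset.prod_eq_multiset_prod, Polynomial.derivative_prod, Finset.sum_eq_multiset_sum]
  congr 1
  apply Multiset.map_congr rfl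
  intro k hk
  rw [Finset.prod_eq_multiset_prod, ← Finset.erase_val]
  simp

lemma pk_deg' {m : ℕ} (lam : Fin m → ℝ) (k : Fin m) :
    (∏ j ∈ Finset.univ.erase k, (X - C (lam j))).natDegree < m := by
  have hm : 0 < m := k.pos
  have h1 : (∏ j ∈ Finset.univ.erase k, (X - C (lam j))).natDegree
      = ∑ j ∈ Finset.univ.erase k, (X - C (lam j)).natDegree := by
    apply Polynomial.natDegree_prod
    intro j _
    exact X_sub_C_ne_zero _
  have h2 : ∀ j ∈ Finset.univ.erase k, (X - C (lam j)).natDegree = 1 := by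
    intro j _; exact natDegree_X_sub_C _
  rw [h1, Finset.sum_congr rfl h2, Finset.sum_const, smul_eq_mul, mul_one,
    Finset.card_erase_of_mem (Finset.mem_univ k), Finset.card_univ, Fintype.card_fin]
  omega

lemma eval_fin_sum' {m : ℕ} (q : Polynomial ℝ) (hq : q.natDegree < m) (x : ℝ) :
    q.eval x = ∑ i : Fin m, q.coeff i * x ^ (i:ℕ) := by
  rw [Polynomial.eval_eq_sum_range' hq, Fin.sum_univ_eq_sum_range (fun i => q.coeff i * x ^ i)]

lemma sum_swap3' {α : Type*} [AddCommMonoid α] {m : ℕ} (f : Fin m → Fin m → Fin m → α) :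
    ∑ i : Fin m, ∑ j : Fin m, ∑ k : Fin m, f i j k
      = ∑ k : Fin m, ∑ i : Fin m, ∑ j : Fin m, f i j k := by
  rw [Finset.sum_congr rfl fun i (_ : i ∈ Finset.univ) =>
    (Finset.sum_comm : ∑ j : Fin m, ∑ k : Fin m, f i j k = ∑ k : Fin m, ∑ j : Fin m, f i j k)]
  exact Finset.sum_comm

/-- For monic hyperbolic `p`, the form of the Bézoutian of `p` and `p'` equals
`Σ |p̂ₖ(z)|²` and dominates `c |p̂'(z)|²` for some `c > 0`. -/
theorem bezout_form_p_pprime_bound (m : ℕ) (lam : Fin m → ℝ)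
    (p : Polynomial ℝ) (hp : p = ∏ j, (X - C (lam j)))
    (h : Fin m → Fin m → ℝ)
    (hh : ∀ x y : ℝ,
      (x - y) * ∑ i : Fin m, ∑ j : Fin m, h i j * x ^ (i : ℕ) * y ^ (j : ℕ)
        = p.eval x * (derivative p).eval y - p.eval y * (derivative p).eval x) :
    ∃ c > 0, ∀ z : Fin m → ℂ,
      (∑ i : Fin m, ∑ j : Fin m, (h i j : ℂ) * z i * (starRingEnd ℂ) (z j)).re
        = (∑ k : Fin m,
            ‖∑ i : Fin m,
                (((∏ j ∈ Finset.univ.erase k, (X - C (lam j))).coeff i : ℝ) : ℂ) * z i‖ ^ 2) ∧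
      c * ‖∑ i : Fin m, ((derivative p).coeff i : ℂ) * z i‖ ^ 2
        ≤ ∑ k : Fin m,
            ‖∑ i : Fin m,
                (((∏ j ∈ Finset.univ.erase k, (X - C (lam j))).coeff i : ℝ) : ℂ) * z i‖ ^ 2 := by
  set pk : Fin m → Polynomial ℝ := fun k => ∏ j ∈ Finset.univ.erase k, (X - C (lam j)) with hpk
  have hdp : derivative p = ∑ k : Fin m, pk k := by rw [hp]; exact deriv_prod' lam
  -- Step 1
  have step1 : ∀ x y : ℝ,
      p.eval x * (derivative p).eval y - p.eval y * (derivative p).eval x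
        = (x - y) * ∑ k : Fin m, (pk k).eval x * (pk k).eval y := by
    intro x y
    rw [hdp, hp]
    simp only [Polynomial.eval_finset_sum, Finset.mul_sum, ← Finset.sum_sub_distrib]
    apply Finset.sum_congr rfl
    intro k _
    have hx : eval x (∏ j, (X - C (lam j))) = (x - lam k) * eval x (pk k) := by
      rw [hpk, ← Finset.mul_prod_erase Finset.univ _ (Finset.mem_univ k)]
      simp
    have hy : eval y (∏ j, (X - C (lam j))) = (y - lam k) * eval y (pk k) := by
      rw [hpk, ← Finset.mul_prod_erase Finset.univ _ (Finset.mem_univ k)]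
      simp
    rw [hx, hy]; ring
  -- Step 2
  have step2 : ∀ x y : ℝ,
      (∑ i : Fin m, ∑ j : Fin m, h i j * x ^ (i:ℕ) * y ^ (j:ℕ))
        = ∑ k : Fin m, (pk k).eval x * (pk k).eval y := by
    intro x y
    have key : (fun x : ℝ => ∑ i : Fin m, ∑ j : Fin m, h i j * x ^ (i:ℕ) * y ^ (j:ℕ))
        = fun x : ℝ => ∑ k : Fin m, (pk k).eval x * (pk k).eval y := by
      apply Continuous.ext_on (dense_compl_singleton y)
      · fun_prop
      · apply continuous_finset_sum
        intro k _
        exact ((pk k).continuous).mul continuous_const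
      · intro x hx
        have hxy : x - y ≠ 0 := sub_ne_zero.mpr hx
        exact mul_left_cancel₀ hxy ((hh x y).trans (step1 x y))
    exact congrFun key x
  -- Step 3
  have heval : ∀ k : Fin m, ∀ x : ℝ,
      (pk k).eval x = ∑ i : Fin m, (pk k).coeff i * x ^ (i:ℕ) := by
    intro k x
    exact eval_fin_sum' _ (pk_deg' lam k) x
  have step3 : ∀ i j : Fin m, h i j = ∑ k : Fin m, (pk k).coeff i * (pk k).coeff j := by
    have h1 : ∀ y : ℝ, (fun i : Fin m => ∑ j : Fin m, h i j * y ^ (j:ℕ))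
        = fun i : Fin m =>
            ∑ j : Fin m, (∑ k : Fin m, (pk k).coeff i * (pk k).coeff j) * y ^ (j:ℕ) := by
      intro y
      apply coeff_extract'
      intro x
      have lhs : ∑ i : Fin m, (∑ j : Fin m, h i j * y ^ (j:ℕ)) * x ^ (i:ℕ)
          = ∑ i : Fin m, ∑ j : Fin m, h i j * x ^ (i:ℕ) * y ^ (j:ℕ) := by
        apply Finset.sum_congr rfl; intro i _
        rw [Finset.sum_mul]; apply Finset.sum_congr rfl; intro j _; ring
      have rhs : ∑ i : Fin m,
            (∑ j : Fin m, (∑ k : Fin m, (pk k).coeff i * (pk k).coeff j) * y ^ (j:ℕ)) * x ^ (i:ℕ)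
          = ∑ k : Fin m, (pk k).eval x * (pk k).eval y := by
        simp only [Finset.sum_mul, Finset.mul_sum]
        rw [sum_swap3']
        apply Finset.sum_congr rfl; intro k _
        rw [heval k x, heval k y, Finset.sum_mul_sum]
        apply Finset.sum_congr rfl; intro i _
        apply Finset.sum_congr rfl; intro j _
        ring
      rw [lhs, rhs, step2]
    have h2 : ∀ i : Fin m, (fun j : Fin m => h i j)
        = fun j : Fin m => ∑ k : Fin m, (pk k).coeff i * (pk k).coeff j := by
      intro i
      apply coeff_extract'
      intro y
      exact congrFun (h1 y) i
    intro i j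
    exact congrFun (h2 i) j
  -- conclusion
  refine ⟨1 / (m + 1), by positivity, fun z => ?_⟩
  set w : Fin m → ℂ := fun k => ∑ i : Fin m, (((pk k).coeff i : ℝ) : ℂ) * z i with hw
  have hconjw : ∀ k, (starRingEnd ℂ) (w k)
      = ∑ j : Fin m, (((pk k).coeff j : ℝ) : ℂ) * (starRingEnd ℂ) (z j) := by
    intro k
    rw [hw, map_sum]
    apply Finset.sum_congr rfl; intro j _
    rw [map_mul, Complex.conj_ofReal]
  have e1 : ∀ k, w k * (starRingEnd ℂ) (w k)
      = ∑ i : Fin m, ∑ j : Fin m,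
          (((pk k).coeff i : ℝ) : ℂ) * (((pk k).coeff j : ℝ) : ℂ)
            * (z i * (starRingEnd ℂ) (z j)) := by
    intro k
    rw [hconjw k, hw, Finset.sum_mul_sum]
    apply Finset.sum_congr rfl; intro i _
    apply Finset.sum_congr rfl; intro j _
    ring
  have e2 : ∑ i : Fin m, ∑ j : Fin m, (h i j : ℂ) * z i * (starRingEnd ℂ) (z j)
      = ∑ k : Fin m, w k * (starRingEnd ℂ) (w k) := by
    have : ∀ i j : Fin m, (h i j : ℂ) * z i * (starRingEnd ℂ) (z j)
        = ∑ k : Fin m, (((pk k).coeff i : ℝ) : ℂ) * (((pk k).coeff j : ℝ) : ℂ)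
            * (z i * (starRingEnd ℂ) (z j)) := by
      intro i j
      rw [step3 i j]
      push_cast
      rw [Finset.sum_mul, Finset.sum_mul]
      apply Finset.sum_congr rfl; intro k _
      ring
    calc ∑ i : Fin m, ∑ j : Fin m, (h i j : ℂ) * z i * (starRingEnd ℂ) (z j)
        = ∑ i : Fin m, ∑ j : Fin m, ∑ k : Fin m,
            (((pk k).coeff i : ℝ) : ℂ) * (((pk k).coeff j : ℝ) : ℂ)
              * (z i * (starRingEnd ℂ) (z j)) := by
          apply Finset.sum_congr rfl; intro i _
          apply Finset.sum_congr rfl; intro j _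
          exact this i j
      _ = ∑ k : Fin m, ∑ i : Fin m, ∑ j : Fin m,
            (((pk k).coeff i : ℝ) : ℂ) * (((pk k).coeff j : ℝ) : ℂ)
              * (z i * (starRingEnd ℂ) (z j)) := sum_swap3' _
      _ = ∑ k : Fin m, w k * (starRingEnd ℂ) (w k) := by
          apply Finset.sum_congr rfl; intro k _
          exact (e1 k).symm
  have hre : ∀ k, (w k * (starRingEnd ℂ) (w k)).re = ‖w k‖ ^ 2 := by
    intro k
    rw [Complex.mul_conj]
    simp [Complex.normSq_eq_norm_sq, ← Complex.ofReal_pow]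
  constructor
  · rw [e2, Complex.re_sum]
    exact Finset.sum_congr rfl fun k _ => hre k
  · -- inequality
    have hsum : ∑ i : Fin m, ((derivative p).coeff i : ℂ) * z i = ∑ k : Fin m, w k := by
      rw [hdp]
      simp only [Polynomial.finset_sum_coeff]
      have e3 : ∀ i : Fin m, ((∑ k : Fin m, (pk k).coeff i : ℝ) : ℂ) * z i
          = ∑ k : Fin m, (((pk k).coeff i : ℝ) : ℂ) * z i := by
        intro i
        push_cast
        rw [Finset.sum_mul]
      rw [Finset.sum_congr rfl fun i _ => e3 i, Finset.sum_comm]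
    rw [hsum]
    have hS : (0:ℝ) ≤ ∑ k : Fin m, ‖w k‖ ^ 2 :=
      Finset.sum_nonneg fun k _ => by positivity
    have h1 : ‖∑ k : Fin m, w k‖ ^ 2 ≤ (∑ k : Fin m, ‖w k‖) ^ 2 := by
      have := norm_sum_le Finset.univ w
      have h0 : (0:ℝ) ≤ ‖∑ k : Fin m, w k‖ := norm_nonneg _
      nlinarith
    have h2 : (∑ k : Fin m, ‖w k‖) ^ 2 ≤ (m : ℝ) * ∑ k : Fin m, ‖w k‖ ^ 2 := by
      have := sq_sum_le_card_mul_sum_sq (s := (Finset.univ : Finset (Fin m)))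
        (f := fun k => ‖w k‖)
      simpa using this
    have hm1 : (0:ℝ) < (m:ℝ) + 1 := by positivity
    rw [div_mul_eq_mul_div, div_le_iff₀ hm1]
    nlinarith [h1, h2, hS]
end

section
/- Let p be a monic hyperbolic polynomial of degree m, possibly with multiple roots, and let q be a real polynomial of degree m-1 with positive leading coefficient which separates p. Then there exists c > 0 such that ĥ_{p,q}(z,z̄) ≥ c Σ_{k=1}^m |p̂ₖ(z)|² for all z ∈ ℂ^m. -/
open Polynomial BigOperators

/-- coefficient extraction, one variable -/
lemma coeff_extract_one {m : ℕ} (g : Fin m → ℝ)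
    (hg : ∀ x : ℝ, ∑ i : Fin m, g i * x ^ (i : ℕ) = 0) : ∀ i, g i = 0 := by
  intro i
  have hG : (∑ j : Fin m, C (g j) * X ^ (j : ℕ) : ℝ[X]) = 0 := by
    apply Polynomial.eq_zero_of_infinite_isRoot
    have : {x : ℝ | IsRoot (∑ j : Fin m, C (g j) * X ^ (j : ℕ)) x} = Set.univ := by
      apply Set.eq_univ_of_forall
      intro x
      simp only [Set.mem_setOf_eq, IsRoot.def, eval_finset_sum, eval_mul, eval_C, eval_pow, eval_X]
      exact hg x
    rw [this]
    exact Set.infinite_univ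
  have := congrArg (fun P => Polynomial.coeff P (i : ℕ)) hG
  simp only [finset_sum_coeff, coeff_C_mul, coeff_X_pow, coeff_zero] at this
  rw [Finset.sum_eq_single i] at this
  · simpa using this
  · intro b _ hb
    have : (i : ℕ) ≠ (b : ℕ) := fun hx => hb (Fin.val_injective hx.symm)
    simp [this]
  · simp

/-- coefficient extraction, two variables, off-diagonal -/
lemma coeff_extract_two {m : ℕ} (g : Fin m → Fin m → ℝ)
    (hg : ∀ x y : ℝ, x ≠ y → ∑ i : Fin m, ∑ j : Fin m, g i j * x ^ (i : ℕ) * y ^ (j : ℕ) = 0) :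
    ∀ i j, g i j = 0 := by
  have key : ∀ (x : ℝ) (j : Fin m), ∑ i : Fin m, g i j * x ^ (i : ℕ) = 0 := by
    intro x j
    have hGx : (∑ j : Fin m, C (∑ i : Fin m, g i j * x ^ (i : ℕ)) * X ^ (j : ℕ) : ℝ[X]) = 0 := by
      apply Polynomial.eq_zero_of_infinite_isRoot
      apply Set.Infinite.mono (s := {x}ᶜ)
      · intro y hy
        simp only [Set.mem_compl_iff, Set.mem_singleton_iff] at hy
        have := hg x y (fun hxy => hy hxy.symm)
        simp only [Set.mem_setOf_eq, IsRoot.def, eval_finset_sum, eval_mul, eval_C, eval_pow,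
          eval_X]
        calc ∑ j' : Fin m, (∑ i' : Fin m, g i' j' * x ^ (i' : ℕ)) * y ^ (j' : ℕ)
            = ∑ i' : Fin m, ∑ j' : Fin m, g i' j' * x ^ (i' : ℕ) * y ^ (j' : ℕ) := by
              rw [Finset.sum_comm]
              refine Finset.sum_congr rfl fun j' _ => ?_
              rw [Finset.sum_mul]
          _ = 0 := this
      · exact Set.Finite.infinite_compl (Set.finite_singleton x)
    have hall : ∀ y : ℝ, ∑ j : Fin m, (∑ i : Fin m, g i j * x ^ (i : ℕ)) * y ^ (j : ℕ) = 0 := by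
      intro y
      have := congrArg (eval y) hGx
      simpa only [eval_finset_sum, eval_mul, eval_C, eval_pow, eval_X, eval_zero] using this
    exact coeff_extract_one (fun j => ∑ i : Fin m, g i j * x ^ (i : ℕ)) hall j
  intro i j
  exact coeff_extract_one (fun i => g i j) (fun x => key x j) i

set_option maxHeartbeats 2000000 in
/-- For a monic hyperbolic `p` (possibly with multiple roots) and a separating `q`
with positive leading coefficient, the Bézoutian form dominates `c Σ |p̂ₖ(z)|²`. -/
theorem bezout_form_lower_bound_general (t m : ℕ) (lam : Fin (t + 1) → ℝ)
    (hlam : StrictMono lam)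
    (r : Fin (t + 1) → ℕ) (hr : ∀ j, 1 ≤ r j) (hm : m = ∑ j, r j)
    (p : Polynomial ℝ) (hp : p = ∏ j, (X - C (lam j)) ^ (r j))
    (Lam : Fin m → ℝ) (hLam : p = ∏ j, (X - C (Lam j)))
    (mu : Fin t → ℝ) (hint : ∀ j : Fin t, lam j.castSucc < mu j ∧ mu j < lam j.succ)
    (c : ℝ) (hc : 0 < c)
    (q : Polynomial ℝ)
    (hq : q = C c * (∏ j, (X - C (lam j)) ^ (r j - 1)) * ∏ j, (X - C (mu j)))
    (h : Fin m → Fin m → ℝ)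
    (hh : ∀ x y : ℝ,
      (x - y) * ∑ i : Fin m, ∑ j : Fin m, h i j * x ^ (i : ℕ) * y ^ (j : ℕ)
        = p.eval x * q.eval y - p.eval y * q.eval x) :
    ∃ c' > 0, ∀ z : Fin m → ℂ,
      c' * ∑ k : Fin m,
          ‖∑ i : Fin m,
              (((∏ j ∈ Finset.univ.erase k, (X - C (Lam j))).coeff i : ℝ) : ℂ) * z i‖ ^ 2
        ≤ (∑ i : Fin m, ∑ j : Fin m, (h i j : ℂ) * z i * (starRingEnd ℂ) (z j)).re := by
  classical
  set P : ℝ[X] := ∏ j, (X - C (lam j)) with hP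
  set D : ℝ[X] := ∏ j, (X - C (lam j)) ^ (r j - 1) with hD
  set Q : ℝ[X] := C c * ∏ j, (X - C (mu j)) with hQ
  set Pj : Fin (t + 1) → ℝ[X] := fun j => ∏ i ∈ Finset.univ.erase j, (X - C (lam i)) with hPj
  set S : Fin (t + 1) → ℝ[X] := fun j => D * Pj j with hS
  set w : Fin (t + 1) → ℝ := fun j => Q.eval (lam j) / (Pj j).eval (lam j) with hw
  have hlaminj : Function.Injective lam := hlam.injective
  -- p = D * P
  have f1 : p = D * P := by
    rw [hp, hD, hP, ← Finset.prod_mul_distrib]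
    refine Finset.prod_congr rfl fun j _ => ?_
    rw [← pow_succ]
    congr 1
    have := hr j
    omega
  -- q = D * Q
  have f2 : q = D * Q := by rw [hq, hD, hQ]; ring
  -- P = (X - C (lam j)) * Pj j
  have f3 : ∀ j, P = (X - C (lam j)) * Pj j := fun j =>
    (Finset.mul_prod_erase Finset.univ _ (Finset.mem_univ j)).symm
  -- p = (X - C (lam j)) * S j
  have f4 : ∀ j, p = (X - C (lam j)) * S j := fun j => by
    rw [f1, f3 j, hS]; ring
  -- (Pj j).eval (lam j) ≠ 0
  have f5 : ∀ j, (Pj j).eval (lam j) ≠ 0 := by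
    intro j
    rw [hPj]
    simp only [eval_prod, eval_sub, eval_X, eval_C]
    rw [Finset.prod_ne_zero_iff]
    intro i hi
    have : lam j ≠ lam i := fun hx => (Finset.mem_erase.mp hi).1 (hlaminj hx).symm
    exact sub_ne_zero_of_ne this
  -- reindex the erased product via succAbove
  have ferase : ∀ j : Fin (t + 1), (Pj j).eval (lam j) = ∏ i : Fin t, (lam j - lam (j.succAbove i)) := by
    intro j
    rw [hPj]
    simp only [eval_prod, eval_sub, eval_X, eval_C]
    refine (Finset.prod_bij (fun (i : Fin t) _ => j.succAbove i) ?_ ?_ ?_ ?_).symm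
    · intro i _
      exact Finset.mem_erase.mpr ⟨Fin.succAbove_ne j i, Finset.mem_univ _⟩
    · intro a _ b _ hab
      exact Fin.succAbove_right_injective hab
    · intro k hk
      obtain ⟨i, hi⟩ := Fin.exists_succAbove_eq (Finset.mem_erase.mp hk).1
      exact ⟨i, Finset.mem_univ _, hi⟩
    · intro i _
      rfl
  -- positivity of the eval products
  have fprodpos : ∀ j : Fin (t + 1), 0 < Q.eval (lam j) * (Pj j).eval (lam j) := by
    intro j
    rw [ferase, hQ]
    simp only [eval_mul, eval_C, eval_prod, eval_sub, eval_X]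
    rw [mul_assoc, ← Finset.prod_mul_distrib]
    refine mul_pos hc (Finset.prod_pos fun i _ => ?_)
    rcases lt_or_ge (Fin.castSucc i) j with hij | hij
    · have h1 : lam (j.succAbove i) < lam j := by
        rw [Fin.succAbove_of_castSucc_lt j i hij]
        exact hlam hij
      have h2 : mu i < lam j := by
        have : (i : Fin t).succ ≤ j := hij
        exact lt_of_lt_of_le (hint i).2 (hlam.monotone this)
      exact mul_pos (by linarith) (by linarith)
    · have h1 : lam j < lam (j.succAbove i) := by
        rw [Fin.succAbove_of_le_castSucc j i hij]
        exact lt_of_le_of_lt (hlam.monotone hij) (hlam (Fin.castSucc_lt_succ (i := i)))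
      have h2 : lam j < mu i := lt_of_le_of_lt (hlam.monotone hij) (hint i).1
      exact mul_pos_of_neg_of_neg (by linarith) (by linarith)
  have f6 : ∀ j, 0 < w j := by
    intro j
    rw [hw]
    rcases mul_pos_iff.mp (fprodpos j) with ⟨ha, hb⟩ | ⟨ha, hb⟩
    · exact div_pos ha hb
    · exact div_pos_of_neg_of_neg ha hb
  -- Lagrange interpolation: Q = Σ w j • Pj j
  have fPjzero : ∀ j k : Fin (t + 1), j ≠ k → (Pj j).eval (lam k) = 0 := by
    intro j k hjk
    rw [hPj]
    simp only [eval_prod, eval_sub, eval_X, eval_C]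
    exact Finset.prod_eq_zero (Finset.mem_erase.mpr ⟨Ne.symm hjk, Finset.mem_univ _⟩) (by ring)
  have f7 : ∀ x : ℝ, Q.eval x = ∑ j, w j * (Pj j).eval x := by
    have hG : Q - ∑ j, C (w j) * Pj j = 0 := by
      apply Polynomial.eq_zero_of_natDegree_lt_card_of_eval_eq_zero _ hlaminj
      · intro k
        simp only [eval_sub, eval_finset_sum, eval_mul, eval_C]
        rw [Finset.sum_eq_single k]
        · rw [hw]
          rw [div_mul_cancel₀ _ (f5 k), sub_self]
        · intro j _ hjk
          rw [fPjzero j k hjk, mul_zero]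
        · simp
      · have hdQ : Q.natDegree ≤ t := by
          refine le_trans (natDegree_C_mul_le _ _) ?_
          refine le_trans (natDegree_prod_le _ _) ?_
          apply le_trans (Finset.sum_le_card_nsmul _ _ 1 ?_)
          · simp
          · intro i _
            exact le_of_eq (natDegree_X_sub_C _)
        have hdS : (∑ j, C (w j) * Pj j).natDegree ≤ t := by
          refine le_trans (natDegree_sum_le _ _) ?_
          rw [Finset.fold_max_le]
          refine ⟨Nat.zero_le _, fun j _ => ?_⟩
          refine le_trans (natDegree_C_mul_le _ _) ?_
          rw [hPj]
          refine le_trans (natDegree_prod_le _ _) ?_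
          apply le_trans (Finset.sum_le_card_nsmul _ _ 1 ?_)
          · simp [Finset.card_erase_of_mem]
          · intro i _
            exact le_of_eq (natDegree_X_sub_C _)
        calc (Q - ∑ j, C (w j) * Pj j).natDegree ≤ max Q.natDegree (∑ j, C (w j) * Pj j).natDegree := natDegree_sub_le _ _
          _ ≤ t := by omega
          _ < Fintype.card (Fin (t + 1)) := by simp
    intro x
    have := congrArg (eval x) hG
    simp only [eval_sub, eval_finset_sum, eval_mul, eval_C, eval_zero, sub_eq_zero] at this
    exact this
  -- the key pointwise identity for simple part
  have hPQ : ∀ x y : ℝ, P.eval x * Q.eval y - P.eval y * Q.eval x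
      = (x - y) * ∑ j, w j * (Pj j).eval x * (Pj j).eval y := by
    intro x y
    rw [f7 y, f7 x, Finset.mul_sum, Finset.mul_sum, ← Finset.sum_sub_distrib, Finset.mul_sum]
    refine Finset.sum_congr rfl fun j _ => ?_
    have hx : P.eval x = (x - lam j) * (Pj j).eval x := by
      have := congrArg (eval x) (f3 j); simpa using this
    have hy : P.eval y = (y - lam j) * (Pj j).eval y := by
      have := congrArg (eval y) (f3 j); simpa using this
    rw [hx, hy]; ring
  -- the key identity with multiplicities
  have f8 : ∀ x y : ℝ, (x - y) * ∑ j, w j * (S j).eval x * (S j).eval y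
      = p.eval x * q.eval y - p.eval y * q.eval x := by
    intro x y
    rw [f1, f2]
    simp only [hS, eval_mul]
    calc (x - y) * ∑ j, w j * (D.eval x * (Pj j).eval x) * (D.eval y * (Pj j).eval y)
        = D.eval x * D.eval y * ((x - y) * ∑ j, w j * (Pj j).eval x * (Pj j).eval y) := by
          simp only [Finset.mul_sum]
          exact Finset.sum_congr rfl fun j _ => by ring
      _ = D.eval x * D.eval y * (P.eval x * Q.eval y - P.eval y * Q.eval x) := by rw [hPQ x y]
      _ = D.eval x * P.eval x * (D.eval y * Q.eval y) - D.eval y * P.eval y * (D.eval x * Q.eval x) := by ring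
  -- degrees
  have hpdeg : p.natDegree = m := by
    rw [hLam, natDegree_prod _ _ (fun i _ => X_sub_C_ne_zero (Lam i))]
    simp [natDegree_X_sub_C]
  have hSmonic : ∀ j, (S j).Monic := by
    intro j
    exact ((monic_prod_of_monic _ _ fun i _ => (monic_X_sub_C _).pow _).mul
      (monic_prod_of_monic _ _ fun i _ => monic_X_sub_C _))
  have hSdegeq : ∀ j, m = 1 + (S j).natDegree := by
    intro j
    rw [← hpdeg, f4 j, (monic_X_sub_C (lam j)).natDegree_mul (hSmonic j), natDegree_X_sub_C]
  have hSdeg : ∀ j, (S j).natDegree < m := fun j => by have := hSdegeq j; omega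
  have hm1 : 0 < m := by have := hSdegeq ⟨0, Nat.succ_pos t⟩; omega
  have Seval : ∀ (l : Fin (t + 1)) (x : ℝ),
      (S l).eval x = ∑ i : Fin m, (S l).coeff i * x ^ (i : ℕ) := by
    intro l x
    rw [eval_eq_sum_range' (hSdeg l), ← Fin.sum_univ_eq_sum_range]
  -- identify the Bezout matrix
  have f9 : ∀ i j, h i j = ∑ l, w l * (S l).coeff i * (S l).coeff j := by
    have key := coeff_extract_two
      (fun i j => h i j - ∑ l, w l * (S l).coeff i * (S l).coeff j) ?_
    · intro i j
      have := key i j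
      linarith
    intro x y hxy
    have H := mul_left_cancel₀ (sub_ne_zero_of_ne hxy) ((hh x y).trans (f8 x y).symm)
    have expand : ∑ l, w l * (S l).eval x * (S l).eval y
        = ∑ i : Fin m, ∑ j : Fin m,
            (∑ l, w l * (S l).coeff i * (S l).coeff j) * x ^ (i : ℕ) * y ^ (j : ℕ) := by
      calc ∑ l, w l * (S l).eval x * (S l).eval y
          = ∑ l, ∑ i : Fin m, ∑ j : Fin m,
              w l * (S l).coeff i * (S l).coeff j * x ^ (i : ℕ) * y ^ (j : ℕ) := by
            refine Finset.sum_congr rfl fun l _ => ?_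
            rw [Seval l x, Seval l y, Finset.mul_sum, Finset.sum_comm]
            refine Finset.sum_congr rfl fun j _ => ?_
            rw [Finset.mul_sum, Finset.sum_mul]
            exact Finset.sum_congr rfl fun i _ => by ring
        _ = ∑ i : Fin m, ∑ j : Fin m,
              (∑ l, w l * (S l).coeff i * (S l).coeff j) * x ^ (i : ℕ) * y ^ (j : ℕ) := by
            rw [Finset.sum_comm]
            refine Finset.sum_congr rfl fun i _ => ?_
            rw [Finset.sum_comm]
            refine Finset.sum_congr rfl fun j _ => ?_
            rw [Finset.sum_mul, Finset.sum_mul]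
    rw [expand] at H
    calc ∑ i : Fin m, ∑ j : Fin m,
          (h i j - ∑ l, w l * (S l).coeff i * (S l).coeff j) * x ^ (i : ℕ) * y ^ (j : ℕ)
        = (∑ i : Fin m, ∑ j : Fin m, h i j * x ^ (i : ℕ) * y ^ (j : ℕ))
          - ∑ i : Fin m, ∑ j : Fin m,
              (∑ l, w l * (S l).coeff i * (S l).coeff j) * x ^ (i : ℕ) * y ^ (j : ℕ) := by
          rw [← Finset.sum_sub_distrib]
          refine Finset.sum_congr rfl fun i _ => ?_
          rw [← Finset.sum_sub_distrib]
          refine Finset.sum_congr rfl fun j _ => ?_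
          ring
      _ = 0 := by rw [H]; ring
  -- every Lam k is some lam l
  have hroot : ∀ k : Fin m, ∃ l, Lam k = lam l := by
    intro k
    have hev : p.eval (Lam k) = 0 := by
      rw [hLam, eval_prod]
      exact Finset.prod_eq_zero (Finset.mem_univ k) (by simp)
    rw [hp, eval_prod] at hev
    obtain ⟨j, -, hj⟩ := Finset.prod_eq_zero_iff.mp hev
    simp only [eval_pow, eval_sub, eval_X, eval_C] at hj
    have := pow_eq_zero_iff (by have := hr j; omega : r j ≠ 0) |>.mp hj
    exact ⟨j, by linarith [sub_eq_zero.mp this]⟩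
  choose σ hσ using hroot
  have herase : ∀ k : Fin m, ∏ j ∈ Finset.univ.erase k, (X - C (Lam j)) = S (σ k) := by
    intro k
    have h1 : (X - C (Lam k)) * ∏ j ∈ Finset.univ.erase k, (X - C (Lam j)) = p := by
      rw [hLam]
      exact Finset.mul_prod_erase Finset.univ (fun j => X - C (Lam j)) (Finset.mem_univ k)
    have h2 : p = (X - C (Lam k)) * S (σ k) := by rw [hσ k]; exact f4 (σ k)
    exact mul_left_cancel₀ (X_sub_C_ne_zero _) (h1.trans h2)
  -- set up the final bound
  set wmin : ℝ := Finset.univ.inf' Finset.univ_nonempty w with hwmin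
  have hwminpos : 0 < wmin := by
    rw [hwmin, Finset.lt_inf'_iff]
    exact fun l _ => f6 l
  have hwminle : ∀ l, wmin ≤ w l := fun l => Finset.inf'_le _ (Finset.mem_univ l)
  refine ⟨wmin / m, div_pos hwminpos (by exact_mod_cast hm1), ?_⟩
  intro z
  set u : Fin (t + 1) → ℂ := fun l => ∑ i : Fin m, (((S l).coeff i : ℝ) : ℂ) * z i with hu
  -- compute the Hermitian form
  have hconj : ∀ l, (starRingEnd ℂ) (u l) = ∑ j : Fin m, (((S l).coeff j : ℝ) : ℂ) * (starRingEnd ℂ) (z j) := by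
    intro l
    rw [hu, map_sum]
    exact Finset.sum_congr rfl fun j _ => by rw [map_mul, Complex.conj_ofReal]
  have hform : ∑ i : Fin m, ∑ j : Fin m, (h i j : ℂ) * z i * (starRingEnd ℂ) (z j)
      = ((∑ l, w l * ‖u l‖ ^ 2 : ℝ) : ℂ) := by
    calc ∑ i : Fin m, ∑ j : Fin m, (h i j : ℂ) * z i * (starRingEnd ℂ) (z j)
        = ∑ i : Fin m, ∑ j : Fin m, ∑ l, ((w l : ℂ) * ((S l).coeff i : ℝ) * ((S l).coeff j : ℝ))
            * z i * (starRingEnd ℂ) (z j) := by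
          refine Finset.sum_congr rfl fun i _ => Finset.sum_congr rfl fun j _ => ?_
          rw [f9 i j]
          push_cast
          rw [Finset.sum_mul, Finset.sum_mul]
      _ = ∑ i : Fin m, ∑ l, ∑ j : Fin m, ((w l : ℂ) * ((S l).coeff i : ℝ) * ((S l).coeff j : ℝ))
            * z i * (starRingEnd ℂ) (z j) :=
          Finset.sum_congr rfl fun i _ => Finset.sum_comm
      _ = ∑ l, ∑ i : Fin m, ∑ j : Fin m, ((w l : ℂ) * ((S l).coeff i : ℝ) * ((S l).coeff j : ℝ))
            * z i * (starRingEnd ℂ) (z j) := Finset.sum_comm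
      _ = ∑ l, (w l : ℂ) * (u l * (starRingEnd ℂ) (u l)) := by
          refine Finset.sum_congr rfl fun l _ => ?_
          rw [hconj l, hu]
          rw [Finset.sum_mul_sum, Finset.mul_sum]
          refine Finset.sum_congr rfl fun i _ => ?_
          rw [Finset.mul_sum]
          refine Finset.sum_congr rfl fun j _ => by ring
      _ = ∑ l, ((w l * ‖u l‖ ^ 2 : ℝ) : ℂ) := by
          refine Finset.sum_congr rfl fun l _ => ?_
          rw [Complex.mul_conj, Complex.sq_norm, Complex.ofReal_mul]
      _ = ((∑ l, w l * ‖u l‖ ^ 2 : ℝ) : ℂ) := by push_cast; rfl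
  rw [hform, Complex.ofReal_re]
  -- the left side rewrites via σ
  have hLHS : ∀ k : Fin m,
      ‖∑ i : Fin m, (((∏ j ∈ Finset.univ.erase k, (X - C (Lam j))).coeff i : ℝ) : ℂ) * z i‖ ^ 2
      = ‖u (σ k)‖ ^ 2 := by
    intro k
    rw [hu]
    congr 2
    refine Finset.sum_congr rfl fun i _ => ?_
    rw [herase k]
  have hm0 : (m : ℝ) ≠ 0 := by
    have : (0 : ℝ) < m := by exact_mod_cast hm1
    linarith
  have hsum1 : ∑ k : Fin m,
      ‖∑ i : Fin m, (((∏ j ∈ Finset.univ.erase k, (X - C (Lam j))).coeff i : ℝ) : ℂ) * z i‖ ^ 2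
      = ∑ k : Fin m, ‖u (σ k)‖ ^ 2 := Finset.sum_congr rfl fun k _ => hLHS k
  rw [hsum1]
  have hsum2 : ∑ k : Fin m, ‖u (σ k)‖ ^ 2 ≤ (m : ℝ) * ∑ l, ‖u l‖ ^ 2 := by
    calc ∑ k : Fin m, ‖u (σ k)‖ ^ 2
        ≤ ∑ _k : Fin m, ∑ l, ‖u l‖ ^ 2 := Finset.sum_le_sum fun k _ =>
          Finset.single_le_sum (f := fun l => ‖u l‖ ^ 2) (fun l _ => sq_nonneg _)
            (Finset.mem_univ (σ k))
      _ = (m : ℝ) * ∑ l, ‖u l‖ ^ 2 := by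
          rw [Finset.sum_const, Finset.card_univ, Fintype.card_fin, nsmul_eq_mul]
  have hsum3 : wmin * ∑ l, ‖u l‖ ^ 2 ≤ ∑ l, w l * ‖u l‖ ^ 2 := by
    rw [Finset.mul_sum]
    exact Finset.sum_le_sum fun l _ => mul_le_mul_of_nonneg_right (hwminle l) (sq_nonneg _)
  have h4 : wmin / m * (∑ k : Fin m, ‖u (σ k)‖ ^ 2) ≤ wmin / m * ((m : ℝ) * ∑ l, ‖u l‖ ^ 2) :=
    mul_le_mul_of_nonneg_left hsum2 (le_of_lt (div_pos hwminpos (by exact_mod_cast hm1)))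
  have h5 : wmin / m * ((m : ℝ) * ∑ l, ‖u l‖ ^ 2) = wmin * ∑ l, ‖u l‖ ^ 2 := by
    field_simp
  linarith
end

section
/- Let p(ζ) = ∏_{j=1}^s (ζ - λ_{(j)})^{r_j} with distinct real λ_{(j)}, and let q(ζ) = b(ζ)∏_{j=1}^s (ζ - λ_{(j)})^{r_j-1} where b(ζ) = ∏_{j=1}^{s-1}(ζ - μⱼ) with λ_{(1)} < μ₁ < ⋯ < μ_{s-1} < λ_{(s)}. Then the Bézoutian of p and q equals h_{p,q}(ζ,ζ̄) = Σ_{k=1}^s αₖ φₖ(ζ)φₖ(ζ̄), where φₖ(ζ) = ∏_{j=1}^s (ζ - λ_{(j)})^{r_j - δ_{kj}} and αₖ = b(λ_{(k)})/∏_{j≠k}(λ_{(k)} - λ_{(j)}) > 0. -/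
open Polynomial BigOperators

/-- Explicit expansion of the Bézoutian for `p = ∏(ζ-λ_{(j)})^{r_j}` and the separating
`q = b · ∏(ζ-λ_{(j)})^{r_j-1}`: `h_{p,q}(ζ,η) = Σₖ αₖ φₖ(ζ)φₖ(η)` with
`φₖ(ζ) = ∏ (ζ-λ_{(j)})^{r_j - δ_{kj}}` and `αₖ = b(λ_{(k)})/∏_{j≠k}(λ_{(k)}-λ_{(j)}) > 0`. -/
theorem bezoutian_expansion_general (t : ℕ) (lam : Fin (t + 1) → ℝ)
    (hlam : StrictMono lam)
    (r : Fin (t + 1) → ℕ) (hr : ∀ j, 1 ≤ r j)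
    (mu : Fin t → ℝ) (hint : ∀ j : Fin t, lam j.castSucc < mu j ∧ mu j < lam j.succ)
    (b p q : Polynomial ℝ)
    (hb : b = ∏ j, (X - C (mu j)))
    (hp : p = ∏ j, (X - C (lam j)) ^ (r j))
    (hq : q = b * ∏ j, (X - C (lam j)) ^ (r j - 1))
    (α : Fin (t + 1) → ℝ)
    (hα : ∀ k, α k = b.eval (lam k) / ∏ j ∈ Finset.univ.erase k, (lam k - lam j)) :
    (∀ k, 0 < α k) ∧
    ∀ x y : ℝ, p.eval x * q.eval y - p.eval y * q.eval x
      = (x - y) * ∑ k : Fin (t + 1), α k *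
          ((∏ j, (x - lam j) ^ (r j - if k = j then 1 else 0)) *
            (∏ j, (y - lam j) ^ (r j - if k = j then 1 else 0))) := by
  have hinj : Function.Injective lam := hlam.injective
  -- product over `erase k` reindexed by `succAbove`
  have hD : ∀ (k : Fin (t + 1)) (f : Fin (t + 1) → ℝ),
      ∏ j ∈ Finset.univ.erase k, f j = ∏ j : Fin t, f (k.succAbove j) := by
    intro k f
    refine (Finset.prod_bij (fun j _ => k.succAbove j) ?_ ?_ ?_ ?_).symm
    · intro j _; exact Finset.mem_erase.mpr ⟨Fin.succAbove_ne k j, Finset.mem_univ _⟩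
    · intro a _ b _ h; exact (Fin.succAbove_right_injective) h
    · intro j hj
      obtain ⟨i, hi⟩ := Fin.exists_succAbove_eq (Finset.ne_of_mem_erase hj)
      exact ⟨i, Finset.mem_univ _, hi⟩
    · intro j _; rfl
  -- positivity of α
  have hαpos : ∀ k, 0 < α k := by
    intro k
    rw [hα k, hb, Polynomial.eval_prod]
    simp only [eval_sub, eval_X, eval_C]
    rw [hD k (fun j => lam k - lam j), ← Finset.prod_div_distrib]
    apply Finset.prod_pos
    intro j _
    rcases lt_or_ge (j : ℕ) (k : ℕ) with h | h
    · have hsa : k.succAbove j = j.castSucc :=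
        Fin.succAbove_of_castSucc_lt _ _ (by simpa [Fin.lt_def] using h)
      rw [hsa]
      apply div_pos
      · have h1 : mu j < lam j.succ := (hint j).2
        have h2 : lam j.succ ≤ lam k := hlam.monotone (by simp [Fin.le_def]; omega)
        linarith
      · have : lam j.castSucc < lam k := hlam (by simpa [Fin.lt_def] using h)
        linarith
    · have hsa : k.succAbove j = j.succ :=
        Fin.succAbove_of_le_castSucc _ _ (by simpa [Fin.le_def] using h)
      rw [hsa]
      apply div_pos_of_neg_of_neg
      · have h1 : lam j.castSucc < mu j := (hint j).1
        have h2 : lam k ≤ lam j.castSucc := hlam.monotone (by simpa [Fin.le_def] using h)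
        linarith
      · have : lam k < lam j.succ := hlam (by simp [Fin.lt_def]; omega)
        linarith
  refine ⟨hαpos, ?_⟩
  -- Lagrange interpolation of b at the nodes lam
  have hbdeg : b.degree < (Finset.univ : Finset (Fin (t + 1))).card := by
    rw [hb, Polynomial.degree_prod]
    simp only [Polynomial.degree_X_sub_C, Finset.card_univ, Fintype.card_fin]
    simp only [Finset.sum_const, Finset.card_univ, Fintype.card_fin, nsmul_eq_mul, mul_one]
    exact_mod_cast Nat.lt_succ_self t
  have hinterp := Lagrange.eq_interpolate (v := lam) (f := b)
    (Set.injOn_of_injective hinj) hbdeg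
  have hbval : ∀ y : ℝ, b.eval y
      = ∑ k : Fin (t + 1), α k * ∏ j ∈ Finset.univ.erase k, (y - lam j) := by
    intro y
    conv_lhs => rw [hinterp]
    rw [Lagrange.interpolate_apply, Polynomial.eval_finset_sum]
    refine Finset.sum_congr rfl ?_
    intro k _
    rw [Polynomial.eval_mul, Polynomial.eval_C, Lagrange.basis, Polynomial.eval_prod]
    have hterm : ∀ j ∈ Finset.univ.erase k,
        Polynomial.eval y (Lagrange.basisDivisor (lam k) (lam j))
          = (lam k - lam j)⁻¹ * (y - lam j) := by
      intro j _; simp [Lagrange.basisDivisor]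
    rw [Finset.prod_congr rfl hterm, Finset.prod_mul_distrib, Finset.prod_inv_distrib,
      hα k, div_eq_mul_inv]
    ring
  -- factorization of φ_k
  have hphi : ∀ (k : Fin (t + 1)) (x : ℝ),
      (∏ j, (x - lam j) ^ (r j - if k = j then 1 else 0))
        = (∏ j, (x - lam j) ^ (r j - 1)) * ∏ j ∈ Finset.univ.erase k, (x - lam j) := by
    intro k x
    have h1 : ∏ j ∈ Finset.univ.erase k, (x - lam j)
        = ∏ j : Fin (t + 1), (if k = j then 1 else (x - lam j)) := by
      rw [← Finset.prod_erase (f := fun j => if k = j then (1:ℝ) else (x - lam j))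
        (a := k) Finset.univ (if_pos rfl)]
      refine Finset.prod_congr rfl ?_
      intro j hj
      rw [if_neg (Ne.symm (Finset.ne_of_mem_erase hj))]
    rw [h1, ← Finset.prod_mul_distrib]
    refine Finset.prod_congr rfl ?_
    intro j _
    by_cases hkj : k = j
    · simp [hkj]
    · rw [if_neg hkj, if_neg hkj, ← pow_succ]
      congr 1
      have := hr j; omega
  -- evaluations of p and q
  have hpe : ∀ x : ℝ, p.eval x
      = (∏ j, (x - lam j) ^ (r j - 1)) * ∏ j, (x - lam j) := by
    intro x
    rw [hp, Polynomial.eval_prod, ← Finset.prod_mul_distrib]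
    refine Finset.prod_congr rfl ?_
    intro j _
    simp only [eval_pow, eval_sub, eval_X, eval_C]
    rw [← pow_succ]
    congr 1
    have := hr j; omega
  have hqe : ∀ x : ℝ, q.eval x = b.eval x * ∏ j, (x - lam j) ^ (r j - 1) := by
    intro x
    rw [hq, Polynomial.eval_mul, Polynomial.eval_prod]
    simp
  -- the core identity for the simple products
  have core : ∀ x y : ℝ,
      (∏ j, (x - lam j)) * b.eval y - (∏ j, (y - lam j)) * b.eval x
        = (x - y) * ∑ k : Fin (t + 1), α k *
            ((∏ j ∈ Finset.univ.erase k, (x - lam j)) *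
              (∏ j ∈ Finset.univ.erase k, (y - lam j))) := by
    intro x y
    rw [hbval x, hbval y, Finset.mul_sum, Finset.mul_sum, ← Finset.sum_sub_distrib,
      Finset.mul_sum]
    refine Finset.sum_congr rfl ?_
    intro k _
    have hx := Finset.mul_prod_erase Finset.univ (fun j => x - lam j) (Finset.mem_univ k)
    have hy := Finset.mul_prod_erase Finset.univ (fun j => y - lam j) (Finset.mem_univ k)
    rw [← hx, ← hy]
    ring
  intro x y
  have hRHS : ∑ k : Fin (t + 1), α k *
        ((∏ j, (x - lam j) ^ (r j - if k = j then 1 else 0)) *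
          (∏ j, (y - lam j) ^ (r j - if k = j then 1 else 0)))
      = ((∏ j, (x - lam j) ^ (r j - 1)) * (∏ j, (y - lam j) ^ (r j - 1))) *
          ∑ k : Fin (t + 1), α k *
            ((∏ j ∈ Finset.univ.erase k, (x - lam j)) *
              (∏ j ∈ Finset.univ.erase k, (y - lam j))) := by
    rw [Finset.mul_sum]
    refine Finset.sum_congr rfl ?_
    intro k _
    rw [hphi k x, hphi k y]
    ring
  rw [hpe x, hpe y, hqe x, hqe y, hRHS]
  linear_combination ((∏ j, (x - lam j) ^ (r j - 1)) * (∏ j, (y - lam j) ^ (r j - 1))) * core x y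
end

section
/- Let p be a monic hyperbolic polynomial of degree m and q a real polynomial of degree m-1 such that the Bézoutian form satisfies ĥ_{p,q}(z,z̄) ≥ c Σ_{k=1}^m |p̂ₖ(z)|² for some c > 0 and all z ∈ ℂ^m. Then q is hyperbolic with positive leading coefficient and q separates p. -/
open Polynomial BigOperators Filter Set

namespace BezoutAux

lemma pow_sub_one_dvd_derivative (f : Polynomial ℝ) (l : ℝ) (k : ℕ)
    (hd : (X - C l) ^ k ∣ f) : (X - C l) ^ (k - 1) ∣ derivative f := by
  obtain ⟨g, rfl⟩ := hd
  rw [derivative_mul, derivative_pow]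
  apply dvd_add
  · apply Dvd.dvd.mul_right
    apply Dvd.dvd.mul_right
    exact Dvd.intro_left _ rfl
  · exact Dvd.dvd.mul_right (pow_dvd_pow _ (Nat.sub_le k 1)) _

lemma diag_eq_wronskian (m : ℕ) (p q : Polynomial ℝ) (h : Fin m → Fin m → ℝ)
    (hh : ∀ x y : ℝ, (x - y) * ∑ i : Fin m, ∑ j : Fin m, h i j * x ^ (i:ℕ) * y ^ (j:ℕ)
      = p.eval x * q.eval y - p.eval y * q.eval x) (x : ℝ) :
    ∑ i : Fin m, ∑ j : Fin m, h i j * x ^ (i:ℕ) * x ^ (j:ℕ)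
      = (derivative p * q - p * derivative q).eval x := by
  set S : Polynomial ℝ := ∑ j : Fin m, C (∑ i : Fin m, h i j * x ^ (i:ℕ)) * X ^ (j:ℕ) with hS
  have key : (C x - X) * S = C (p.eval x) * q - C (q.eval x) * p := by
    apply Polynomial.funext
    intro y
    simp only [hS, eval_mul, eval_sub, eval_C, eval_X, eval_finset_sum, eval_pow]
    have e1 : ∑ j : Fin m, (∑ i : Fin m, h i j * x ^ (i:ℕ)) * y ^ (j:ℕ)
        = ∑ i : Fin m, ∑ j : Fin m, h i j * x ^ (i:ℕ) * y ^ (j:ℕ) := by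
      rw [Finset.sum_comm]
      exact Finset.sum_congr rfl fun j _ => by rw [Finset.sum_mul]
    rw [e1, hh x y]
    ring
  have hder := congrArg derivative key
  simp only [derivative_mul, derivative_sub, derivative_C, derivative_X, zero_mul, zero_sub,
    zero_add] at hder
  have hev := congrArg (eval x) hder
  simp only [eval_add, eval_mul, eval_sub, eval_neg, eval_C, eval_X, eval_zero, zero_mul, zero_sub,
    sub_self, neg_mul, one_mul, zero_add, zero_mul, add_zero, mul_zero] at hev
  have hSx : S.eval x = ∑ i : Fin m, ∑ j : Fin m, h i j * x ^ (i:ℕ) * x ^ (j:ℕ) := by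
    simp only [hS, eval_finset_sum, eval_mul, eval_C, eval_pow, eval_X]
    rw [Finset.sum_comm]
    exact Finset.sum_congr rfl fun j _ => by rw [Finset.sum_mul]
  rw [eval_sub, eval_mul, eval_mul]
  nlinarith [hev, hSx]


lemma bezout_complex (m : ℕ) (p q : Polynomial ℝ) (h : Fin m → Fin m → ℝ)
    (hh : ∀ x y : ℝ, (x - y) * ∑ i : Fin m, ∑ j : Fin m, h i j * x ^ (i:ℕ) * y ^ (j:ℕ)
      = p.eval x * q.eval y - p.eval y * q.eval x) :
    ∀ x y : ℂ, (x - y) * ∑ i : Fin m, ∑ j : Fin m, (h i j : ℂ) * x ^ (i:ℕ) * y ^ (j:ℕ)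
      = (p.map (algebraMap ℝ ℂ)).eval x * (q.map (algebraMap ℝ ℂ)).eval y
        - (p.map (algebraMap ℝ ℂ)).eval y * (q.map (algebraMap ℝ ℂ)).eval x := by
  have hinf : ∀ F : Polynomial ℂ, (∀ u : ℝ, F.eval (u:ℂ) = 0) → F = 0 := by
    intro F hF
    apply Polynomial.eq_zero_of_infinite_isRoot
    apply Set.Infinite.mono (s := Set.range (fun u : ℝ => (u:ℂ)))
    · rintro z ⟨u, rfl⟩; exact hF u
    · exact Set.infinite_range_of_injective Complex.ofReal_injective
  have hPev : ∀ (f : Polynomial ℝ) (u : ℝ),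
      (f.map (algebraMap ℝ ℂ)).eval (u:ℂ) = ((f.eval u : ℝ) : ℂ) := by
    intro f u
    rw [eval_map]
    exact Polynomial.eval₂_at_apply (algebraMap ℝ ℂ) u
  have stageA : ∀ (x : ℝ) (y : ℂ),
      ((x:ℂ) - y) * ∑ i : Fin m, ∑ j : Fin m, (h i j : ℂ) * (x:ℂ) ^ (i:ℕ) * y ^ (j:ℕ)
      = (p.map (algebraMap ℝ ℂ)).eval (x:ℂ) * (q.map (algebraMap ℝ ℂ)).eval y
        - (p.map (algebraMap ℝ ℂ)).eval y * (q.map (algebraMap ℝ ℂ)).eval (x:ℂ) := by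
    intro x y
    set F : Polynomial ℂ := (C (x:ℂ) - X) *
        (∑ j : Fin m, C (∑ i : Fin m, (h i j : ℂ) * (x:ℂ) ^ (i:ℕ)) * X ^ (j:ℕ))
      - (C ((p.map (algebraMap ℝ ℂ)).eval (x:ℂ)) * (q.map (algebraMap ℝ ℂ))
          - C ((q.map (algebraMap ℝ ℂ)).eval (x:ℂ)) * (p.map (algebraMap ℝ ℂ))) with hF
    have hF0 : F = 0 := by
      apply hinf
      intro u
      simp only [hF, eval_sub, eval_mul, eval_C, eval_X, eval_finset_sum, eval_pow]
      rw [hPev p u, hPev q u, hPev p x, hPev q x]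
      rw [sub_eq_zero]
      have e1 : ∑ j : Fin m, (∑ i : Fin m, (h i j:ℂ) * (x:ℂ) ^ (i:ℕ)) * (u:ℂ) ^ (j:ℕ)
          = ∑ i : Fin m, ∑ j : Fin m, (h i j:ℂ) * (x:ℂ) ^ (i:ℕ) * (u:ℂ) ^ (j:ℕ) := by
        rw [Finset.sum_comm]
        exact Finset.sum_congr rfl fun j _ => by rw [Finset.sum_mul]
      rw [e1]
      have hre : (x - u) * ∑ i : Fin m, ∑ j : Fin m, h i j * x ^ (i:ℕ) * u ^ (j:ℕ)
          = p.eval x * q.eval u - q.eval x * p.eval u := by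
        rw [hh x u]; ring
      exact_mod_cast congrArg (fun r : ℝ => (r : ℂ)) hre
    have := congrArg (eval y) hF0
    simp only [hF, eval_sub, eval_mul, eval_C, eval_X, eval_finset_sum, eval_pow, eval_zero] at this
    have e1 : ∑ j : Fin m, (∑ i : Fin m, (h i j:ℂ) * (x:ℂ) ^ (i:ℕ)) * y ^ (j:ℕ)
        = ∑ i : Fin m, ∑ j : Fin m, (h i j:ℂ) * (x:ℂ) ^ (i:ℕ) * y ^ (j:ℕ) := by
      rw [Finset.sum_comm]
      exact Finset.sum_congr rfl fun j _ => by rw [Finset.sum_mul]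
    rw [← e1]
    linear_combination this
  intro x y
  set G : Polynomial ℂ := (X - C y) *
      (∑ i : Fin m, C (∑ j : Fin m, (h i j : ℂ) * y ^ (j:ℕ)) * X ^ (i:ℕ))
    - ((p.map (algebraMap ℝ ℂ)) * C ((q.map (algebraMap ℝ ℂ)).eval y)
        - C ((p.map (algebraMap ℝ ℂ)).eval y) * (q.map (algebraMap ℝ ℂ))) with hG
  have hG0 : G = 0 := by
    apply hinf
    intro u
    simp only [hG, eval_sub, eval_mul, eval_C, eval_X, eval_finset_sum, eval_pow]
    rw [sub_eq_zero]
    have e1 : ∑ i : Fin m, (∑ j : Fin m, (h i j:ℂ) * y ^ (j:ℕ)) * (u:ℂ) ^ (i:ℕ)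
        = ∑ i : Fin m, ∑ j : Fin m, (h i j:ℂ) * (u:ℂ) ^ (i:ℕ) * y ^ (j:ℕ) := by
      refine Finset.sum_congr rfl fun i _ => ?_
      rw [Finset.sum_mul]
      exact Finset.sum_congr rfl fun j _ => by ring
    rw [e1]
    linear_combination stageA u y
  have := congrArg (eval x) hG0
  simp only [hG, eval_sub, eval_mul, eval_C, eval_X, eval_finset_sum, eval_pow, eval_zero] at this
  have e1 : ∑ i : Fin m, (∑ j : Fin m, (h i j:ℂ) * y ^ (j:ℕ)) * x ^ (i:ℕ)
      = ∑ i : Fin m, ∑ j : Fin m, (h i j:ℂ) * x ^ (i:ℕ) * y ^ (j:ℕ) := by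
    refine Finset.sum_congr rfl fun i _ => ?_
    rw [Finset.sum_mul]
    exact Finset.sum_congr rfl fun j _ => by ring
  rw [← e1]
  linear_combination this


lemma exists_root_of_mul_neg (f : Polynomial ℝ) {x1 x2 : ℝ} (h12 : x1 ≤ x2)
    (hneg : f.eval x1 * f.eval x2 < 0) : ∃ z ∈ Set.Icc x1 x2, f.eval z = 0 := by
  rcases mul_neg_iff.mp hneg with ⟨h1, h2⟩ | ⟨h1, h2⟩
  · obtain ⟨z, hz, hz0⟩ := intermediate_value_Icc' h12 (f.continuous_aeval.continuousOn)
      (Set.mem_Icc.mpr ⟨h2.le, h1.le⟩)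
    exact ⟨z, hz, hz0⟩
  · obtain ⟨z, hz, hz0⟩ := intermediate_value_Icc h12 (f.continuous_aeval.continuousOn)
      (Set.mem_Icc.mpr ⟨h1.le, h2.le⟩)
    exact ⟨z, hz, hz0⟩

lemma sign_of_no_root (f : Polynomial ℝ) {x1 x2 : ℝ} (h12 : x1 ≤ x2)
    (hno : ∀ x, x ∈ Set.Icc x1 x2 → f.eval x ≠ 0) : 0 < f.eval x1 * f.eval x2 := by
  rcases lt_trichotomy (f.eval x1 * f.eval x2) 0 with hlt | heq | hgt
  · obtain ⟨z, hz, hz0⟩ := exists_root_of_mul_neg f h12 hlt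
    exact absurd hz0 (hno z hz)
  · rcases mul_eq_zero.mp heq with h0 | h0
    · exact absurd h0 (hno x1 (Set.mem_Icc.mpr ⟨le_refl _, h12⟩))
    · exact absurd h0 (hno x2 (Set.mem_Icc.mpr ⟨h12, le_refl _⟩))
  · exact hgt

lemma exists_right_slope (f : Polynomial ℝ) {ρ b : ℝ} (hρb : ρ < b) (h0 : f.eval ρ = 0)
    (hd : (derivative f).eval ρ ≠ 0) :
    ∃ x ∈ Set.Ioo ρ b, 0 < f.eval x * (derivative f).eval ρ := by
  have hs := hasDerivAt_iff_tendsto_slope.mp (f.hasDerivAt ρ)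
  have hs' : Filter.Tendsto (slope (fun x => f.eval x) ρ) (nhdsWithin ρ (Set.Ioi ρ))
      (nhds ((derivative f).eval ρ)) :=
    hs.mono_left (nhdsWithin_mono ρ (fun x hx => ne_of_gt hx))
  have hpos : 0 < (derivative f).eval ρ * (derivative f).eval ρ := mul_self_pos.mpr hd
  have hopen : IsOpen {y : ℝ | 0 < y * (derivative f).eval ρ} :=
    isOpen_lt continuous_const (continuous_id.mul continuous_const)
  have hev : ∀ᶠ x in nhdsWithin ρ (Set.Ioi ρ),
      0 < slope (fun x => f.eval x) ρ x * (derivative f).eval ρ :=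
    hs'.eventually (p := fun y => 0 < y * (derivative f).eval ρ)
      (Filter.eventually_of_mem (hopen.mem_nhds hpos) (fun y hy => hy))
  have hmem : Set.Ioo ρ b ∈ nhdsWithin ρ (Set.Ioi ρ) := Ioo_mem_nhdsGT_of_mem ⟨le_refl ρ, hρb⟩
  obtain ⟨x, hx1, hx2⟩ := (hev.and (Filter.eventually_of_mem hmem (fun x hx => hx))).exists
  refine ⟨x, hx2, ?_⟩
  have hxρ : 0 < x - ρ := sub_pos.mpr hx2.1
  have hslope : slope (fun x => f.eval x) ρ x = f.eval x / (x - ρ) := by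
    rw [slope_def_field]; rw [h0]; ring
  rw [hslope] at hx1
  have heq : f.eval x / (x - ρ) * (derivative f).eval ρ * (x - ρ)
      = f.eval x * (derivative f).eval ρ := by
    rw [div_mul_eq_mul_div, div_mul_cancel₀ _ hxρ.ne']
  rw [← heq]
  exact mul_pos hx1 hxρ

lemma exists_left_slope (f : Polynomial ℝ) {b ρ : ℝ} (hbρ : b < ρ) (h0 : f.eval ρ = 0)
    (hd : (derivative f).eval ρ ≠ 0) :
    ∃ x ∈ Set.Ioo b ρ, f.eval x * (derivative f).eval ρ < 0 := by
  have hs := hasDerivAt_iff_tendsto_slope.mp (f.hasDerivAt ρ)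
  have hs' : Filter.Tendsto (slope (fun x => f.eval x) ρ) (nhdsWithin ρ (Set.Iio ρ))
      (nhds ((derivative f).eval ρ)) :=
    hs.mono_left (nhdsWithin_mono ρ (fun x hx => ne_of_lt hx))
  have hpos : 0 < (derivative f).eval ρ * (derivative f).eval ρ := mul_self_pos.mpr hd
  have hopen : IsOpen {y : ℝ | 0 < y * (derivative f).eval ρ} :=
    isOpen_lt continuous_const (continuous_id.mul continuous_const)
  have hev : ∀ᶠ x in nhdsWithin ρ (Set.Iio ρ),
      0 < slope (fun x => f.eval x) ρ x * (derivative f).eval ρ :=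
    hs'.eventually (p := fun y => 0 < y * (derivative f).eval ρ)
      (Filter.eventually_of_mem (hopen.mem_nhds hpos) (fun y hy => hy))
  have hmem : Set.Ioo b ρ ∈ nhdsWithin ρ (Set.Iio ρ) := Ioo_mem_nhdsLT_of_mem ⟨hbρ, le_refl ρ⟩
  obtain ⟨x, hx1, hx2⟩ := (hev.and (Filter.eventually_of_mem hmem (fun x hx => hx))).exists
  refine ⟨x, hx2, ?_⟩
  have hxρ : x - ρ < 0 := sub_neg.mpr hx2.2
  have hslope : slope (fun x => f.eval x) ρ x = f.eval x / (x - ρ) := by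
    rw [slope_def_field]; rw [h0]; ring
  rw [hslope] at hx1
  have heq : f.eval x / (x - ρ) * (derivative f).eval ρ * (x - ρ)
      = f.eval x * (derivative f).eval ρ := by
    rw [div_mul_eq_mul_div, div_mul_cancel₀ _ hxρ.ne]
  rw [← heq]
  exact mul_neg_of_pos_of_neg hx1 hxρ

lemma real_roots_card (q : Polynomial ℝ) (hq : q ≠ 0)
    (hreal : ∀ z : ℂ, (q.map (algebraMap ℝ ℂ)).eval z = 0 → ∃ rr : ℝ, (rr:ℂ) = z) :
    Multiset.card q.roots = q.natDegree := by
  classical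
  have hmapne : q.map (algebraMap ℝ ℂ) ≠ 0 :=
    (Polynomial.map_ne_zero_iff (algebraMap ℝ ℂ).injective).mpr hq
  have hsplit : (q.map (algebraMap ℝ ℂ)).Splits := IsAlgClosed.splits _
  have hcardC : q.natDegree = Multiset.card (q.map (algebraMap ℝ ℂ)).roots :=
    ((natDegree_map (algebraMap ℝ ℂ)).symm.trans hsplit.natDegree_eq_card_roots)
  have hmeq : (q.roots.map (fun rr : ℝ => (rr:ℂ))) = (q.map (algebraMap ℝ ℂ)).roots := by
    apply Multiset.ext.mpr
    intro z
    by_cases hz : ∃ rr : ℝ, (rr:ℂ) = z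
    · obtain ⟨rr, rfl⟩ := hz
      rw [Multiset.count_map_eq_count' _ _ Complex.ofReal_injective]
      rw [Polynomial.count_roots, Polynomial.count_roots]
      have : (rr : ℂ) = algebraMap ℝ ℂ rr := rfl
      rw [this, Polynomial.eq_rootMultiplicity_map (algebraMap ℝ ℂ).injective]
    · push_neg at hz
      rw [Multiset.count_eq_zero.mpr, Multiset.count_eq_zero.mpr]
      · intro hmem
        have := Polynomial.isRoot_of_mem_roots hmem
        obtain ⟨rr, hrr⟩ := hreal z this
        exact hz rr hrr
      · intro hmem
        obtain ⟨rr, _, hrr⟩ := Multiset.mem_map.mp hmem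
        exact hz rr hrr
  rw [← hmeq] at hcardC
  rw [Multiset.card_map] at hcardC
  exact hcardC.symm

lemma count_finset_sum {ι : Type*} (s : Finset ι) (g : ι → Multiset ℝ) (b : ℝ) :
    Multiset.count b (∑ j ∈ s, g j) = ∑ j ∈ s, Multiset.count b (g j) := by
  classical
  induction s using Finset.induction_on with
  | empty => simp
  | insert _ _ hx ih => rw [Finset.sum_insert hx, Finset.sum_insert hx, Multiset.count_add, ih]

lemma multiset_map_prod_sum {ι : Type*} (s : Finset ι) (g : ι → Multiset ℝ)
    (f : ℝ → Polynomial ℝ) :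
    (((∑ j ∈ s, g j).map f)).prod = ∏ j ∈ s, ((g j).map f).prod := by
  classical
  induction s using Finset.induction_on with
  | empty => simp
  | insert _ _ hx ih =>
    rw [Finset.sum_insert hx, Finset.prod_insert hx, Multiset.map_add, Multiset.prod_add, ih]

end BezoutAux

set_option maxHeartbeats 1000000 in
open BezoutAux in
/-- Converse in the general (multiple-root) case: if the Bézoutian form of a monic
hyperbolic `p` and a real `q` of degree `m-1` dominates `c Σ |p̂ₖ(z)|²`, then `q` is
hyperbolic with positive leading coefficient and separates `p`. -/
theorem bezout_lower_bound_implies_separation (t m : ℕ) (lam : Fin (t + 1) → ℝ)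
    (hlam : StrictMono lam)
    (r : Fin (t + 1) → ℕ) (hr : ∀ j, 1 ≤ r j) (hm : m = ∑ j, r j)
    (p : Polynomial ℝ) (hp : p = ∏ j, (X - C (lam j)) ^ (r j))
    (Lam : Fin m → ℝ) (hLam : p = ∏ j, (X - C (Lam j)))
    (q : Polynomial ℝ) (hqdeg : q.natDegree = m - 1)
    (h : Fin m → Fin m → ℝ)
    (hh : ∀ x y : ℝ,
      (x - y) * ∑ i : Fin m, ∑ j : Fin m, h i j * x ^ (i : ℕ) * y ^ (j : ℕ)
        = p.eval x * q.eval y - p.eval y * q.eval x)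
    (c : ℝ) (hc : 0 < c)
    (hineq : ∀ z : Fin m → ℂ,
      c * ∑ k : Fin m,
          ‖∑ i : Fin m,
              (((∏ j ∈ Finset.univ.erase k, (X - C (Lam j))).coeff i : ℝ) : ℂ) * z i‖ ^ 2
        ≤ (∑ i : Fin m, ∑ j : Fin m, (h i j : ℂ) * z i * (starRingEnd ℂ) (z j)).re) :
    ∃ c' : ℝ, 0 < c' ∧ ∃ mu : Fin t → ℝ,
      (∀ j : Fin t, lam j.castSucc < mu j ∧ mu j < lam j.succ) ∧
      q = C c' * (∏ j, (X - C (lam j)) ^ (r j - 1)) * ∏ j, (X - C (mu j)) := by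
  classical
  have htm : t + 1 ≤ m := by
    rw [hm]
    calc t + 1 = ∑ _j : Fin (t+1), 1 := by simp
    _ ≤ ∑ j, r j := Finset.sum_le_sum (fun j _ => hr j)
  have hm1 : 1 ≤ m := le_trans (by omega) htm
  set pk : Fin m → Polynomial ℝ := fun k => ∏ j ∈ Finset.univ.erase k, (X - C (Lam j)) with hpk
  set W : Polynomial ℝ := derivative p * q - p * derivative q with hWdef
  have hpkdeg : ∀ k : Fin m, (pk k).natDegree < m := by
    intro k
    have h1 : (pk k).natDegree
        = ∑ j ∈ Finset.univ.erase k, ((X : Polynomial ℝ) - C (Lam j)).natDegree := by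
      rw [hpk]
      exact natDegree_prod _ _ (fun j _ => X_sub_C_ne_zero _)
    rw [h1]
    calc ∑ j ∈ Finset.univ.erase k, ((X : Polynomial ℝ) - C (Lam j)).natDegree
        = ∑ _j ∈ Finset.univ.erase k, 1 := by
          exact Finset.sum_congr rfl fun j _ => natDegree_X_sub_C _
      _ = (Finset.univ.erase k).card := by simp
      _ < m := by
          rw [Finset.card_erase_of_mem (Finset.mem_univ k), Finset.card_univ, Fintype.card_fin]
          omega
  -- the diagonal inequality: Wronskian lower bound
  have hdiag : ∀ x : ℝ, c * ∑ k : Fin m, ((pk k).eval x)^2 ≤ W.eval x := by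
    intro x
    have hz := hineq (fun i => (x:ℂ)^(i:ℕ))
    have hL : ∀ k : Fin m, ∑ i : Fin m, (((pk k).coeff i : ℝ) : ℂ) * (x:ℂ)^(i:ℕ)
        = (((pk k).eval x : ℝ) : ℂ) := by
      intro k
      rw [Polynomial.eval_eq_sum_range' (hpkdeg k) x]
      push_cast
      rw [Fin.sum_univ_eq_sum_range (fun i => (((pk k).coeff i : ℝ):ℂ) * (x:ℂ)^i) m]
    have hnorm : ∀ k : Fin m,
        ‖∑ i : Fin m, (((pk k).coeff i : ℝ):ℂ) * (x:ℂ)^(i:ℕ)‖^2 = ((pk k).eval x)^2 := by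
      intro k
      rw [hL k, Complex.norm_real, Real.norm_eq_abs, sq_abs]
    have hR : (∑ i : Fin m, ∑ j : Fin m, (h i j:ℂ) * (x:ℂ)^(i:ℕ)
        * (starRingEnd ℂ) ((x:ℂ)^(j:ℕ))).re = W.eval x := by
      have hcj : ∀ (j : Fin m), (starRingEnd ℂ) ((x:ℂ)^(j:ℕ)) = (x:ℂ)^(j:ℕ) := by
        intro j; rw [map_pow, Complex.conj_ofReal]
      simp only [hcj]
      have : (∑ i : Fin m, ∑ j : Fin m, (h i j:ℂ) * (x:ℂ)^(i:ℕ) * (x:ℂ)^(j:ℕ))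
          = ((∑ i : Fin m, ∑ j : Fin m, h i j * x^(i:ℕ) * x^(j:ℕ) : ℝ) : ℂ) := by
        push_cast; rfl
      rw [this, Complex.ofReal_re, diag_eq_wronskian m p q h hh x]
    have hLL : c * ∑ k : Fin m, ((pk k).eval x)^2
        = c * ∑ k : Fin m, ‖∑ i : Fin m, (((pk k).coeff i : ℝ):ℂ) * (x:ℂ)^(i:ℕ)‖^2 := by
      congr 1
      exact Finset.sum_congr rfl fun k _ => (hnorm k).symm
    rw [hLL]
    rw [hR] at hz
    exact hz
  have hW0 : ∀ x : ℝ, 0 ≤ W.eval x := by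
    intro x
    have h1 := hdiag x
    have h2 : 0 ≤ c * ∑ k : Fin m, ((pk k).eval x)^2 :=
      mul_nonneg hc.le (Finset.sum_nonneg fun k _ => sq_nonneg _)
    linarith
  have hWpos : ∀ x : ℝ, p.eval x ≠ 0 → 0 < W.eval x := by
    intro x hx
    have hpk0 : (pk ⟨0, hm1⟩).eval x ≠ 0 := by
      rw [hpk]
      simp only [eval_prod, eval_sub, eval_X, eval_C]
      apply Finset.prod_ne_zero_iff.mpr
      intro j _ h0
      apply hx
      rw [hLam, eval_prod]
      apply Finset.prod_eq_zero (Finset.mem_univ j)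
      simp only [eval_sub, eval_X, eval_C]
      exact h0
    have h1 : 0 < c * ((pk ⟨0, hm1⟩).eval x)^2 := by positivity
    have h2 : ((pk ⟨0, hm1⟩).eval x)^2 ≤ ∑ k : Fin m, ((pk k).eval x)^2 :=
      Finset.single_le_sum (f := fun k : Fin m => ((pk k).eval x)^2)
        (fun i _ => sq_nonneg _) (Finset.mem_univ _)
    have h3 := hdiag x
    nlinarith
  have hpevalpos : ∀ x : ℝ, lam (Fin.last t) < x → 0 < p.eval x := by
    intro x hx
    rw [hp, eval_prod]
    apply Finset.prod_pos
    intro j _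
    simp only [eval_pow, eval_sub, eval_X, eval_C]
    apply pow_pos
    have : lam j ≤ lam (Fin.last t) := hlam.monotone (Fin.le_last j)
    linarith
  have hq0 : q ≠ 0 := by
    intro h0
    have hWz : W = 0 := by rw [hWdef, h0]; simp
    have h1 := hWpos (lam (Fin.last t) + 1) (hpevalpos _ (by linarith)).ne'
    rw [hWz] at h1
    simp at h1
  have hroots_real : ∀ z : ℂ, (q.map (algebraMap ℝ ℂ)).eval z = 0 → ∃ rr : ℝ, (rr:ℂ) = z := by
    intro z hz
    by_contra hnr
    push_neg at hnr
    have hQzbar : (q.map (algebraMap ℝ ℂ)).eval ((starRingEnd ℂ) z) = 0 := by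
      have hcomm : (q.map (algebraMap ℝ ℂ)).eval ((starRingEnd ℂ) z)
          = (starRingEnd ℂ) ((q.map (algebraMap ℝ ℂ)).eval z) := by
        rw [eval_map, eval_map, Polynomial.hom_eval₂]
        congr 1
        apply RingHom.ext
        intro rr
        simp [RingHom.comp_apply, Complex.conj_ofReal]
      rw [hcomm, hz, map_zero]
    have hcid := bezout_complex m p q h hh z ((starRingEnd ℂ) z)
    rw [hz, hQzbar] at hcid
    simp only [mul_zero, zero_mul, sub_zero] at hcid
    have hzc : z - (starRingEnd ℂ) z ≠ 0 := by
      intro h0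
      apply hnr z.re
      have him : z.im = 0 := by
        have := congrArg Complex.im h0
        simp [Complex.sub_im, Complex.conj_im] at this
        exact this
      apply Complex.ext <;> simp [him]
    have hS0 : ∑ i : Fin m, ∑ j : Fin m, (h i j:ℂ) * z^(i:ℕ) * ((starRingEnd ℂ) z)^(j:ℕ) = 0 := by
      rcases mul_eq_zero.mp hcid with h0 | h0
      · exact absurd h0 hzc
      · exact h0
    have hz2 := hineq (fun i => z^(i:ℕ))
    have hconj : ∀ j : Fin m, (starRingEnd ℂ) (z^(j:ℕ)) = ((starRingEnd ℂ) z)^(j:ℕ) :=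
      fun j => map_pow _ _ _
    simp only [hconj] at hz2
    rw [hS0] at hz2
    simp only [Complex.zero_re] at hz2
    have hsumnn : 0 ≤ ∑ k : Fin m, ‖∑ i : Fin m, (((pk k).coeff i : ℝ):ℂ) * z^(i:ℕ)‖^2 :=
      Finset.sum_nonneg fun k _ => sq_nonneg _
    have hsum0 : ∑ k : Fin m, ‖∑ i : Fin m, (((pk k).coeff i : ℝ):ℂ) * z^(i:ℕ)‖^2 = 0 := by
      nlinarith
    have hall := (Finset.sum_eq_zero_iff_of_nonneg (fun k _ => sq_nonneg _)).mp hsum0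
    have hk0 := hall ⟨0, hm1⟩ (Finset.mem_univ _)
    rw [sq_eq_zero_iff, norm_eq_zero] at hk0
    have hevpk : ∑ i : Fin m, (((pk ⟨0,hm1⟩).coeff i : ℝ):ℂ) * z^(i:ℕ)
        = ((pk ⟨0,hm1⟩).map (algebraMap ℝ ℂ)).eval z := by
      have hdegk : ((pk ⟨0,hm1⟩).map (algebraMap ℝ ℂ)).natDegree < m :=
        lt_of_le_of_lt natDegree_map_le (hpkdeg _)
      rw [Polynomial.eval_eq_sum_range' hdegk z]
      rw [← Fin.sum_univ_eq_sum_range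
        (fun i => ((pk ⟨0,hm1⟩).map (algebraMap ℝ ℂ)).coeff i * z^i) m]
      apply Finset.sum_congr rfl
      intro i _
      rw [coeff_map]
      norm_num
    rw [hevpk] at hk0
    have hmapeq : ((pk ⟨0,hm1⟩).map (algebraMap ℝ ℂ))
        = ∏ l ∈ Finset.univ.erase (⟨0,hm1⟩ : Fin m), (X - C ((Lam l : ℝ):ℂ)) := by
      rw [hpk, Polynomial.map_prod]
      apply Finset.prod_congr rfl
      intro l _
      rw [Polynomial.map_sub, map_X, map_C]
      norm_num
    rw [hmapeq, eval_prod] at hk0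
    obtain ⟨l, -, hl⟩ := Finset.prod_eq_zero_iff.mp hk0
    simp only [eval_sub, eval_X, eval_C] at hl
    exact hnr (Lam l) (sub_eq_zero.mp hl).symm
  -- leading coefficient
  set a := q.leadingCoeff with hadef
  have ha0 : a ≠ 0 := leadingCoeff_ne_zero.mpr hq0
  -- case m = 1
  rcases eq_or_lt_of_le hm1 with hm1' | hm2
  · -- m = 1
    have ht0 : t = 0 := by omega
    subst ht0
    have hlast : Fin.last 0 = (0 : Fin 1) := rfl
    have hr0 : r 0 = m := by rw [hm, Fin.sum_univ_one]
    have hqC : q = C (q.coeff 0) := Polynomial.eq_C_of_natDegree_le_zero (by rw [hqdeg]; omega)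
    refine ⟨q.coeff 0, ?_, fun _ => 0, fun j => absurd j.isLt (by omega), ?_⟩
    · have hx0 := hWpos (lam 0 + 1) (hpevalpos _ (by rw [hlast]; linarith)).ne'
      have hp1 : p = X - C (lam 0) := by
        rw [hp, Fin.prod_univ_one, hr0, ← hm1', pow_one]
      have hWev : W.eval (lam 0 + 1) = q.coeff 0 := by
        rw [hWdef, hp1]
        conv_lhs => rw [hqC]
        simp
      rwa [hWev] at hx0
    · rw [Fin.prod_univ_one, hr0, ← hm1']
      simp only [Nat.sub_self, pow_zero, mul_one]
      rw [Finset.univ_eq_empty, Finset.prod_empty, mul_one]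
      exact hqC
  · -- m ≥ 2
    have hqdegpos : 0 < q.natDegree := by rw [hqdeg]; omega
    have hqdegree : 0 < q.degree := natDegree_pos_iff_degree_pos.mp hqdegpos
    have hpmonic : p.Monic := by
      rw [hLam]; exact monic_prod_of_monic _ _ (fun k _ => monic_X_sub_C _)
    have hpdeg : p.natDegree = m := by
      rw [hLam, natDegree_prod _ _ (fun k _ => X_sub_C_ne_zero (Lam k))]
      simp [natDegree_X_sub_C]
    -- degree facts for derivatives
    have hp'deg : (derivative p).natDegree = m - 1 := by
      apply le_antisymm
      · exact le_trans (natDegree_derivative_le p) (by rw [hpdeg])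
      · apply le_natDegree_of_ne_zero
        rw [coeff_derivative]
        have hcoef : p.coeff (m - 1 + 1) = 1 := by
          rw [show m - 1 + 1 = m by omega]
          have := hpmonic.coeff_natDegree
          rwa [hpdeg] at this
        rw [hcoef, one_mul]
        positivity
    have hp'lead : (derivative p).leadingCoeff = (m : ℝ) := by
      rw [leadingCoeff, hp'deg, coeff_derivative]
      have hcoef : p.coeff (m - 1 + 1) = 1 := by
        rw [show m - 1 + 1 = m by omega]
        have := hpmonic.coeff_natDegree
        rwa [hpdeg] at this
      rw [hcoef, one_mul]
      have : ((m - 1 : ℕ) : ℝ) = (m : ℝ) - 1 := by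
        push_cast [Nat.cast_sub hm1]
        ring
      rw [this]
      ring
    have hq'deg : (derivative q).natDegree = m - 2 := by
      apply le_antisymm
      · exact le_trans (natDegree_derivative_le q) (by rw [hqdeg]; omega)
      · apply le_natDegree_of_ne_zero
        rw [coeff_derivative]
        have hcoef : q.coeff (m - 2 + 1) = a := by
          rw [show m - 2 + 1 = m - 1 by omega]
          rw [hadef, leadingCoeff, hqdeg]
        rw [hcoef]
        intro hcon
        rcases mul_eq_zero.mp hcon with h0 | h0
        · exact ha0 h0
        · have : ((m - 2 : ℕ) : ℝ) + 1 > 0 := by positivity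
          linarith
    have hq'lead : (derivative q).leadingCoeff = a * ((m : ℝ) - 1) := by
      rw [leadingCoeff, hq'deg, coeff_derivative]
      have hcoef : q.coeff (m - 2 + 1) = a := by
        rw [show m - 2 + 1 = m - 1 by omega]
        rw [hadef, leadingCoeff, hqdeg]
      rw [hcoef]
      have : ((m - 2 : ℕ) : ℝ) = (m : ℝ) - 2 := by
        push_cast [Nat.cast_sub (by omega : 2 ≤ m)]
        ring
      rw [this]
      ring
    have hWcoeff : W.coeff (2*m - 2) = a := by
      rw [hWdef, coeff_sub]
      have h1 : (derivative p * q).coeff (2*m-2) = (m:ℝ) * a := by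
        have hcm := coeff_mul_degree_add_degree (derivative p) q
        rw [hp'deg, hqdeg, hp'lead, ← hadef] at hcm
        rw [show 2*m-2 = (m-1)+(m-1) by omega, hcm]
      have h2 : (p * derivative q).coeff (2*m-2) = a * ((m:ℝ) - 1) := by
        have hcm := coeff_mul_degree_add_degree p (derivative q)
        rw [hpdeg, hq'deg, hpmonic.leadingCoeff, hq'lead, one_mul] at hcm
        rw [show 2*m-2 = m+(m-2) by omega, hcm]
      rw [h1, h2]
      ring
    have hWdegle : W.natDegree ≤ 2*m - 2 := by
      rw [hWdef]
      apply le_trans (natDegree_sub_le _ _)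
      apply max_le
      · exact le_trans (natDegree_mul_le) (by rw [hp'deg, hqdeg]; omega)
      · apply le_trans (natDegree_mul_le)
        have := natDegree_derivative_le q
        rw [hqdeg] at this
        omega
    have hWne : W ≠ 0 := by
      intro h0
      rw [h0, coeff_zero] at hWcoeff
      exact ha0 hWcoeff.symm
    have hWdeg : W.natDegree = 2*m - 2 :=
      le_antisymm hWdegle (le_natDegree_of_ne_zero (by rw [hWcoeff]; exact ha0))
    have hWlead : W.leadingCoeff = a := by rw [leadingCoeff, hWdeg, hWcoeff]
    have hapos : 0 < a := by
      rcases lt_or_ge 0 a with hgood | hbad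
      · exact hgood
      exfalso
      have hdegpos : 0 < W.degree := by
        rw [degree_eq_natDegree hWne, hWdeg]
        exact_mod_cast (by omega : 0 < 2*m-2)
      have htb := Polynomial.tendsto_atBot_of_leadingCoeff_nonpos W hdegpos (hWlead ▸ hbad)
      obtain ⟨x, hx⟩ := (htb.eventually (Filter.eventually_lt_atBot 0)).exists
      exact absurd (hW0 x) (not_le.mpr hx)
    -- multiplicity bound at each lam j
    have hmult : ∀ j : Fin (t+1), q.rootMultiplicity (lam j) ≤ r j - 1 := by
      intro j
      by_contra hgt
      push_neg at hgt
      have hdvdq : (X - C (lam j))^(r j) ∣ q := by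
        refine dvd_trans (pow_dvd_pow _ ?_) (q.pow_rootMultiplicity_dvd (lam j))
        omega
      have hdvdp : (X - C (lam j))^(r j) ∣ p := by
        rw [hp]; exact Finset.dvd_prod_of_mem _ (Finset.mem_univ j)
      have hdvdW : (X - C (lam j))^(2 * r j - 1) ∣ W := by
        rw [hWdef]
        apply dvd_sub
        · have h1 := pow_sub_one_dvd_derivative p (lam j) (r j) hdvdp
          have h2 := mul_dvd_mul h1 hdvdq
          rwa [← pow_add, show r j - 1 + r j = 2 * r j - 1 by have := hr j; omega] at h2
        · have h1 := pow_sub_one_dvd_derivative q (lam j) (r j) hdvdq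
          have h2 := mul_dvd_mul hdvdp h1
          rwa [← pow_add, show r j + (r j - 1) = 2 * r j - 1 by have := hr j; omega] at h2
      obtain ⟨V, hV⟩ := hdvdW
      have hpj : p.eval (lam j) = 0 := by
        rw [hp, eval_prod]
        apply Finset.prod_eq_zero (Finset.mem_univ j)
        simp only [eval_pow, eval_sub, eval_X, eval_C, sub_self]
        exact zero_pow (by have := hr j; omega)
      obtain ⟨k0, -, hk0⟩ : ∃ k0 ∈ Finset.univ, lam j - Lam k0 = 0 := by
        rw [hLam, eval_prod] at hpj
        have := Finset.prod_eq_zero_iff.mp hpj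
        simpa only [eval_sub, eval_X, eval_C] using this
      have hk0' : Lam k0 = lam j := by linarith
      set ψ : Polynomial ℝ := ∏ l ∈ Finset.univ.erase j, (X - C (lam l))^(r l) with hψ
      have hpψ : p = (X - C (lam j))^(r j) * ψ := by
        rw [hp, hψ, ← Finset.mul_prod_erase _ _ (Finset.mem_univ j)]
      have hψne : ψ.eval (lam j) ≠ 0 := by
        rw [hψ, eval_prod]
        apply Finset.prod_ne_zero_iff.mpr
        intro l hl
        simp only [eval_pow, eval_sub, eval_X, eval_C]
        apply pow_ne_zero
        have hlj : l ≠ j := (Finset.mem_erase.mp hl).1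
        have := hlam.injective.ne hlj
        intro h0
        exact this (by linarith)
      have hψ0 : 0 < (ψ.eval (lam j))^2 := by positivity
      have key : ∀ x : ℝ, x ≠ lam j → c * (ψ.eval x)^2 ≤ (x - lam j) * V.eval x := by
        intro x hx
        have hd := hdiag x
        have hterm : ((pk k0).eval x)^2 ≤ ∑ k : Fin m, ((pk k).eval x)^2 :=
          Finset.single_le_sum (f := fun k : Fin m => ((pk k).eval x)^2)
            (fun i _ => sq_nonneg _) (Finset.mem_univ _)
        have h1 : c * ((pk k0).eval x)^2 ≤ W.eval x := by nlinarith
        have h2 : (pk k0).eval x * (x - lam j) = p.eval x := by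
          have hmulp : (pk k0) * (X - C (Lam k0)) = p := by
            rw [hpk, hLam]; exact Finset.prod_erase_mul _ _ (Finset.mem_univ k0)
          have := congrArg (eval x) hmulp
          rw [eval_mul, eval_sub, eval_X, eval_C, hk0'] at this
          exact this
        have hsq : 0 < (x - lam j)^2 :=
          lt_of_le_of_ne (sq_nonneg _) (Ne.symm (pow_ne_zero 2 (sub_ne_zero.mpr hx)))
        have h3 : c * ((pk k0).eval x)^2 * (x - lam j)^2 ≤ W.eval x * (x - lam j)^2 :=
          mul_le_mul_of_nonneg_right h1 (sq_nonneg _)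
        have hL : c * ((pk k0).eval x)^2 * (x - lam j)^2
            = c * (ψ.eval x)^2 * ((x - lam j)^2)^(r j) := by
          have hpx : p.eval x = (x - lam j)^(r j) * ψ.eval x := by
            rw [hpψ]; simp [eval_mul, eval_pow, eval_sub, eval_X, eval_C]
          have hsq2 : ((pk k0).eval x)^2 * (x - lam j)^2 = (p.eval x)^2 := by
            rw [← h2]; ring
          calc c * ((pk k0).eval x)^2 * (x-lam j)^2
              = c * (((pk k0).eval x)^2 * (x-lam j)^2) := by ring
            _ = c * (p.eval x)^2 := by rw [hsq2]
            _ = c * (ψ.eval x)^2 * ((x - lam j)^2)^(r j) := by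
                rw [hpx, mul_pow, ← pow_mul, ← pow_mul]
                ring_nf
        have hR : W.eval x * (x - lam j)^2
            = ((x - lam j) * V.eval x) * ((x - lam j)^2)^(r j) := by
          rw [hV]
          simp only [eval_mul, eval_pow, eval_sub, eval_X, eval_C]
          have e2 : (x - lam j)^(2*r j - 1) * (x - lam j)^2 = (x - lam j)^(2*r j + 1) := by
            rw [← pow_add]; congr 1; have := hr j; omega
          have hstep : (x - lam j)^(2*r j - 1) * V.eval x * (x - lam j)^2
              = (x - lam j) * V.eval x * (x - lam j)^(2 * r j) := by
            calc (x - lam j)^(2*r j - 1) * V.eval x * (x - lam j)^2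
                = V.eval x * ((x - lam j)^(2*r j - 1) * (x - lam j)^2) := by ring
              _ = V.eval x * (x - lam j)^(2*r j + 1) := by rw [e2]
              _ = (x - lam j) * V.eval x * (x - lam j)^(2 * r j) := by
                  rw [show 2*r j + 1 = 1 + 2*r j by omega, pow_add, pow_one]; ring
          rw [hstep, pow_mul]
        rw [hL, hR] at h3
        have hposp : 0 < ((x - lam j)^2)^(r j) := pow_pos hsq _
        exact le_of_mul_le_mul_right h3 hposp
      have hlim1 : Filter.Tendsto (fun x => c * (ψ.eval x)^2)
          (nhdsWithin (lam j) {lam j}ᶜ) (nhds (c * (ψ.eval (lam j))^2)) := by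
        apply Filter.Tendsto.mono_left _ nhdsWithin_le_nhds
        exact Continuous.tendsto (continuous_const.mul ((Polynomial.continuous ψ).pow 2)) _
      have hlim2 : Filter.Tendsto (fun x => (x - lam j) * V.eval x)
          (nhdsWithin (lam j) {lam j}ᶜ) (nhds 0) := by
        have hcont : Filter.Tendsto (fun x => (x - lam j) * V.eval x)
            (nhds (lam j)) (nhds ((lam j - lam j) * V.eval (lam j))) :=
          Continuous.tendsto ((continuous_id.sub continuous_const).mul (Polynomial.continuous V)) _
        rw [sub_self, zero_mul] at hcont
        exact hcont.mono_left nhdsWithin_le_nhds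
      have hle : c * (ψ.eval (lam j))^2 ≤ 0 := by
        apply le_of_tendsto_of_tendsto hlim1 hlim2
        filter_upwards [self_mem_nhdsWithin] with x hx
        exact key x hx
      nlinarith
    -- derivative sign at roots off the lam's
    have hder : ∀ ρ : ℝ, q.eval ρ = 0 → p.eval ρ ≠ 0 →
        p.eval ρ * (derivative q).eval ρ < 0 := by
      intro ρ h1 h2
      have h3 := hWpos ρ h2
      have hWev : W.eval ρ = - (p.eval ρ * (derivative q).eval ρ) := by
        rw [hWdef]; simp [eval_sub, eval_mul, h1]
      rw [hWev] at h3
      linarith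
    -- no roots above lam last
    have hub : ∀ ρ ∈ q.roots, ρ ≤ lam (Fin.last t) := by
      by_contra hex
      push_neg at hex
      obtain ⟨ρ0, hρ0mem, hρ0gt⟩ := hex
      set B := q.roots.toFinset.filter (fun x => lam (Fin.last t) < x) with hB
      have hBmem : ∀ x : ℝ, x ∈ B ↔ (x ∈ q.roots ∧ lam (Fin.last t) < x) := by
        intro x; rw [hB, Finset.mem_filter, Multiset.mem_toFinset]
      have hBne : B.Nonempty := ⟨ρ0, (hBmem ρ0).mpr ⟨hρ0mem, hρ0gt⟩⟩
      set ρ := B.max' hBne with hρ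
      obtain ⟨hρroot, hρgt⟩ := (hBmem ρ).mp (B.max'_mem hBne)
      have hρ0' : q.eval ρ = 0 := isRoot_of_mem_roots hρroot
      have hppos : 0 < p.eval ρ := hpevalpos ρ hρgt
      have hqd := hder ρ hρ0' hppos.ne'
      have hq'ne : (derivative q).eval ρ ≠ 0 := by
        intro h0; rw [h0, mul_zero] at hqd; exact lt_irrefl _ hqd
      obtain ⟨x1, hx1mem, hx1⟩ :=
        exists_right_slope q (show ρ < ρ+1 by linarith) hρ0' hq'ne
      have hq'neg : (derivative q).eval ρ < 0 := by nlinarith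
      have hqx1neg : q.eval x1 < 0 := by nlinarith
      have htop : Filter.Tendsto (fun x => q.eval x) Filter.atTop Filter.atTop :=
        q.tendsto_atTop_of_leadingCoeff_nonneg hqdegree hapos.le
      obtain ⟨x2, hx2pos, hx2gt⟩ :=
        ((htop.eventually (Filter.eventually_gt_atTop 0)).and
          (Filter.eventually_gt_atTop x1)).exists
      obtain ⟨z, hzmem, hz0⟩ := exists_root_of_mul_neg q hx2gt.le (by nlinarith)
      have hzroot : z ∈ q.roots := (mem_roots hq0).mpr hz0
      have hzB : z ∈ B := by
        apply (hBmem z).mpr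
        refine ⟨hzroot, ?_⟩
        have := hzmem.1; have := hx1mem.1
        linarith
      have hle := B.le_max' z hzB
      have := hzmem.1; have := hx1mem.1
      rw [← hρ] at hle
      linarith
    -- no roots below lam 0
    have hε2 : ((-1:ℝ)^m) * ((-1:ℝ)^m) = 1 := by
      rw [← pow_add]; exact Even.neg_one_pow ⟨m, rfl⟩
    have hlb : ∀ ρ ∈ q.roots, lam 0 ≤ ρ := by
      by_contra hex
      push_neg at hex
      obtain ⟨ρ0, hρ0mem, hρ0lt⟩ := hex
      set B := q.roots.toFinset.filter (fun x => x < lam 0) with hB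
      have hBmem : ∀ x : ℝ, x ∈ B ↔ (x ∈ q.roots ∧ x < lam 0) := by
        intro x; rw [hB, Finset.mem_filter, Multiset.mem_toFinset]
      have hBne : B.Nonempty := ⟨ρ0, (hBmem ρ0).mpr ⟨hρ0mem, hρ0lt⟩⟩
      set ρ := B.min' hBne with hρ
      obtain ⟨hρroot, hρlt⟩ := (hBmem ρ).mp (B.min'_mem hBne)
      have hρ0' : q.eval ρ = 0 := isRoot_of_mem_roots hρroot
      have hppow : 0 < (-1:ℝ)^m * p.eval ρ := by
        rw [hp, eval_prod]
        have hsign : ((-1:ℝ))^m = ∏ j, (-1:ℝ)^(r j) := by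
          rw [hm, ← Finset.prod_pow_eq_pow_sum]
        rw [hsign, ← Finset.prod_mul_distrib]
        apply Finset.prod_pos
        intro j _
        simp only [eval_pow, eval_sub, eval_X, eval_C]
        rw [← mul_pow]
        have he : (-1:ℝ) * (ρ - lam j) = lam j - ρ := by ring
        rw [he]
        apply pow_pos
        have : lam 0 ≤ lam j := hlam.monotone (Fin.zero_le j)
        linarith
      have hpne0 : p.eval ρ ≠ 0 := by
        intro h0; rw [h0, mul_zero] at hppow; exact lt_irrefl _ hppow
      have hqd := hder ρ hρ0' hpne0
      have hq'ne : (derivative q).eval ρ ≠ 0 := by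
        intro h0; rw [h0, mul_zero] at hqd; exact lt_irrefl _ hqd
      have hq'sign : (-1:ℝ)^m * (derivative q).eval ρ < 0 := by
        nlinarith [mul_neg_of_pos_of_neg hppow hqd, sq_nonneg (p.eval ρ),
          mul_self_pos.mpr hpne0]
      obtain ⟨x1, hx1mem, hx1⟩ :=
        exists_left_slope q (show ρ - 1 < ρ by linarith) hρ0' hq'ne
      have hqx1 : 0 < (-1:ℝ)^m * q.eval x1 := by
        nlinarith [mul_pos_of_neg_of_neg hx1 hq'sign, mul_self_pos.mpr hq'ne]
      -- behavior at -infinity via composition with -X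
      set qc : Polynomial ℝ := (C ((-1:ℝ)^m)) * (q.comp (-X)) with hqc
      have hqceval : ∀ y : ℝ, qc.eval y = (-1:ℝ)^m * q.eval (-y) := by
        intro y; rw [hqc]; simp [eval_comp]
      have hεne : ((-1:ℝ)^m) ≠ 0 := by
        intro h0; rw [h0, zero_mul] at hε2; exact one_ne_zero hε2.symm
      have hnXdeg : ((-X : Polynomial ℝ)).natDegree = 1 := by
        rw [natDegree_neg, natDegree_X]
      have hqcdeg : qc.natDegree = m - 1 := by
        rw [hqc, natDegree_C_mul hεne, natDegree_comp, hnXdeg, hqdeg, mul_one]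
      have hqclead : qc.leadingCoeff = -a := by
        rw [hqc, leadingCoeff_mul, leadingCoeff_C]
        rw [leadingCoeff_comp (by rw [hnXdeg]; omega), leadingCoeff_neg, leadingCoeff_X]
        rw [hqdeg, ← hadef]
        have : ((-1:ℝ))^m * (a * (-1)^(m-1)) = a * ((-1)^(m + (m-1))) := by
          rw [pow_add]; ring
        rw [this, Odd.neg_one_pow ⟨m-1, by omega⟩]
        ring
      have hqcdegree : 0 < qc.degree := by
        apply natDegree_pos_iff_degree_pos.mp
        rw [hqcdeg]; omega
      have hbot := Polynomial.tendsto_atBot_of_leadingCoeff_nonpos qc hqcdegree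
        (by rw [hqclead]; linarith)
      obtain ⟨y, hy1, hy2⟩ := ((hbot.eventually (Filter.eventually_lt_atBot 0)).and
        (Filter.eventually_gt_atTop (-x1))).exists
      set x2 := -y with hx2def
      have hqx2 : (-1:ℝ)^m * q.eval x2 < 0 := by
        have := hqceval y
        rw [hx2def]
        rw [this] at hy1
        exact hy1
      have hx2lt : x2 < x1 := by rw [hx2def]; linarith
      have hprod : q.eval x2 * q.eval x1 < 0 := by
        nlinarith [mul_neg_of_neg_of_pos hqx2 hqx1]
      obtain ⟨z, hzmem, hz0⟩ := exists_root_of_mul_neg q hx2lt.le hprod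
      have hzroot : z ∈ q.roots := (mem_roots hq0).mpr hz0
      have hzB : z ∈ B := by
        apply (hBmem z).mpr
        refine ⟨hzroot, ?_⟩
        have := hzmem.2; have := hx1mem.2
        linarith
      have hge := B.min'_le z hzB
      rw [← hρ] at hge
      have := hzmem.2; have := hx1mem.2
      linarith
    -- simple roots off the lam's
    have hsimple : ∀ ρ : ℝ, q.eval ρ = 0 → p.eval ρ ≠ 0 → q.rootMultiplicity ρ = 1 := by
      intro ρ h1 h2
      have hge : 1 ≤ q.rootMultiplicity ρ := (rootMultiplicity_pos hq0).mpr h1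
      by_contra hne
      have hge2 : 2 ≤ q.rootMultiplicity ρ := by omega
      have hdvd : (X - C ρ)^2 ∣ q :=
        dvd_trans (pow_dvd_pow _ hge2) (q.pow_rootMultiplicity_dvd ρ)
      have hdq := pow_sub_one_dvd_derivative q ρ 2 hdvd
      rw [show (2:ℕ) - 1 = 1 by omega, pow_one] at hdq
      obtain ⟨g, hg⟩ := hdq
      have hq'0 : (derivative q).eval ρ = 0 := by rw [hg]; simp
      have := hder ρ h1 h2
      rw [hq'0, mul_zero] at this
      exact lt_irrefl _ this
    -- no lam inside the open intervals
    have hnotmem : ∀ (jj : Fin t) (l : Fin (t+1)),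
        lam l ∉ Set.Ioo (lam jj.castSucc) (lam jj.succ) := by
      intro jj l hmem
      obtain ⟨h1, h2⟩ := hmem
      have hl1 : jj.castSucc < l := hlam.lt_iff_lt.mp h1
      have hl2 : l < jj.succ := hlam.lt_iff_lt.mp h2
      rw [Fin.lt_def] at hl1 hl2
      simp only [Fin.coe_castSucc, Fin.val_succ] at hl1 hl2
      omega
    have hrootlam : ∀ x : ℝ, p.eval x = 0 → ∃ l : Fin (t+1), x = lam l := by
      intro x h0
      rw [hp, eval_prod] at h0
      obtain ⟨l, -, hl⟩ := Finset.prod_eq_zero_iff.mp h0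
      simp only [eval_pow, eval_sub, eval_X, eval_C] at hl
      refine ⟨l, ?_⟩
      have := pow_eq_zero_iff (by have := hr l; omega : r l ≠ 0) |>.mp hl
      linarith
    have hpne : ∀ (jj : Fin t) (x : ℝ),
        x ∈ Set.Ioo (lam jj.castSucc) (lam jj.succ) → p.eval x ≠ 0 := by
      intro jj x hx h0
      obtain ⟨l, rfl⟩ := hrootlam x h0
      exact hnotmem jj l hx
    -- at most one root of q in each open interval
    have hone : ∀ (jj : Fin t) (ρ1 ρ2 : ℝ), ρ1 ∈ q.roots → ρ2 ∈ q.roots →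
        ρ1 ∈ Set.Ioo (lam jj.castSucc) (lam jj.succ) →
        ρ2 ∈ Set.Ioo (lam jj.castSucc) (lam jj.succ) → ρ1 = ρ2 := by
      suffices aux : ∀ (jj : Fin t) (ρ1 ρ2 : ℝ), ρ1 ∈ q.roots → ρ2 ∈ q.roots →
          ρ1 ∈ Set.Ioo (lam jj.castSucc) (lam jj.succ) →
          ρ2 ∈ Set.Ioo (lam jj.castSucc) (lam jj.succ) → ρ1 < ρ2 → False by
        intro jj ρ1 ρ2 h1 h2 h3 h4
        rcases lt_trichotomy ρ1 ρ2 with hlt | heq | hgt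
        · exact (aux jj ρ1 ρ2 h1 h2 h3 h4 hlt).elim
        · exact heq
        · exact (aux jj ρ2 ρ1 h2 h1 h4 h3 hgt).elim
      intro jj ρ1 ρ2 hq1 hq2 hio1 hio2 hlt12
      set D := q.roots.toFinset.filter (fun x => ρ1 < x ∧ x < lam jj.succ) with hD
      have hDmem : ∀ x : ℝ, x ∈ D ↔ (x ∈ q.roots ∧ ρ1 < x ∧ x < lam jj.succ) := by
        intro x; rw [hD, Finset.mem_filter, Multiset.mem_toFinset]
      have hDne : D.Nonempty := ⟨ρ2, (hDmem ρ2).mpr ⟨hq2, hlt12, hio2.2⟩⟩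
      set ρ := D.min' hDne with hρdef
      obtain ⟨hρroot, hρgt1, hρlt⟩ := (hDmem ρ).mp (D.min'_mem hDne)
      have hρio : ρ ∈ Set.Ioo (lam jj.castSucc) (lam jj.succ) :=
        ⟨lt_trans hio1.1 hρgt1, hρlt⟩
      have he1 : q.eval ρ1 = 0 := isRoot_of_mem_roots hq1
      have heρ : q.eval ρ = 0 := isRoot_of_mem_roots hρroot
      have hp1 := hpne jj ρ1 hio1
      have hpρ := hpne jj ρ hρio
      have hd1 := hder ρ1 he1 hp1
      have hdρ := hder ρ heρ hpρ
      have hd1ne : (derivative q).eval ρ1 ≠ 0 := by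
        intro h0; rw [h0, mul_zero] at hd1; exact lt_irrefl _ hd1
      have hdρne : (derivative q).eval ρ ≠ 0 := by
        intro h0; rw [h0, mul_zero] at hdρ; exact lt_irrefl _ hdρ
      have hpp : 0 < p.eval ρ1 * p.eval ρ := by
        apply sign_of_no_root p (le_of_lt hρgt1)
        intro x hx
        apply hpne jj x
        exact ⟨lt_of_lt_of_le hio1.1 hx.1, lt_of_le_of_lt hx.2 hρlt⟩
      have hdd : 0 < (derivative q).eval ρ1 * (derivative q).eval ρ := by
        nlinarith [mul_pos_of_neg_of_neg hd1 hdρ]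
      have hμ1 : ρ1 < (ρ1 + ρ) / 2 := by linarith
      have hμ2 : (ρ1 + ρ) / 2 < ρ := by linarith
      obtain ⟨x1, hx1mem, hx1⟩ := exists_right_slope q hμ1 he1 hd1ne
      obtain ⟨x2, hx2mem, hx2⟩ := exists_left_slope q hμ2 heρ hdρne
      have hx12 : x1 < x2 := lt_trans hx1mem.2 hx2mem.1
      have hprod : q.eval x1 * q.eval x2 < 0 := by
        nlinarith [mul_neg_of_pos_of_neg hx1 hx2]
      obtain ⟨z, hzmem, hz0⟩ := exists_root_of_mul_neg q hx12.le hprod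
      have hzroot : z ∈ q.roots := (mem_roots hq0).mpr hz0
      have hzD : z ∈ D := by
        apply (hDmem z).mpr
        refine ⟨hzroot, ?_, ?_⟩
        · have := hx1mem.1; have := hzmem.1; linarith
        · have := hx2mem.2; have := hzmem.2; linarith
      have hge := D.min'_le z hzD
      rw [← hρdef] at hge
      have := hzmem.2; have := hx2mem.2
      linarith
    -- location of roots off the lam's
    have hloc : ∀ ρ : ℝ, ρ ∈ q.roots → p.eval ρ ≠ 0 →
        ∃ jj : Fin t, ρ ∈ Set.Ioo (lam jj.castSucc) (lam jj.succ) := by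
      intro ρ hmem hpρ
      have h1 : lam 0 ≤ ρ := hlb ρ hmem
      have h2 : ρ ≤ lam (Fin.last t) := hub ρ hmem
      have hneq : ∀ l : Fin (t+1), ρ ≠ lam l := by
        intro l h0
        apply hpρ
        rw [hp, eval_prod]
        apply Finset.prod_eq_zero (Finset.mem_univ l)
        simp only [eval_pow, eval_sub, eval_X, eval_C, h0, sub_self]
        exact zero_pow (by have := hr l; omega)
      set E := Finset.univ.filter (fun l : Fin (t+1) => lam l < ρ) with hE
      have hEmem : ∀ l : Fin (t+1), l ∈ E ↔ lam l < ρ := by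
        intro l; rw [hE, Finset.mem_filter]; simp
      have hEne : E.Nonempty :=
        ⟨0, (hEmem 0).mpr (lt_of_le_of_ne h1 (Ne.symm (hneq 0)))⟩
      set j0 := E.max' hEne with hj0
      have hj0lt : lam j0 < ρ := (hEmem j0).mp (E.max'_mem hEne)
      have hj0ne : (j0 : ℕ) < t := by
        by_contra hcon
        have hj0last : j0 = Fin.last t := by
          apply Fin.ext; simp only [Fin.val_last]
          have := j0.isLt; omega
        rw [hj0last] at hj0lt; linarith
      refine ⟨⟨(j0 : ℕ), hj0ne⟩, ?_, ?_⟩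
      · have hcs : (⟨(j0:ℕ), hj0ne⟩ : Fin t).castSucc = j0 := by
          apply Fin.ext; simp
        rw [hcs]; exact hj0lt
      · have hj1notmem : (⟨(j0:ℕ), hj0ne⟩ : Fin t).succ ∉ E := by
          intro hmem'
          have hle := E.le_max' _ hmem'
          rw [← hj0, Fin.le_def] at hle
          simp only [Fin.val_succ] at hle
          omega
        have := not_lt.mp ((hEmem _).not.mp hj1notmem)
        exact lt_of_le_of_ne this (hneq _)
    -- counting
    have hcard : Multiset.card q.roots = m - 1 := by
      rw [real_roots_card q hq0 hroots_real, hqdeg]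
    set Rf := q.roots.toFinset with hRf
    set Ro := Rf.filter (fun ρ => p.eval ρ ≠ 0) with hRo
    set Rl := Rf.filter (fun ρ => p.eval ρ = 0) with hRl
    have hRomem : ∀ ρ : ℝ, ρ ∈ Ro ↔ (ρ ∈ q.roots ∧ p.eval ρ ≠ 0) := by
      intro ρ; rw [hRo, Finset.mem_filter, hRf, Multiset.mem_toFinset]
    have hRlmem : ∀ ρ : ℝ, ρ ∈ Rl ↔ (ρ ∈ q.roots ∧ p.eval ρ = 0) := by
      intro ρ; rw [hRl, Finset.mem_filter, hRf, Multiset.mem_toFinset]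
    have hRosub : ∀ ρ : {x // x ∈ Ro}, ρ.1 ∈ q.roots ∧ p.eval ρ.1 ≠ 0 :=
      fun ρ => (hRomem ρ.1).mp ρ.2
    let floc : {x // x ∈ Ro} → Fin t :=
      fun ρ => (hloc ρ.1 (hRosub ρ).1 (hRosub ρ).2).choose
    have hflocspec : ∀ ρ : {x // x ∈ Ro},
        ρ.1 ∈ Set.Ioo (lam (floc ρ).castSucc) (lam (floc ρ).succ) :=
      fun ρ => (hloc ρ.1 (hRosub ρ).1 (hRosub ρ).2).choose_spec
    have hfinj : Function.Injective floc := by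
      intro ρ1 ρ2 heq
      have h1 := hflocspec ρ1
      have h2 := hflocspec ρ2
      rw [heq] at h1
      exact Subtype.ext (hone (floc ρ2) ρ1.1 ρ2.1 (hRosub ρ1).1 (hRosub ρ2).1 h1 h2)
    have hRole : Ro.card ≤ t := by
      have := Fintype.card_le_of_injective floc hfinj
      rwa [Fintype.card_coe, Fintype.card_fin] at this
    have hsumtot : ∑ ρ ∈ Rf, q.roots.count ρ = m - 1 := by
      rw [Multiset.toFinset_sum_count_eq]; exact hcard
    have hsplitsum : ∑ ρ ∈ Rl, q.roots.count ρ + ∑ ρ ∈ Ro, q.roots.count ρ = m - 1 := by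
      rw [← hsumtot, hRl, hRo]
      exact Finset.sum_filter_add_sum_filter_not _ _ _
    have hAsub : ∑ ρ ∈ Rl, q.roots.count ρ
        ≤ ∑ ρ ∈ Finset.image lam Finset.univ, q.roots.count ρ := by
      apply Finset.sum_le_sum_of_subset_of_nonneg
      · intro ρ hρ
        obtain ⟨l, rfl⟩ := hrootlam ρ ((hRlmem ρ).mp hρ).2
        exact Finset.mem_image_of_mem lam (Finset.mem_univ l)
      · intro ρ _ _; exact Nat.zero_le _
    have himg : ∑ ρ ∈ Finset.image lam Finset.univ, q.roots.count ρ
        = ∑ l : Fin (t+1), q.roots.count (lam l) :=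
      Finset.sum_image (fun x _ y _ hxy => hlam.injective hxy)
    have hcnt : ∀ l : Fin (t+1), q.roots.count (lam l) = q.rootMultiplicity (lam l) :=
      fun l => count_roots q
    have hAle : ∑ l : Fin (t+1), q.roots.count (lam l) ≤ ∑ l, (r l - 1) :=
      Finset.sum_le_sum (fun l _ => by rw [hcnt l]; exact hmult l)
    have hBeq : ∑ ρ ∈ Ro, q.roots.count ρ = Ro.card := by
      rw [Finset.card_eq_sum_ones]
      apply Finset.sum_congr rfl
      intro ρ hρ
      obtain ⟨hρ1, hρ2⟩ := (hRomem ρ).mp hρ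
      rw [count_roots]
      exact hsimple ρ (isRoot_of_mem_roots hρ1) hρ2
    have hrsum : ∑ l : Fin (t+1), (r l - 1) + (t+1) = m := by
      have hstep : ∑ l : Fin (t+1), (r l - 1) + ∑ _l : Fin (t+1), 1
          = ∑ l : Fin (t+1), r l := by
        rw [← Finset.sum_add_distrib]
        exact Finset.sum_congr rfl fun l _ => by have := hr l; omega
      have hones : ∑ _l : Fin (t+1), 1 = t + 1 := by simp
      rw [← hm] at hstep
      omega
    have hAeq : ∀ l : Fin (t+1), q.roots.count (lam l) = r l - 1 := by
      have hkey : ∑ l : Fin (t+1), q.roots.count (lam l) = ∑ l, (r l - 1) := by omega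
      exact fun l => (Finset.sum_eq_sum_iff_of_le
        (fun l _ => by rw [hcnt l]; exact hmult l)).mp hkey l (Finset.mem_univ l)
    have hRocard : Ro.card = t := by omega
    have hfbij : Function.Bijective floc :=
      (Fintype.bijective_iff_injective_and_card floc).mpr
        ⟨hfinj, by rw [Fintype.card_coe, Fintype.card_fin, hRocard]⟩
    set mu : Fin t → ℝ := fun jj => ((hfbij.surjective jj).choose : {x // x ∈ Ro}).1 with hmu
    have hmuspec : ∀ jj : Fin t, mu jj ∈ Set.Ioo (lam jj.castSucc) (lam jj.succ)
        ∧ mu jj ∈ q.roots ∧ p.eval (mu jj) ≠ 0 := by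
      intro jj
      have hspec := (hfbij.surjective jj).choose_spec
      have h1 := hflocspec (hfbij.surjective jj).choose
      rw [hspec] at h1
      exact ⟨h1, (hRosub _).1, (hRosub _).2⟩
    have hmuval : ∀ ρ : {x // x ∈ Ro}, mu (floc ρ) = ρ.1 := by
      intro ρ
      have hspec := (hfbij.surjective (floc ρ)).choose_spec
      have h2 : (hfbij.surjective (floc ρ)).choose = ρ := hfinj hspec
      show ((hfbij.surjective (floc ρ)).choose : {x // x ∈ Ro}).1 = ρ.1
      rw [h2]
    have hdisj : ∀ (x : ℝ) (j1 j2 : Fin t), x ∈ Set.Ioo (lam j1.castSucc) (lam j1.succ) →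
        x ∈ Set.Ioo (lam j2.castSucc) (lam j2.succ) → j1 = j2 := by
      intro x j1 j2 h1 h2
      by_contra hne
      have hstep : ∀ (i1 i2 : Fin t), i1 < i2 →
          x ∈ Set.Ioo (lam i1.castSucc) (lam i1.succ) →
          x ∈ Set.Ioo (lam i2.castSucc) (lam i2.succ) → False := by
        intro i1 i2 hlt ha hb
        have hle : (i1.succ : Fin (t+1)) ≤ i2.castSucc := by
          rw [Fin.le_def]
          simp only [Fin.val_succ, Fin.coe_castSucc]
          rw [Fin.lt_def] at hlt
          omega
        have := hlam.monotone hle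
        have := ha.2; have := hb.1
        linarith
      rcases lt_or_gt_of_ne hne with hlt | hlt
      · exact hstep j1 j2 hlt h1 h2
      · exact hstep j2 j1 hlt h2 h1
    -- multiset identity
    set M : Multiset ℝ := (∑ l : Fin (t+1), Multiset.replicate (r l - 1) (lam l))
      + ∑ jj : Fin t, {mu jj} with hM
    have hMeq : q.roots = M := by
      apply Multiset.ext.mpr
      intro b
      rw [hM, Multiset.count_add, count_finset_sum, count_finset_sum]
      simp only [Multiset.count_replicate, Multiset.count_singleton]
      by_cases hbl : ∃ l : Fin (t+1), b = lam l
      · obtain ⟨l0, rfl⟩ := hbl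
        have h1 : ∑ l : Fin (t+1), (if lam l = lam l0 then r l - 1 else 0) = r l0 - 1 := by
          rw [Finset.sum_eq_single l0]
          · rw [if_pos rfl]
          · intro l _ hne
            exact if_neg (fun he => hne (hlam.injective he))
          · intro hni; exact absurd (Finset.mem_univ l0) hni
        have h2 : ∑ jj : Fin t, (if lam l0 = mu jj then 1 else 0) = 0 :=
          Finset.sum_eq_zero (fun jj _ => if_neg (fun he =>
            hnotmem jj l0 (by rw [he]; exact (hmuspec jj).1)))
        rw [h1, h2, add_zero, hAeq l0]
      · push_neg at hbl
        have h1 : ∑ l : Fin (t+1), (if lam l = b then r l - 1 else 0) = 0 :=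
          Finset.sum_eq_zero fun l _ => if_neg (fun he => hbl l he.symm)
        have hbp : p.eval b ≠ 0 := by
          intro h0
          obtain ⟨l, hl⟩ := hrootlam b h0
          exact hbl l hl
        by_cases hbroot : b ∈ q.roots
        · have hbRo : b ∈ Ro := (hRomem b).mpr ⟨hbroot, hbp⟩
          have h2 : ∑ jj : Fin t, (if b = mu jj then 1 else 0) = 1 := by
            rw [Finset.sum_eq_single (floc ⟨b, hbRo⟩)]
            · rw [if_pos (hmuval ⟨b, hbRo⟩).symm]
            · intro jj _ hne
              apply if_neg
              intro he
              apply hne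
              apply hdisj b _ _
              · have := hmuspec jj
                rw [← he] at this
                exact this.1
              · exact hflocspec ⟨b, hbRo⟩
            · intro hni; exact absurd (Finset.mem_univ _) hni
          rw [h1, h2, zero_add, count_roots]
          exact hsimple b (isRoot_of_mem_roots hbroot) hbp
        · have h2 : ∑ jj : Fin t, (if b = mu jj then 1 else 0) = 0 :=
            Finset.sum_eq_zero fun jj _ => if_neg (fun he =>
              hbroot (by rw [he]; exact (hmuspec jj).2.1))
          rw [h1, h2, Multiset.count_eq_zero.mpr hbroot]
    -- final assembly
    refine ⟨a, hapos, mu, fun jj => ⟨(hmuspec jj).1.1, (hmuspec jj).1.2⟩, ?_⟩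
    have hfinal := (Polynomial.C_leadingCoeff_mul_prod_multiset_X_sub_C
      (p := q) (by rw [hcard, hqdeg])).symm
    rw [hMeq, hM] at hfinal
    rw [hfinal, Multiset.map_add, Multiset.prod_add,
      multiset_map_prod_sum, multiset_map_prod_sum]
    simp only [Multiset.map_replicate, Multiset.prod_replicate, Multiset.map_singleton,
      Multiset.prod_singleton]
    rw [← hadef, mul_assoc]
end

section
/- Let p be a monic hyperbolic polynomial of degree m and let q separate p. Let H = (h_{ij}) be the Bézout matrix of p and q, and A the Sylvester (companion) matrix of p. Then H is nonnegative definite (positive semidefinite Hermitian) and HA is symmetric. -/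
open Polynomial BigOperators

lemma coeff_extract {n : ℕ} (v : Fin n → ℝ)
    (h : (∑ j : Fin n, C (v j) * X ^ (j : ℕ)) = 0) : ∀ j, v j = 0 := by
  intro j
  have h2 := congrArg (fun P => Polynomial.coeff P (j : ℕ)) h
  simp only [finset_sum_coeff, coeff_C_mul, coeff_X_pow, coeff_zero] at h2
  rw [Finset.sum_eq_single j (fun b _ hb => by
      simp [(by simpa [eq_comm, Fin.ext_iff] using hb : ¬ (j:ℕ) = (b:ℕ))])
      (by simp)] at h2
  simpa using h2

lemma vec1 {n : ℕ} (v : Fin n → ℝ) (h : ∀ y : ℝ, ∑ j : Fin n, v j * y ^ (j:ℕ) = 0) :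
    ∀ j, v j = 0 := by
  apply coeff_extract
  apply Polynomial.funext
  intro y
  simp only [eval_finset_sum, eval_mul, eval_C, eval_pow, eval_X, eval_zero]
  exact h y

lemma vec2 {n : ℕ} (x : ℝ) (v : Fin n → ℝ)
    (h : ∀ y : ℝ, (x - y) * ∑ j : Fin n, v j * y ^ (j:ℕ) = 0) : ∀ j, v j = 0 := by
  apply coeff_extract
  have key : (C x - X) * (∑ j : Fin n, C (v j) * X ^ (j:ℕ)) = 0 := by
    apply Polynomial.funext; intro y
    simp only [eval_mul, eval_sub, eval_C, eval_X, eval_finset_sum, eval_pow, eval_zero]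
    exact h y
  rcases mul_eq_zero.mp key with h1 | h1
  · exfalso
    have h3 := congrArg (fun P => Polynomial.coeff P 1) h1
    simp at h3
  · exact h1

lemma matrix_zero {m : ℕ} (G : Matrix (Fin m) (Fin m) ℝ)
    (h : ∀ x y : ℝ, (x - y) * ∑ i : Fin m, ∑ j : Fin m, G i j * x ^ (i:ℕ) * y ^ (j:ℕ) = 0) :
    G = 0 := by
  have step1 : ∀ (x : ℝ) (j : Fin m), ∑ i : Fin m, G i j * x ^ (i:ℕ) = 0 := by
    intro x
    apply vec2 x (fun j => ∑ i : Fin m, G i j * x ^ (i:ℕ))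
    intro y
    rw [← h x y]
    congr 1
    rw [Finset.sum_comm]
    exact Finset.sum_congr rfl fun j _ => by rw [Finset.sum_mul]
  ext i j
  exact vec1 (fun i => G i j) (fun x => step1 x j) i

lemma decomp (t m : ℕ) (lam : Fin (t + 1) → ℝ) (hlam : StrictMono lam)
    (r : Fin (t + 1) → ℕ) (hr : ∀ j, 1 ≤ r j) (hm : m = ∑ j, r j)
    (p : Polynomial ℝ) (hp : p = ∏ j, (X - C (lam j)) ^ (r j))
    (mu : Fin t → ℝ) (hint : ∀ j : Fin t, lam j.castSucc < mu j ∧ mu j < lam j.succ)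
    (c : ℝ) (hc : 0 < c) (q : Polynomial ℝ)
    (hq : q = C c * (∏ j, (X - C (lam j)) ^ (r j - 1)) * ∏ j, (X - C (mu j))) :
    ∃ (ρ : Fin (t + 1) → ℝ) (L : Fin (t + 1) → Polynomial ℝ),
      (∀ k, 0 < ρ k) ∧ (∀ k, (L k).natDegree = m - 1) ∧ (∀ k, (L k).coeff (m - 1) = 1) ∧
      (q = ∑ k, C (ρ k) * L k) ∧
      (∀ x y : ℝ, p.eval x * q.eval y - p.eval y * q.eval x
          = (x - y) * ∑ k, ρ k * (L k).eval x * (L k).eval y) := by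
  set g : Polynomial ℝ := ∏ j, (X - C (lam j)) ^ (r j - 1) with hg
  set P : Polynomial ℝ := ∏ j, (X - C (lam j)) with hP
  set Pk : Fin (t + 1) → Polynomial ℝ :=
    fun k => ∏ j : Fin t, (X - C (lam (k.succAbove j))) with hPk
  set Q : Polynomial ℝ := C c * ∏ j, (X - C (mu j)) with hQ
  set L : Fin (t + 1) → Polynomial ℝ := fun k => g * Pk k with hL
  set ρ : Fin (t + 1) → ℝ :=
    fun k => c * ∏ j : Fin t, ((lam k - mu j) / (lam k - lam (k.succAbove j))) with hρ
  -- basic numbers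
  have htm : t + 1 ≤ m := by
    rw [hm]
    calc t + 1 = ∑ _j : Fin (t+1), 1 := by simp
    _ ≤ ∑ j, r j := Finset.sum_le_sum fun j _ => hr j
  -- positivity of each quotient factor
  have hfac : ∀ (k : Fin (t + 1)) (j : Fin t),
      0 < (lam k - mu j) / (lam k - lam (k.succAbove j)) := by
    intro k j
    rcases lt_or_ge j.castSucc k with h | h
    · rw [Fin.succAbove_of_castSucc_lt k j h]
      apply div_pos
      · have : lam j.succ ≤ lam k := hlam.monotone (by
          rw [Fin.le_def]; rw [Fin.lt_def] at h; simpa using h)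
        linarith [(hint j).2]
      · linarith [hlam h]
    · rw [Fin.succAbove_of_le_castSucc k j h]
      apply div_pos_of_neg_of_neg
      · have : lam k ≤ lam j.castSucc := hlam.monotone h
        linarith [(hint j).1]
      · have : lam j.castSucc < lam j.succ := hlam (Fin.castSucc_lt_succ (i := j))
        have h2 : lam k ≤ lam j.castSucc := hlam.monotone h
        linarith
  have hρpos : ∀ k, 0 < ρ k := fun k =>
    mul_pos hc (Finset.prod_pos fun j _ => hfac k j)
  have hdne : ∀ (k : Fin (t + 1)) (j : Fin t), lam k - lam (k.succAbove j) ≠ 0 := by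
    intro k j
    exact sub_ne_zero.mpr (hlam.injective.ne (Fin.succAbove_ne k j).symm)
  -- P factorization
  have hPfac : ∀ k, P = (X - C (lam k)) * Pk k := fun k => Fin.prod_univ_succAbove _ k
  -- degrees
  have hPkdeg : ∀ k, (Pk k).natDegree = t := by
    intro k
    rw [hPk]
    rw [Polynomial.natDegree_prod _ _ (fun j _ => X_sub_C_ne_zero _)]
    simp [natDegree_X_sub_C]
  have hPkmonic : ∀ k, (Pk k).Monic :=
    fun k => monic_prod_of_monic _ _ fun j _ => monic_X_sub_C _
  have hgmonic : g.Monic := monic_prod_of_monic _ _ fun j _ => (monic_X_sub_C _).pow _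
  have hgdeg : g.natDegree = m - (t + 1) := by
    rw [hg, Polynomial.natDegree_prod _ _ (fun j _ => (((monic_X_sub_C _).pow _).ne_zero))]
    have : ∀ j : Fin (t+1), ((X - C (lam j)) ^ (r j - 1)).natDegree = r j - 1 := by
      intro j; rw [natDegree_pow, natDegree_X_sub_C, mul_one]
    rw [Finset.sum_congr rfl fun j _ => this j]
    have : (∑ j, (r j - 1)) + (t + 1) = ∑ j, r j := by
      calc (∑ j, (r j - 1)) + (t+1) = (∑ j, (r j - 1)) + ∑ _j : Fin (t+1), 1 := by simp
        _ = ∑ j, ((r j - 1) + 1) := Finset.sum_add_distrib.symm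
        _ = ∑ j, r j := Finset.sum_congr rfl fun j _ => Nat.sub_add_cancel (hr j)
    omega
  have hLmonic : ∀ k, (L k).Monic := fun k => hgmonic.mul (hPkmonic k)
  have hLdeg : ∀ k, (L k).natDegree = m - 1 := by
    intro k
    rw [hL]
    rw [hgmonic.natDegree_mul (hPkmonic k), hgdeg, hPkdeg]
    omega
  have hLcoeff : ∀ k, (L k).coeff (m - 1) = 1 := by
    intro k
    have := (hLmonic k).coeff_natDegree
    rwa [hLdeg k] at this
  -- Lagrange interpolation : Q = ∑ k, C (ρ k) * Pk k
  have hQl : Q = ∑ k, C (ρ k) * Pk k := by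
    have hD : Q - ∑ k, C (ρ k) * Pk k = 0 := by
      apply Polynomial.eq_zero_of_natDegree_lt_card_of_eval_eq_zero _ hlam.injective
      · intro i
        have hQe : Q.eval (lam i) = c * ∏ j : Fin t, (lam i - mu j) := by
          simp [hQ, eval_prod]
        have hsum : (∑ k, C (ρ k) * Pk k).eval (lam i) = ρ i * (Pk i).eval (lam i) := by
          rw [eval_finset_sum]
          rw [Finset.sum_eq_single i (fun k _ hk => ?_) (by simp)]
          · simp
          · have : (Pk k).eval (lam i) = 0 := by
              obtain ⟨j, hj⟩ := Fin.exists_succAbove_eq (Ne.symm hk)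
              rw [hPk]
              simp only [eval_prod, eval_sub, eval_X, eval_C]
              exact Finset.prod_eq_zero (Finset.mem_univ j) (by rw [hj]; ring)
            simp [this]
        have hPe : (Pk i).eval (lam i) = ∏ j : Fin t, (lam i - lam (i.succAbove j)) := by
          simp [hPk, eval_prod]
        have hcancel : ρ i * ∏ j : Fin t, (lam i - lam (i.succAbove j))
            = c * ∏ j : Fin t, (lam i - mu j) := by
          rw [hρ, mul_assoc, ← Finset.prod_mul_distrib]
          congr 1
          exact Finset.prod_congr rfl fun j _ => div_mul_cancel₀ _ (hdne i j)
        rw [eval_sub, hQe, hsum, hPe, hcancel, sub_self]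
      · have h1 : Q.natDegree ≤ t := by
          rw [hQ]
          refine le_trans (natDegree_mul_le) ?_
          simp only [natDegree_C, zero_add]
          refine le_trans (natDegree_prod_le _ _) ?_
          simp [natDegree_X_sub_C]
        have h2 : (∑ k, C (ρ k) * Pk k).natDegree ≤ t := by
          refine Polynomial.natDegree_sum_le_of_forall_le _ _ fun k _ => ?_
          refine le_trans (natDegree_mul_le) ?_
          simp [natDegree_C, hPkdeg k]
        have := Polynomial.natDegree_sub_le (Q) (∑ k, C (ρ k) * Pk k)
        simp only [Fintype.card_fin]
        omega
    exact sub_eq_zero.mp hD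
  -- p and q factorizations
  have hpg : p = g * P := by
    rw [hp, hg, hP, ← Finset.prod_mul_distrib]
    refine Finset.prod_congr rfl fun j _ => ?_
    rw [← pow_succ, Nat.sub_add_cancel (hr j)]
  have hqg : q = g * Q := by rw [hq, hQ]; ring
  have hqsum : q = ∑ k, C (ρ k) * L k := by
    rw [hqg, hQl, Finset.mul_sum]
    exact Finset.sum_congr rfl fun k _ => by rw [hL]; ring
  have hQeval : ∀ x : ℝ, Q.eval x = ∑ k, ρ k * (Pk k).eval x := by
    intro x
    rw [hQl, eval_finset_sum]
    exact Finset.sum_congr rfl fun k _ => by simp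
  have hPx : ∀ (x : ℝ) (k : Fin (t+1)), P.eval x = (x - lam k) * (Pk k).eval x := by
    intro x k; rw [hPfac k]; simp
  refine ⟨ρ, L, hρpos, hLdeg, hLcoeff, hqsum, fun x y => ?_⟩
  have key : P.eval x * Q.eval y - P.eval y * Q.eval x
      = (x - y) * ∑ k, ρ k * (Pk k).eval x * (Pk k).eval y := by
    rw [hQeval x, hQeval y, Finset.mul_sum, Finset.mul_sum, ← Finset.sum_sub_distrib,
      Finset.mul_sum]
    refine Finset.sum_congr rfl fun k _ => ?_
    rw [hPx x k, hPx y k]; ring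
  calc p.eval x * q.eval y - p.eval y * q.eval x
      = g.eval x * g.eval y * (P.eval x * Q.eval y - P.eval y * Q.eval x) := by
        rw [hpg, hqg]; simp only [eval_mul]; ring
    _ = g.eval x * g.eval y * ((x - y) * ∑ k, ρ k * (Pk k).eval x * (Pk k).eval y) := by
        rw [key]
    _ = (x - y) * ∑ k, ρ k * (L k).eval x * (L k).eval y := by
        rw [Finset.mul_sum, Finset.mul_sum, Finset.mul_sum]
        refine Finset.sum_congr rfl fun k _ => ?_
        rw [hL]; simp only [eval_mul]; ring

lemma swap3 {α β γ : Type*} [Fintype α] [Fintype β] [Fintype γ] (f : α → β → γ → ℝ) :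
    ∑ i, ∑ j, ∑ k, f i j k = ∑ k, ∑ i, ∑ j, f i j k := by
  rw [Finset.sum_congr rfl fun i (_ : i ∈ Finset.univ) => (Finset.sum_comm)]
  exact Finset.sum_comm


/-- The companion (Sylvester) matrix of a monic polynomial `p` of degree `m`. -/
noncomputable def companionMatrix (m : ℕ) (p : Polynomial ℝ) : Matrix (Fin m) (Fin m) ℝ :=
  Matrix.of fun i j =>
    if (i : ℕ) + 1 = (j : ℕ) then 1 else if (i : ℕ) = m - 1 then -p.coeff (j : ℕ) else 0

/-- If `p` is monic hyperbolic and `q` separates `p`, then the Bézout matrix `H` of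
`p` and `q` is positive semidefinite and `H·A` is symmetric, `A` being the companion
matrix of `p`. -/
theorem bezout_matrix_symmetrizes (t m : ℕ) (lam : Fin (t + 1) → ℝ)
    (hlam : StrictMono lam)
    (r : Fin (t + 1) → ℕ) (hr : ∀ j, 1 ≤ r j) (hm : m = ∑ j, r j)
    (p : Polynomial ℝ) (hp : p = ∏ j, (X - C (lam j)) ^ (r j))
    (mu : Fin t → ℝ) (hint : ∀ j : Fin t, lam j.castSucc < mu j ∧ mu j < lam j.succ)
    (c : ℝ) (hc : 0 < c)
    (q : Polynomial ℝ)
    (hq : q = C c * (∏ j, (X - C (lam j)) ^ (r j - 1)) * ∏ j, (X - C (mu j)))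
    (H : Matrix (Fin m) (Fin m) ℝ)
    (hH : ∀ x y : ℝ,
      (x - y) * ∑ i : Fin m, ∑ j : Fin m, H i j * x ^ (i : ℕ) * y ^ (j : ℕ)
        = p.eval x * q.eval y - p.eval y * q.eval x) :
    H.PosSemidef ∧ (H * companionMatrix m p).IsSymm := by
  obtain ⟨ρ, L, hρpos, hLdeg, hLcoeff, hqsum, hkey⟩ :=
    decomp t m lam hlam r hr hm p hp mu hint c hc q hq
  have htm : t + 1 ≤ m := by
    rw [hm]
    calc t + 1 = ∑ _j : Fin (t+1), 1 := by simp
    _ ≤ ∑ j, r j := Finset.sum_le_sum fun j _ => hr j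
  have hm1 : 1 ≤ m := by omega
  set lastIdx : Fin m := ⟨m - 1, by omega⟩ with hlast
  set M : Matrix (Fin m) (Fin m) ℝ :=
    fun i j => ∑ k, ρ k * (L k).coeff (i : ℕ) * (L k).coeff (j : ℕ) with hM
  have hLdeg' : ∀ k, (L k).natDegree < m := fun k => by rw [hLdeg k]; omega
  have hevalL : ∀ (k) (x : ℝ),
      (L k).eval x = ∑ i : Fin m, (L k).coeff (i : ℕ) * x ^ (i : ℕ) := by
    intro k x
    rw [Polynomial.eval_eq_sum_range' (hLdeg' k),
      Fin.sum_univ_eq_sum_range (fun i => (L k).coeff i * x ^ i)]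
  have hSM : ∀ x y : ℝ,
      (∑ i : Fin m, ∑ j : Fin m, M i j * x ^ (i : ℕ) * y ^ (j : ℕ))
        = ∑ k, ρ k * (L k).eval x * (L k).eval y := by
    intro x y
    calc ∑ i : Fin m, ∑ j : Fin m, M i j * x ^ (i:ℕ) * y ^ (j:ℕ)
        = ∑ i : Fin m, ∑ j : Fin m, ∑ k,
            ρ k * (L k).coeff (i:ℕ) * (L k).coeff (j:ℕ) * x ^ (i:ℕ) * y ^ (j:ℕ) := by
          refine Finset.sum_congr rfl fun i _ => Finset.sum_congr rfl fun j _ => ?_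
          show (∑ k, ρ k * (L k).coeff (i:ℕ) * (L k).coeff (j:ℕ)) * x ^ (i:ℕ) * y ^ (j:ℕ) = _
          rw [Finset.sum_mul, Finset.sum_mul]
      _ = ∑ k, ∑ i : Fin m, ∑ j : Fin m,
            ρ k * (L k).coeff (i:ℕ) * (L k).coeff (j:ℕ) * x ^ (i:ℕ) * y ^ (j:ℕ) := swap3 _
      _ = ∑ k, ρ k * (L k).eval x * (L k).eval y := by
          refine Finset.sum_congr rfl fun k _ => ?_
          rw [hevalL k x, hevalL k y, mul_assoc, Finset.sum_mul_sum, Finset.mul_sum]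
          refine Finset.sum_congr rfl fun i _ => ?_
          rw [Finset.mul_sum]
          exact Finset.sum_congr rfl fun j _ => by ring
  have hHM : H = M := by
    have hz : H - M = 0 := by
      apply matrix_zero
      intro x y
      have hd : (∑ i : Fin m, ∑ j : Fin m, (H - M) i j * x ^ (i:ℕ) * y ^ (j:ℕ))
          = (∑ i : Fin m, ∑ j : Fin m, H i j * x ^ (i:ℕ) * y ^ (j:ℕ))
            - ∑ i : Fin m, ∑ j : Fin m, M i j * x ^ (i:ℕ) * y ^ (j:ℕ) := by
        simp only [Matrix.sub_apply, sub_mul, Finset.sum_sub_distrib]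
      rw [hd, mul_sub, hH x y, hSM x y, ← hkey x y, sub_self]
    exact sub_eq_zero.mp hz
  have hHsym : ∀ i j, H i j = H j i := by
    intro i j
    rw [hHM]
    exact Finset.sum_congr rfl fun k _ => by ring
  constructor
  · rw [Matrix.posSemidef_iff_dotProduct_mulVec]; constructor
    · show H.conjTranspose = H
      ext i j
      simp only [Matrix.conjTranspose_apply, star_trivial]
      exact (hHsym i j).symm
    · intro v
      have hquad : dotProduct (star v) (H.mulVec v)
          = ∑ k, ρ k * (∑ i : Fin m, (L k).coeff (i:ℕ) * v i) ^ 2 := by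
        rw [hHM]
        simp only [star_trivial, dotProduct, Matrix.mulVec]
        calc ∑ i : Fin m, v i * ∑ j : Fin m, M i j * v j
            = ∑ i : Fin m, ∑ j : Fin m, ∑ k,
                ρ k * ((L k).coeff (i:ℕ) * v i) * ((L k).coeff (j:ℕ) * v j) := by
              refine Finset.sum_congr rfl fun i _ => ?_
              rw [Finset.mul_sum]
              refine Finset.sum_congr rfl fun j _ => ?_
              show v i * ((∑ k, ρ k * (L k).coeff (i:ℕ) * (L k).coeff (j:ℕ)) * v j) = _
              rw [Finset.sum_mul, Finset.mul_sum]
              exact Finset.sum_congr rfl fun k _ => by ring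
          _ = ∑ k, ∑ i : Fin m, ∑ j : Fin m,
                ρ k * ((L k).coeff (i:ℕ) * v i) * ((L k).coeff (j:ℕ) * v j) :=
              swap3 _
          _ = ∑ k, ρ k * (∑ i : Fin m, (L k).coeff (i:ℕ) * v i) ^ 2 := by
              refine Finset.sum_congr rfl fun k _ => ?_
              rw [sq]
              simp only [Finset.mul_sum, Finset.sum_mul]
              exact Finset.sum_congr rfl fun i _ => Finset.sum_congr rfl fun j _ => by ring
      rw [hquad]
      exact Finset.sum_nonneg fun k _ => mul_nonneg (hρpos k).le (sq_nonneg _)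
  · -- symmetry of H * A
    set A := companionMatrix m p with hA
    -- facts about p
    have hpm : p.Monic := by
      rw [hp]; exact monic_prod_of_monic _ _ fun j _ => (monic_X_sub_C _).pow _
    have hpdeg : p.natDegree = m := by
      rw [hp, Polynomial.natDegree_prod _ _ (fun j _ => ((monic_X_sub_C _).pow _).ne_zero)]
      rw [hm]
      exact Finset.sum_congr rfl fun j _ => by
        rw [natDegree_pow, natDegree_X_sub_C, mul_one]
    have hcoeffm : p.coeff m = 1 := by
      have := hpm.coeff_natDegree; rwa [hpdeg] at this
    have hpeval : ∀ y : ℝ, ∑ j : Fin m, p.coeff (j:ℕ) * y ^ (j:ℕ) = p.eval y - y ^ m := by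
      intro y
      have h1 : p.eval y = ∑ i ∈ Finset.range (m+1), p.coeff i * y ^ i :=
        Polynomial.eval_eq_sum_range' (by omega) y
      rw [Finset.sum_range_succ, hcoeffm, one_mul] at h1
      rw [Fin.sum_univ_eq_sum_range (fun i => p.coeff i * y ^ i)]
      linarith
    have hqdeg : q.natDegree < m := by
      have : q.natDegree ≤ m - 1 := by
        rw [hqsum]
        refine Polynomial.natDegree_sum_le_of_forall_le _ _ fun k _ => ?_
        refine le_trans (natDegree_mul_le) ?_
        simp [natDegree_C, hLdeg k]
      omega
    have hqeval : ∀ x : ℝ, ∑ i : Fin m, q.coeff (i:ℕ) * x ^ (i:ℕ) = q.eval x := by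
      intro x
      rw [Polynomial.eval_eq_sum_range' hqdeg,
        Fin.sum_univ_eq_sum_range (fun i => q.coeff i * x ^ i)]
    have hHlastrow : ∀ x : ℝ, ∑ i : Fin m, H i lastIdx * x ^ (i:ℕ) = q.eval x := by
      intro x
      have h1 : ∀ i : Fin m, H i lastIdx = ∑ k, ρ k * (L k).coeff (i:ℕ) := by
        intro i
        rw [hHM]
        show ∑ k, ρ k * (L k).coeff (i:ℕ) * (L k).coeff ((lastIdx : Fin m) : ℕ) = _
        refine Finset.sum_congr rfl fun k _ => ?_
        have : ((lastIdx : Fin m) : ℕ) = m - 1 := rfl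
        rw [this, hLcoeff k, mul_one]
      have h2 : q.eval x = ∑ k, ρ k * (L k).eval x := by
        rw [hqsum, eval_finset_sum]
        exact Finset.sum_congr rfl fun k _ => by simp
      calc ∑ i : Fin m, H i lastIdx * x ^ (i:ℕ)
          = ∑ i : Fin m, ∑ k, ρ k * (L k).coeff (i:ℕ) * x ^ (i:ℕ) := by
            refine Finset.sum_congr rfl fun i _ => ?_
            rw [h1 i, Finset.sum_mul]
        _ = ∑ k, ∑ i : Fin m, ρ k * ((L k).coeff (i:ℕ) * x ^ (i:ℕ)) := by
            rw [Finset.sum_comm]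
            exact Finset.sum_congr rfl fun i _ => Finset.sum_congr rfl fun k _ => by ring
        _ = ∑ k, ρ k * (L k).eval x := by
            refine Finset.sum_congr rfl fun k _ => ?_
            rw [hevalL k x, Finset.mul_sum]
        _ = q.eval x := h2.symm
    -- row sums of A
    have hArow : ∀ (k : Fin m) (y : ℝ), ∑ j : Fin m, A k j * y ^ (j:ℕ)
        = y ^ ((k:ℕ)+1) - (if (k:ℕ) = m - 1 then p.eval y else 0) := by
      intro k y
      by_cases hk : (k:ℕ) = m - 1
      · have hne : ∀ j : Fin m, ¬((k:ℕ) + 1 = (j:ℕ)) := by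
          intro j hj; have := j.isLt; omega
        have hAk : ∀ j : Fin m, A k j = -p.coeff (j:ℕ) := by
          intro j
          show (if (k:ℕ)+1 = (j:ℕ) then (1:ℝ) else if (k:ℕ) = m - 1 then -p.coeff (j:ℕ) else 0)
            = -p.coeff (j:ℕ)
          rw [if_neg (hne j), if_pos hk]
        rw [Finset.sum_congr rfl fun j _ => by rw [hAk j]]
        have hme : (k:ℕ) + 1 = m := by omega
        rw [if_pos hk, hme]
        have : ∑ j : Fin m, -p.coeff (j:ℕ) * y ^ (j:ℕ)
            = -∑ j : Fin m, p.coeff (j:ℕ) * y ^ (j:ℕ) := by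
          rw [← Finset.sum_neg_distrib]
          exact Finset.sum_congr rfl fun j _ => by ring
        rw [this, hpeval y]; ring
      · have hk1 : (k:ℕ) + 1 < m := by have := k.isLt; omega
        rw [if_neg hk]
        rw [Finset.sum_eq_single (⟨(k:ℕ)+1, hk1⟩ : Fin m)]
        · have : A k ⟨(k:ℕ)+1, hk1⟩ = 1 := by
            show (if (k:ℕ)+1 = ((⟨(k:ℕ)+1, hk1⟩ : Fin m):ℕ) then (1:ℝ) else _) = 1
            rw [if_pos rfl]
          rw [this, one_mul, sub_zero]
        · intro b _ hb
          have hAb : A k b = 0 := by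
            show (if (k:ℕ)+1 = (b:ℕ) then (1:ℝ) else if (k:ℕ) = m - 1 then _ else 0) = 0
            rw [if_neg, if_neg hk]
            intro hcon
            exact hb (Fin.ext hcon.symm)
          rw [hAb, zero_mul]
        · intro hcon; exact absurd (Finset.mem_univ _) hcon
    -- the generating identity for H * A
    have hSHA : ∀ x y : ℝ,
        (∑ i : Fin m, ∑ j : Fin m, (H * A) i j * x ^ (i:ℕ) * y ^ (j:ℕ))
          = y * (∑ i : Fin m, ∑ j : Fin m, H i j * x ^ (i:ℕ) * y ^ (j:ℕ))
            - p.eval y * q.eval x := by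
      intro x y
      have expand : ∀ i : Fin m,
          (∑ j : Fin m, (H * A) i j * x ^ (i:ℕ) * y ^ (j:ℕ))
            = y * (∑ k : Fin m, H i k * x ^ (i:ℕ) * y ^ (k:ℕ))
              - p.eval y * (H i lastIdx * x ^ (i:ℕ)) := by
        intro i
        calc ∑ j : Fin m, (H * A) i j * x ^ (i:ℕ) * y ^ (j:ℕ)
            = ∑ j : Fin m, ∑ k : Fin m, (H i k * x ^ (i:ℕ)) * (A k j * y ^ (j:ℕ)) := by
              refine Finset.sum_congr rfl fun j _ => ?_
              rw [Matrix.mul_apply, Finset.sum_mul, Finset.sum_mul]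
              exact Finset.sum_congr rfl fun k _ => by ring
          _ = ∑ k : Fin m, ∑ j : Fin m, (H i k * x ^ (i:ℕ)) * (A k j * y ^ (j:ℕ)) :=
              Finset.sum_comm
          _ = ∑ k : Fin m, (H i k * x ^ (i:ℕ)) * ∑ j : Fin m, A k j * y ^ (j:ℕ) := by
              exact Finset.sum_congr rfl fun k _ => (Finset.mul_sum _ _ _).symm
          _ = ∑ k : Fin m, (H i k * x ^ (i:ℕ))
                * (y ^ ((k:ℕ)+1) - (if (k:ℕ) = m - 1 then p.eval y else 0)) := by
              exact Finset.sum_congr rfl fun k _ => by rw [hArow k y]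
          _ = (∑ k : Fin m, (H i k * x ^ (i:ℕ)) * y ^ ((k:ℕ)+1))
              - ∑ k : Fin m, (H i k * x ^ (i:ℕ))
                  * (if (k:ℕ) = m - 1 then p.eval y else 0) := by
              rw [← Finset.sum_sub_distrib]
              exact Finset.sum_congr rfl fun k _ => by ring
          _ = y * (∑ k : Fin m, H i k * x ^ (i:ℕ) * y ^ (k:ℕ))
              - p.eval y * (H i lastIdx * x ^ (i:ℕ)) := by
              congr 1
              · rw [Finset.mul_sum]
                exact Finset.sum_congr rfl fun k _ => by rw [pow_succ]; ring
              · rw [Finset.sum_eq_single lastIdx]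
                · rw [if_pos rfl]; ring
                · intro b _ hb
                  rw [if_neg, mul_zero]
                  intro hcon
                  exact hb (Fin.ext (by simpa using hcon))
                · intro hcon; exact absurd (Finset.mem_univ _) hcon
      rw [Finset.sum_congr rfl fun i (_ : i ∈ Finset.univ) => expand i]
      rw [Finset.sum_sub_distrib, ← Finset.mul_sum, ← Finset.mul_sum, ← hHlastrow x]
    -- swap lemma for S_H
    have hswap : ∀ x y : ℝ,
        (∑ i : Fin m, ∑ j : Fin m, H i j * y ^ (i:ℕ) * x ^ (j:ℕ))
          = ∑ i : Fin m, ∑ j : Fin m, H i j * x ^ (i:ℕ) * y ^ (j:ℕ) := by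
      intro x y
      rw [Finset.sum_comm]
      exact Finset.sum_congr rfl fun i _ => Finset.sum_congr rfl fun j _ => by
        rw [hHsym j i]; ring
    -- conclude
    have hz : (H * A) - (H * A).transpose = 0 := by
      apply matrix_zero
      intro x y
      have hd : (∑ i : Fin m, ∑ j : Fin m, ((H * A) - (H * A).transpose) i j * x ^ (i:ℕ) * y ^ (j:ℕ))
          = (∑ i : Fin m, ∑ j : Fin m, (H * A) i j * x ^ (i:ℕ) * y ^ (j:ℕ))
            - ∑ i : Fin m, ∑ j : Fin m, (H * A) i j * y ^ (i:ℕ) * x ^ (j:ℕ) := by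
        simp only [Matrix.sub_apply, Matrix.transpose_apply, sub_mul, Finset.sum_sub_distrib]
        congr 1
        rw [Finset.sum_comm]
        exact Finset.sum_congr rfl fun i _ => Finset.sum_congr rfl fun j _ => by ring
      rw [hd, hSHA x y, hSHA y x, hswap x y]
      linear_combination (y - x) * hH x y
    show (H * A).transpose = H * A
    have := sub_eq_zero.mp hz
    exact this.symm
end

section
/- Let p be a monic hyperbolic polynomial of degree m, A its Sylvester (companion) matrix, and H the Bézout matrix of p and p'. Then H is nonnegative definite, HA is symmetric, and det H is the discriminant of p. -/
open Polynomial BigOperators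

section BezoutAux

open Finset Matrix

/-- auxiliary: a polynomial-type vector identity -/
lemma bz_vec_zero {m : ℕ} (c : Fin m → ℝ) (y : ℝ)
    (h : ∀ x : ℝ, x ≠ y → ∑ i : Fin m, c i * x ^ (i : ℕ) = 0) : ∀ i, c i = 0 := by
  have hr0 : (∑ i : Fin m, C (c i) * X ^ (i : ℕ) : ℝ[X]) = 0 := by
    apply Polynomial.eq_zero_of_infinite_isRoot
    apply Set.Infinite.mono (s := {y}ᶜ)
    · intro x hx
      simp only [Set.mem_setOf_eq, IsRoot, eval_finset_sum, eval_mul, eval_C, eval_pow, eval_X]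
      exact h x hx
    · exact Set.Finite.infinite_compl (Set.finite_singleton y)
  intro i
  have := congrArg (fun q : ℝ[X] => q.coeff (i : ℕ)) hr0
  simp only [finset_sum_coeff, coeff_C_mul, coeff_X_pow, coeff_zero, mul_ite, mul_one,
    mul_zero] at this
  rwa [Finset.sum_eq_single i (fun b _ hb => by
      simp [Fin.val_eq_val, hb.symm]) (fun h => absurd (Finset.mem_univ i) h),
    if_pos rfl] at this

noncomputable def bzQ {m : ℕ} (Lam : Fin m → ℝ) (k : Fin m) : ℝ[X] :=
  ∏ j ∈ Finset.univ.erase k, (X - C (Lam j))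

lemma bzQ_mul {m : ℕ} (Lam : Fin m → ℝ) (k : Fin m) :
    (X - C (Lam k)) * bzQ Lam k = ∏ j, (X - C (Lam j)) :=
  Finset.mul_prod_erase Finset.univ (fun j => X - C (Lam j)) (Finset.mem_univ k)

lemma bzQ_natDegree {m : ℕ} (Lam : Fin m → ℝ) (k : Fin m) :
    (bzQ Lam k).natDegree = m - 1 := by
  rw [bzQ, Polynomial.natDegree_prod _ _ (fun j _ => X_sub_C_ne_zero (Lam j))]
  simp [Finset.card_erase_of_mem]

lemma bzQ_monic {m : ℕ} (Lam : Fin m → ℝ) (k : Fin m) : (bzQ Lam k).Monic :=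
  monic_prod_of_monic _ _ (fun j _ => monic_X_sub_C (Lam j))

lemma bzQ_coeff_top {m : ℕ} (Lam : Fin m → ℝ) (k : Fin m) :
    (bzQ Lam k).coeff (m - 1) = 1 := by
  have := (bzQ_monic Lam k).coeff_natDegree
  rwa [bzQ_natDegree] at this

lemma bzQ_eval {m : ℕ} (Lam : Fin m → ℝ) (k : Fin m) (x : ℝ) :
    (bzQ Lam k).eval x = ∑ i : Fin m, (bzQ Lam k).coeff (i : ℕ) * x ^ (i : ℕ) := by
  have hn : (bzQ Lam k).natDegree < m := by
    rw [bzQ_natDegree]; exact Nat.sub_lt k.pos one_pos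
  rw [Polynomial.eval_eq_sum_range' hn]
  exact (Fin.sum_univ_eq_sum_range (fun i => (bzQ Lam k).coeff i * x ^ i) m).symm

lemma bz_deriv_prod {m : ℕ} (Lam : Fin m → ℝ) :
    derivative (∏ j, (X - C (Lam j)) : ℝ[X]) = ∑ k, bzQ Lam k := by
  simp only [Finset.prod, Finset.sum, bzQ]
  rw [Polynomial.derivative_prod]
  congr 1
  apply Multiset.map_congr rfl
  intro i hi
  simp [Finset.erase]

lemma bzG_ident {m : ℕ} (Lam : Fin m → ℝ) (x y : ℝ) :
    (x - y) * ∑ i : Fin m, ∑ j : Fin m,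
        (∑ k, (bzQ Lam k).coeff (i : ℕ) * (bzQ Lam k).coeff (j : ℕ)) * x ^ (i : ℕ) * y ^ (j : ℕ)
      = (∏ j, (X - C (Lam j)) : ℝ[X]).eval x * (derivative (∏ j, (X - C (Lam j)) : ℝ[X])).eval y
        - (∏ j, (X - C (Lam j)) : ℝ[X]).eval y *
            (derivative (∏ j, (X - C (Lam j)) : ℝ[X])).eval x := by
  have hS : ∑ i : Fin m, ∑ j : Fin m,
      (∑ k, (bzQ Lam k).coeff (i : ℕ) * (bzQ Lam k).coeff (j : ℕ)) * x ^ (i : ℕ) * y ^ (j : ℕ)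
      = ∑ k, (bzQ Lam k).eval x * (bzQ Lam k).eval y := by
    simp only [Finset.sum_mul]
    calc ∑ i : Fin m, ∑ j : Fin m, ∑ k : Fin m,
          (bzQ Lam k).coeff (i : ℕ) * (bzQ Lam k).coeff (j : ℕ) * x ^ (i : ℕ) * y ^ (j : ℕ)
        = ∑ i : Fin m, ∑ k : Fin m, ∑ j : Fin m,
          (bzQ Lam k).coeff (i : ℕ) * (bzQ Lam k).coeff (j : ℕ) * x ^ (i : ℕ) * y ^ (j : ℕ) :=
          Finset.sum_congr rfl fun i _ => Finset.sum_comm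
      _ = ∑ k : Fin m, ∑ i : Fin m, ∑ j : Fin m,
          (bzQ Lam k).coeff (i : ℕ) * (bzQ Lam k).coeff (j : ℕ) * x ^ (i : ℕ) * y ^ (j : ℕ) :=
          Finset.sum_comm
      _ = ∑ k, (bzQ Lam k).eval x * (bzQ Lam k).eval y := Finset.sum_congr rfl fun k _ => by
          rw [bzQ_eval, bzQ_eval, Finset.sum_mul_sum]
          exact Finset.sum_congr rfl fun i _ => Finset.sum_congr rfl fun j _ => by ring
  rw [hS, bz_deriv_prod, Finset.mul_sum, eval_finset_sum, eval_finset_sum,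
    Finset.mul_sum, Finset.mul_sum, ← Finset.sum_sub_distrib]
  refine Finset.sum_congr rfl fun k _ => ?_
  have hx : (∏ j, (X - C (Lam j)) : ℝ[X]).eval x = (x - Lam k) * (bzQ Lam k).eval x := by
    rw [← bzQ_mul Lam k]; simp
  have hy : (∏ j, (X - C (Lam j)) : ℝ[X]).eval y = (y - Lam k) * (bzQ Lam k).eval y := by
    rw [← bzQ_mul Lam k]; simp
  rw [hx, hy]; ring

lemma bzH_eq_G {m : ℕ} (Lam : Fin m → ℝ) (H : Matrix (Fin m) (Fin m) ℝ)
    (hH : ∀ x y : ℝ,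
      (x - y) * ∑ i : Fin m, ∑ j : Fin m, H i j * x ^ (i : ℕ) * y ^ (j : ℕ)
        = (∏ j, (X - C (Lam j)) : ℝ[X]).eval x
            * (derivative (∏ j, (X - C (Lam j)) : ℝ[X])).eval y
          - (∏ j, (X - C (Lam j)) : ℝ[X]).eval y
            * (derivative (∏ j, (X - C (Lam j)) : ℝ[X])).eval x) :
    ∀ i j, H i j = ∑ k, (bzQ Lam k).coeff (i : ℕ) * (bzQ Lam k).coeff (j : ℕ) := by
  set G : Matrix (Fin m) (Fin m) ℝ :=
    Matrix.of fun i j => ∑ k, (bzQ Lam k).coeff (i : ℕ) * (bzQ Lam k).coeff (j : ℕ) with hG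
  have key : ∀ y x : ℝ, x ≠ y →
      ∑ i : Fin m, (∑ j : Fin m, (H i j - G i j) * y ^ (j : ℕ)) * x ^ (i : ℕ) = 0 := by
    intro y x hxy
    have h1 := (hH x y).trans (bzG_ident Lam x y).symm
    have h2 : ∑ i : Fin m, ∑ j : Fin m, H i j * x ^ (i : ℕ) * y ^ (j : ℕ)
        = ∑ i : Fin m, ∑ j : Fin m, G i j * x ^ (i : ℕ) * y ^ (j : ℕ) :=
      mul_left_cancel₀ (sub_ne_zero.mpr hxy) h1
    have h3 : ∑ i : Fin m, ∑ j : Fin m, (H i j - G i j) * x ^ (i : ℕ) * y ^ (j : ℕ) = 0 := by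
      simp only [sub_mul, Finset.sum_sub_distrib]
      rw [h2]; ring
    rw [← h3]
    refine Finset.sum_congr rfl fun i _ => ?_
    rw [Finset.sum_mul]
    exact Finset.sum_congr rfl fun j _ => by ring
  have key2 : ∀ i j, H i j - G i j = 0 := by
    intro i j
    have h4 : ∀ y : ℝ, ∑ j : Fin m, (H i j - G i j) * y ^ (j : ℕ) = 0 := fun y =>
      bz_vec_zero _ y (key y) i
    exact bz_vec_zero (fun j => H i j - G i j) 0 (fun y _ => h4 y) j
  intro i j
  have : H i j = G i j := by linarith [key2 i j]
  simpa [hG] using this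

lemma bz_det_G {m : ℕ} (Lam : Fin m → ℝ) :
    (Matrix.of fun i j : Fin m =>
        ∑ k, (bzQ Lam k).coeff (i : ℕ) * (bzQ Lam k).coeff (j : ℕ)).det
      = ∏ i : Fin m, ∏ j ∈ Finset.Ioi i, (Lam i - Lam j) ^ 2 := by
  set V : Matrix (Fin m) (Fin m) ℝ := Matrix.of fun k i => (bzQ Lam k).coeff (i : ℕ) with hV
  have hGV : (Matrix.of fun i j : Fin m =>
      ∑ k, (bzQ Lam k).coeff (i : ℕ) * (bzQ Lam k).coeff (j : ℕ)) = Vᵀ * V := by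
    ext i j
    rw [Matrix.mul_apply]
    simp [hV, Matrix.transpose_apply]
  rw [hGV, Matrix.det_mul, Matrix.det_transpose, ← sq]
  by_cases hinj : Function.Injective Lam
  · have hVW : V * (Matrix.vandermonde Lam)ᵀ
        = Matrix.diagonal (fun k => ∏ j ∈ Finset.univ.erase k, (Lam k - Lam j)) := by
      ext k l
      rw [Matrix.mul_apply]
      have he : ∑ i : Fin m, V k i * (Matrix.vandermonde Lam)ᵀ i l
          = (bzQ Lam k).eval (Lam l) := by
        rw [bzQ_eval]
        exact Finset.sum_congr rfl fun i _ => by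
          simp [hV, Matrix.vandermonde, Matrix.transpose_apply]
      rw [he, bzQ, eval_prod]
      by_cases hkl : k = l
      · subst hkl
        simp [Matrix.diagonal_apply_eq]
      · rw [Matrix.diagonal_apply_ne' _ (Ne.symm (by exact fun h => hkl h)),
          Finset.prod_eq_zero (Finset.mem_erase.mpr ⟨Ne.symm hkl, Finset.mem_univ l⟩)]
        simp
    have hdet : V.det * (Matrix.vandermonde Lam).det
        = ∏ k, ∏ j ∈ Finset.univ.erase k, (Lam k - Lam j) := by
      rw [← Matrix.det_transpose (Matrix.vandermonde Lam), ← Matrix.det_mul, hVW,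
        Matrix.det_diagonal]
    have hoff : ∏ k, ∏ j ∈ Finset.univ.erase k, (Lam k - Lam j)
        = (∏ i, ∏ j ∈ Finset.Ioi i, (Lam i - Lam j))
          * ∏ i, ∏ j ∈ Finset.Ioi i, (Lam j - Lam i) := by
      have h0 := Finset.prod_prod_Ioi_mul_eq_prod_prod_off_diag
        (f := fun a b => Lam b - Lam a) (M := ℝ)
      refine Eq.trans (Finset.prod_congr rfl fun i _ =>
        Finset.prod_congr (by ext a; simp [eq_comm]) fun _ _ => rfl)
        (Eq.trans h0.symm ?_)
      rw [← Finset.prod_mul_distrib]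
      exact Finset.prod_congr rfl fun i _ => Finset.prod_mul_distrib
    have hE : (∏ i, ∏ j ∈ Finset.Ioi i, (Lam j - Lam i)) ≠ 0 := by
      rw [Finset.prod_ne_zero_iff]
      intro i _
      rw [Finset.prod_ne_zero_iff]
      intro j hj
      have : i ≠ j := ne_of_lt (Finset.mem_Ioi.mp hj)
      exact sub_ne_zero.mpr fun h => this (hinj h.symm)
    have hVdm : (Matrix.vandermonde Lam).det = ∏ i, ∏ j ∈ Finset.Ioi i, (Lam j - Lam i) :=
      Matrix.det_vandermonde Lam
    have hdetV : V.det = ∏ i, ∏ j ∈ Finset.Ioi i, (Lam i - Lam j) := by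
      have h2 : V.det * (∏ i, ∏ j ∈ Finset.Ioi i, (Lam j - Lam i))
          = (∏ i, ∏ j ∈ Finset.Ioi i, (Lam i - Lam j))
            * (∏ i, ∏ j ∈ Finset.Ioi i, (Lam j - Lam i)) := by
        rw [← hVdm, hdet, hoff, hVdm]
      exact mul_right_cancel₀ hE h2
    rw [hdetV, ← Finset.prod_pow]
    refine Finset.prod_congr rfl fun i _ => ?_
    rw [← Finset.prod_pow]
  · unfold Function.Injective at hinj
    simp only [Function.Injective, not_forall] at hinj
    obtain ⟨a, b, hab, hne⟩ := hinj
    have hq : bzQ Lam a = bzQ Lam b := by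
      have h1 : (X - C (Lam a)) * bzQ Lam a = (X - C (Lam a)) * bzQ Lam b := by
        rw [bzQ_mul, hab, bzQ_mul]
      exact mul_left_cancel₀ (X_sub_C_ne_zero (Lam a)) h1
    have hrow : V a = V b := funext fun i => by simp [hV, hq]
    have hdet0 : V.det = 0 := Matrix.det_zero_of_row_eq hne hrow
    rw [hdet0]
    rcases lt_or_gt_of_ne hne with h | h
    · rw [Finset.prod_eq_zero (Finset.mem_univ a) (Finset.prod_eq_zero
        (Finset.mem_Ioi.mpr h) (by rw [hab]; ring))]
      ring
    · rw [Finset.prod_eq_zero (Finset.mem_univ b) (Finset.prod_eq_zero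
        (Finset.mem_Ioi.mpr h) (by rw [hab]; ring))]
      ring

end BezoutAux

section BezoutAux2
open Finset Matrix

lemma bz_eig {m : ℕ} (Lam : Fin m → ℝ) (k j : Fin m) :
    ∑ l : Fin m, (bzQ Lam k).coeff (l : ℕ) * companionMatrix m (∏ i, (X - C (Lam i))) l j
      = Lam k * (bzQ Lam k).coeff (j : ℕ) := by
  have hm : 0 < m := j.pos
  set q : ℝ[X] := bzQ Lam k with hq
  set p : ℝ[X] := ∏ i, (X - C (Lam i)) with hp
  have hpq : p = q * (X - C (Lam k)) := by rw [hp, ← bzQ_mul Lam k, mul_comm]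
  have hsplit : ∀ l : Fin m, companionMatrix m p l j =
      (if (l : ℕ) + 1 = (j : ℕ) then (1:ℝ) else 0)
        + (if (l : ℕ) = m - 1 then -p.coeff (j : ℕ) else 0) := by
    intro l
    simp only [companionMatrix, Matrix.of_apply]
    have hj := j.isLt
    by_cases h1 : (l : ℕ) + 1 = (j : ℕ)
    · have h2 : ¬ (l : ℕ) = m - 1 := by omega
      simp [h1, h2]
    · simp [h1]
  simp only [hsplit, mul_add, Finset.sum_add_distrib, mul_ite, mul_one, mul_zero, mul_neg]
  have hsum2 : ∑ l : Fin m, (if (l : ℕ) = m - 1 then -(q.coeff (l : ℕ) * p.coeff (j : ℕ))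
      else 0) = -p.coeff (j : ℕ) := by
    rw [Finset.sum_eq_single (⟨m - 1, by omega⟩ : Fin m)]
    · simp [hq, bzQ_coeff_top]
    · intro b _ hb
      rw [if_neg]
      simpa [Fin.ext_iff] using hb
    · exact fun h => absurd (Finset.mem_univ _) h
  rw [hsum2]
  rcases Nat.eq_zero_or_pos (j : ℕ) with hj0 | hjpos
  · have hsum1 : ∑ l : Fin m, (if (l : ℕ) + 1 = (j : ℕ) then q.coeff (l : ℕ) else 0) = 0 := by
      apply Finset.sum_eq_zero
      intro l _
      rw [if_neg]; omega
    rw [hsum1, hj0]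
    have : p.coeff 0 = q.coeff 0 * (-(Lam k)) := by
      rw [hpq, Polynomial.mul_coeff_zero]; simp
    rw [this]; ring
  · obtain ⟨a, ha⟩ : ∃ a, (j : ℕ) = a + 1 := ⟨(j : ℕ) - 1, by omega⟩
    have hsum1 : ∑ l : Fin m, (if (l : ℕ) + 1 = (j : ℕ) then q.coeff (l : ℕ) else 0)
        = q.coeff a := by
      rw [Finset.sum_eq_single (⟨a, by omega⟩ : Fin m)]
      · simp [ha]
      · intro b _ hb
        rw [if_neg]
        refine fun hcon => hb (Fin.ext ?_)
        show (b : ℕ) = a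
        omega
      · exact fun h => absurd (Finset.mem_univ _) h
    rw [hsum1]
    have hc : p.coeff (a + 1) = q.coeff a - Lam k * q.coeff (a + 1) := by
      rw [hpq, Polynomial.coeff_mul_X_sub_C]; ring
    rw [ha, hc]; ring

end BezoutAux2


/-- For a monic hyperbolic `p`, the Bézout matrix `H` of `p` and `p'` is positive
semidefinite, `H·A` is symmetric (`A` the companion matrix of `p`), and `det H` is
the discriminant `∏_{i<j}(Λᵢ-Λⱼ)²` of `p`. -/
theorem bezout_matrix_p_pprime (m : ℕ) (Lam : Fin m → ℝ)
    (p : Polynomial ℝ) (hp : p = ∏ j, (X - C (Lam j)))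
    (H : Matrix (Fin m) (Fin m) ℝ)
    (hH : ∀ x y : ℝ,
      (x - y) * ∑ i : Fin m, ∑ j : Fin m, H i j * x ^ (i : ℕ) * y ^ (j : ℕ)
        = p.eval x * (derivative p).eval y - p.eval y * (derivative p).eval x) :
    H.PosSemidef ∧ (H * companionMatrix m p).IsSymm ∧
      H.det = ∏ i : Fin m, ∏ j ∈ Finset.Ioi i, (Lam i - Lam j) ^ 2 := by
  subst hp
  have hHG := bzH_eq_G Lam H hH
  refine ⟨Matrix.posSemidef_iff_dotProduct_mulVec.mpr ⟨?_, ?_⟩, ?_, ?_⟩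
  · -- Hermitian
    ext i j
    simp only [Matrix.conjTranspose_apply, star_trivial, hHG i j, hHG j i]
    exact Finset.sum_congr rfl fun k _ => mul_comm _ _
  · -- quadratic form nonneg
    intro x
    have hform : dotProduct (star x) (H.mulVec x)
        = ∑ k : Fin m, (∑ i : Fin m, (bzQ Lam k).coeff (i : ℕ) * x i) ^ 2 := by
      simp only [dotProduct, Matrix.mulVec, star_trivial, Pi.star_apply]
      calc ∑ i : Fin m, x i * ∑ l : Fin m, H i l * x l
          = ∑ i : Fin m, ∑ l : Fin m, ∑ k : Fin m,
              ((bzQ Lam k).coeff (i : ℕ) * x i) * ((bzQ Lam k).coeff (l : ℕ) * x l) := by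
            refine Finset.sum_congr rfl fun i _ => ?_
            rw [Finset.mul_sum]
            refine Finset.sum_congr rfl fun l _ => ?_
            rw [hHG i l, Finset.sum_mul, Finset.mul_sum]
            exact Finset.sum_congr rfl fun k _ => by ring
        _ = ∑ k : Fin m, ∑ i : Fin m, ∑ l : Fin m,
              ((bzQ Lam k).coeff (i : ℕ) * x i) * ((bzQ Lam k).coeff (l : ℕ) * x l) := by
            rw [show (∑ i : Fin m, ∑ l : Fin m, ∑ k : Fin m,
              ((bzQ Lam k).coeff (i : ℕ) * x i) * ((bzQ Lam k).coeff (l : ℕ) * x l))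
              = ∑ i : Fin m, ∑ k : Fin m, ∑ l : Fin m,
              ((bzQ Lam k).coeff (i : ℕ) * x i) * ((bzQ Lam k).coeff (l : ℕ) * x l) from
              Finset.sum_congr rfl fun i _ => Finset.sum_comm]
            exact Finset.sum_comm
        _ = ∑ k : Fin m, (∑ i : Fin m, (bzQ Lam k).coeff (i : ℕ) * x i) ^ 2 := by
            refine Finset.sum_congr rfl fun k _ => ?_
            rw [sq, Finset.sum_mul_sum]
    rw [hform]
    exact Finset.sum_nonneg fun k _ => sq_nonneg _
  · -- H * A symmetric
    have key : ∀ i j, (H * companionMatrix m (∏ i, (X - C (Lam i)))) i j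
        = ∑ k : Fin m, Lam k * ((bzQ Lam k).coeff (i : ℕ) * (bzQ Lam k).coeff (j : ℕ)) := by
      intro i j
      rw [Matrix.mul_apply]
      calc ∑ l : Fin m, H i l * companionMatrix m (∏ i, (X - C (Lam i))) l j
          = ∑ l : Fin m, ∑ k : Fin m, (bzQ Lam k).coeff (i : ℕ) *
              ((bzQ Lam k).coeff (l : ℕ) * companionMatrix m (∏ i, (X - C (Lam i))) l j) := by
            refine Finset.sum_congr rfl fun l _ => ?_
            rw [hHG i l, Finset.sum_mul]
            exact Finset.sum_congr rfl fun k _ => by ring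
        _ = ∑ k : Fin m, ∑ l : Fin m, (bzQ Lam k).coeff (i : ℕ) *
              ((bzQ Lam k).coeff (l : ℕ) * companionMatrix m (∏ i, (X - C (Lam i))) l j) :=
            Finset.sum_comm
        _ = ∑ k : Fin m, Lam k * ((bzQ Lam k).coeff (i : ℕ) * (bzQ Lam k).coeff (j : ℕ)) := by
            refine Finset.sum_congr rfl fun k _ => ?_
            rw [← Finset.mul_sum, bz_eig Lam k j]
            ring
    rw [Matrix.IsSymm]
    ext i j
    rw [Matrix.transpose_apply, key i j, key j i]
    exact Finset.sum_congr rfl fun k _ => by ring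
  · -- determinant
    have : H = Matrix.of fun i j : Fin m =>
        ∑ k, (bzQ Lam k).coeff (i : ℕ) * (bzQ Lam k).coeff (j : ℕ) := by
      ext i j; exact hHG i j
    rw [this, bz_det_G]
end
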